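/- arXiv:2105.02361 — 3 statements merged into one kernel-verified Lean document; each statement's English description precedes it below -/
import Mathlib

section
/- For every integer d ≥ 1, c_e(H_d) / c_o(H_d) = d − 1/2 (equivalently, 2·c_e(H_d) = (2d−1)·c_o(H_d)); consequently the real sequence d ↦ c_e(H_d)/c_o(H_d) tends to infinity as d → ∞. -/
open SimpleGraph Filter

/-- A subgraph is a cycle: nonempty vertex set, connected, and every vertex of the
subgraph has degree exactly 2 in the subgraph. -/
def SimpleGraph.Subgraph.IsCycleSub {V : Type*} {G : SimpleGraph V} (H : G.Subgraph) : Prop :=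
  H.verts.Nonempty ∧ H.coe.Connected ∧ ∀ v ∈ H.verts, (H.neighborSet v).ncard = 2

/-- The number of odd cycles of `G`. -/
noncomputable def cOdd {V : Type*} (G : SimpleGraph V) : ℕ :=
  {H : G.Subgraph | H.IsCycleSub ∧ Odd H.verts.ncard}.ncard

/-- The number of even cycles of `G`. -/
noncomputable def cEven {V : Type*} (G : SimpleGraph V) : ℕ :=
  {H : G.Subgraph | H.IsCycleSub ∧ Even H.verts.ncard}.ncard

/-- The number of odd cycles of `G` passing through the edge `xy`. -/
noncomputable def cOddE {V : Type*} (G : SimpleGraph V) (x y : V) : ℕ :=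
  {H : G.Subgraph | H.IsCycleSub ∧ Odd H.verts.ncard ∧ H.Adj x y}.ncard

/-- The number of even cycles of `G` passing through the edge `xy`. -/
noncomputable def cEvenE {V : Type*} (G : SimpleGraph V) (x y : V) : ℕ :=
  {H : G.Subgraph | H.IsCycleSub ∧ Even H.verts.ncard ∧ H.Adj x y}.ncard

/-- The graph `L_d`: a path `v_0 v_1 … v_(2d)` together with the chords `v_i v_(2d-i)`
for `0 ≤ i ≤ d-1`. -/
def LGraph (d : ℕ) : SimpleGraph (Fin (2 * d + 1)) :=
  SimpleGraph.fromRel (fun p q =>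
    (q.val = p.val + 1) ∨ (p.val + q.val = 2 * d ∧ p.val < d))

/-- The inclusion of the vertices of the second copy of `L_d` into the vertex set of `H_d`:
`v_(d-1)` and `v_d` are identified with the corresponding vertices of the first copy. -/
def embH (d : ℕ) (i : Fin (2 * d + 1)) : Fin (2 * d + 1) ⊕ Fin (2 * d - 1) :=
  if h1 : i.val = d - 1 ∨ i.val = d then Sum.inl i
  else if h2 : i.val < d - 1 then Sum.inr ⟨i.val, by omega⟩
  else Sum.inr ⟨i.val - 2, by push_neg at h1; have := i.isLt; omega⟩

/-- The graph `H_d`, obtained from two disjoint copies of `L_d` by identifying the two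
copies of `v_(d-1)` and the two copies of `v_d` (and hence the two edges `v_(d-1) v_d`). -/
def HGraph (d : ℕ) : SimpleGraph (Fin (2 * d + 1) ⊕ Fin (2 * d - 1)) :=
  SimpleGraph.fromRel (fun x y =>
    (∃ i j, (LGraph d).Adj i j ∧ x = Sum.inl i ∧ y = Sum.inl j) ∨
    (∃ i j, (LGraph d).Adj i j ∧ x = embH d i ∧ y = embH d j))

/-- symmetric relation underlying `LGraph` on ℕ values -/

def Lrel (d x y : ℕ) : Prop :=
  x ≠ y ∧ (y = x + 1 ∨ x = y + 1 ∨ (x + y = 2 * d ∧ (x < d ∨ y < d)))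

def e2 (d q : ℕ) : ℕ := if q + 1 ≤ d - 1 then q else q + 2

lemma Lrel_symm {d x y : ℕ} (h : Lrel d x y) : Lrel d y x := by
  unfold Lrel at *; omega

lemma ladj_iff {d : ℕ} {p q : Fin (2 * d + 1)} :
    (LGraph d).Adj p q ↔ Lrel d p.val q.val := by
  rw [LGraph, fromRel_adj, Lrel, ne_eq, ne_eq, Fin.ext_iff]
  constructor
  · rintro ⟨h1, h2⟩; exact ⟨h1, by omega⟩
  · rintro ⟨h1, h2⟩; exact ⟨h1, by omega⟩

lemma hadj_iff {d : ℕ} {x y : Fin (2 * d + 1) ⊕ Fin (2 * d - 1)} :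
    (HGraph d).Adj x y ↔ x ≠ y ∧
      ((∃ i j, (LGraph d).Adj i j ∧ x = Sum.inl i ∧ y = Sum.inl j) ∨
       (∃ i j, (LGraph d).Adj i j ∧ x = embH d i ∧ y = embH d j)) := by
  rw [HGraph, fromRel_adj]
  constructor
  · rintro ⟨hne, h | h⟩
    · exact ⟨hne, h⟩
    · refine ⟨hne, ?_⟩
      rcases h with ⟨i, j, hadj, hx, hy⟩ | ⟨i, j, hadj, hx, hy⟩
      · exact Or.inl ⟨j, i, hadj.symm, hy, hx⟩
      · exact Or.inr ⟨j, i, hadj.symm, hy, hx⟩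
  · rintro ⟨hne, h⟩; exact ⟨hne, Or.inl h⟩

lemma embH_eq_inl {d : ℕ} {i : Fin (2 * d + 1)} {p : Fin (2 * d + 1)} :
    embH d i = Sum.inl p ↔ (i = p ∧ (p.val = d - 1 ∨ p.val = d)) := by
  unfold embH
  split_ifs with h1 h2 <;> simp_all [Fin.ext_iff] <;> omega

lemma embH_eq_inr {d : ℕ} {i : Fin (2 * d + 1)} {q : Fin (2 * d - 1)} :
    embH d i = Sum.inr q ↔ i.val = e2 d q.val := by
  have hq := q.isLt
  unfold embH e2
  split_ifs with h1 h2 h3 <;> simp_all [Fin.ext_iff] <;> omega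

lemma adj_ll {d : ℕ} {p q : Fin (2 * d + 1)} :
    (HGraph d).Adj (Sum.inl p) (Sum.inl q) ↔ Lrel d p.val q.val := by
  rw [hadj_iff]
  constructor
  · rintro ⟨hne, ⟨i, j, hadj, hx, hy⟩ | ⟨i, j, hadj, hx, hy⟩⟩
    · rw [Sum.inl.injEq] at hx hy
      subst hx; subst hy
      exact ladj_iff.1 hadj
    · rw [eq_comm, embH_eq_inl] at hx hy
      obtain ⟨rfl, _⟩ := hx
      obtain ⟨rfl, _⟩ := hy
      exact ladj_iff.1 hadj
  · intro h
    refine ⟨?_, Or.inl ⟨p, q, ladj_iff.2 h, rfl, rfl⟩⟩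
    simp only [ne_eq, Sum.inl.injEq, Fin.ext_iff]
    exact fun hh => h.1 hh

lemma adj_lr {d : ℕ} {p : Fin (2 * d + 1)} {q : Fin (2 * d - 1)} :
    (HGraph d).Adj (Sum.inl p) (Sum.inr q) ↔
      ((p.val = d - 1 ∨ p.val = d) ∧ Lrel d p.val (e2 d q.val)) := by
  have hq := q.isLt
  rw [hadj_iff]
  constructor
  · rintro ⟨hne, ⟨i, j, hadj, hx, hy⟩ | ⟨i, j, hadj, hx, hy⟩⟩
    · exact absurd hy (by simp)
    · rw [eq_comm, embH_eq_inl] at hx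
      rw [eq_comm, embH_eq_inr] at hy
      obtain ⟨rfl, hp⟩ := hx
      exact ⟨hp, by rw [← hy]; exact ladj_iff.1 hadj⟩
  · rintro ⟨hp, hrel⟩
    have he2 : e2 d q.val < 2 * d + 1 := by unfold e2; split_ifs <;> omega
    refine ⟨by simp, Or.inr ⟨p, ⟨e2 d q.val, he2⟩, ladj_iff.2 hrel, ?_, ?_⟩⟩
    · rw [eq_comm, embH_eq_inl]; exact ⟨rfl, hp⟩
    · rw [eq_comm, embH_eq_inr]

lemma adj_rr {d : ℕ} {p q : Fin (2 * d - 1)} :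
    (HGraph d).Adj (Sum.inr p) (Sum.inr q) ↔ Lrel d (e2 d p.val) (e2 d q.val) := by
  have hp := p.isLt
  have hq := q.isLt
  rw [hadj_iff]
  constructor
  · rintro ⟨hne, ⟨i, j, hadj, hx, hy⟩ | ⟨i, j, hadj, hx, hy⟩⟩
    · exact absurd hx (by simp)
    · rw [eq_comm, embH_eq_inr] at hx hy
      rw [← hx, ← hy]; exact ladj_iff.1 hadj
  · intro hrel
    have he2p : e2 d p.val < 2 * d + 1 := by unfold e2; split_ifs <;> omega
    have he2q : e2 d q.val < 2 * d + 1 := by unfold e2; split_ifs <;> omega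
    have hne : p ≠ q := by
      intro h; subst h; exact hrel.1 rfl
    refine ⟨by simpa using hne,
      Or.inr ⟨⟨e2 d p.val, he2p⟩, ⟨e2 d q.val, he2q⟩, ladj_iff.2 hrel, ?_, ?_⟩⟩
    · rw [eq_comm, embH_eq_inr]
    · rw [eq_comm, embH_eq_inr]
section
variable (d : ℕ)

def Bv (k : ℕ) : Fin (2 * d + 1) ⊕ Fin (2 * d - 1) :=
  if h : k ≤ d then Sum.inl ⟨2 * d - k, by omega⟩
  else if h2 : k ≤ 2 * d then Sum.inr ⟨k - 2, by omega⟩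
  else Sum.inl ⟨0, by omega⟩

def Tv (m : ℕ) : Fin (2 * d + 1) ⊕ Fin (2 * d - 1) :=
  if h : m + 1 ≤ d then Sum.inl ⟨m, by omega⟩
  else if h2 : m ≤ 2 * d - 2 ∧ 1 ≤ d then Sum.inr ⟨2 * d - 2 - m, by omega⟩
  else Sum.inl ⟨0, by omega⟩

def gf (k : ℕ) : ℕ := k - (if d ≤ k then 1 else 0) - (if d + 1 ≤ k then 1 else 0)

end

variable {d : ℕ}

lemma gf_mono {k k' : ℕ} (h : k ≤ k') : gf d k ≤ gf d k' := by
  unfold gf; split_ifs <;> omega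

lemma gf_le {k : ℕ} (hd : 1 ≤ d) (h : k ≤ 2 * d) : gf d k ≤ 2 * d - 2 := by
  unfold gf; split_ifs <;> omega

lemma Bv_inj (hd : 1 ≤ d) {k k' : ℕ} (hk : k ≤ 2 * d) (hk' : k' ≤ 2 * d)
    (h : Bv d k = Bv d k') : k = k' := by
  unfold Bv at h
  split_ifs at h <;> simp_all [Fin.ext_iff] <;> omega

lemma Tv_inj (hd : 1 ≤ d) {m m' : ℕ} (hm : m ≤ 2 * d - 2) (hm' : m' ≤ 2 * d - 2)
    (h : Tv d m = Tv d m') : m = m' := by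
  unfold Tv at h
  split_ifs at h <;> simp_all [Fin.ext_iff] <;> omega

lemma Bv_ne_Tv (hd : 1 ≤ d) {k m : ℕ} (hk : k ≤ 2 * d) (hm : m ≤ 2 * d - 2) :
    Bv d k ≠ Tv d m := by
  unfold Bv Tv
  split_ifs <;> simp_all [Fin.ext_iff] <;> omega

lemma vert_total (hd : 1 ≤ d) (v : Fin (2 * d + 1) ⊕ Fin (2 * d - 1)) :
    (∃ k, k ≤ 2 * d ∧ v = Bv d k) ∨ (∃ m, m ≤ 2 * d - 2 ∧ v = Tv d m) := by
  rcases v with i | j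
  · rcases le_or_gt d i.val with h | h
    · refine Or.inl ⟨2 * d - i.val, by omega, ?_⟩
      unfold Bv
      have : 2 * d - i.val ≤ d := by omega
      rw [dif_pos this]
      simp [Fin.ext_iff]; omega
    · refine Or.inr ⟨i.val, by omega, ?_⟩
      unfold Tv
      rw [dif_pos (by omega)]
  · rcases le_or_gt (d - 1) j.val with h | h
    · refine Or.inl ⟨j.val + 2, by have := j.isLt; omega, ?_⟩
      unfold Bv
      have := j.isLt
      rw [dif_neg (by omega), dif_pos (by omega)]
      simp [Fin.ext_iff]
    · refine Or.inr ⟨2 * d - 2 - j.val, by omega, ?_⟩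
      unfold Tv
      have := j.isLt
      rw [dif_neg (by omega), dif_pos (by omega)]
      simp [Fin.ext_iff]; omega

lemma Bv_lo {k : ℕ} (h : k ≤ d) : Bv d k = Sum.inl ⟨2 * d - k, by omega⟩ := by
  unfold Bv; rw [dif_pos h]

lemma Bv_hi (hd : 1 ≤ d) {k : ℕ} (h1 : d < k) (h2 : k ≤ 2 * d) :
    Bv d k = Sum.inr ⟨k - 2, by omega⟩ := by
  unfold Bv; rw [dif_neg (by omega), dif_pos h2]

lemma Tv_lo {m : ℕ} (h : m + 1 ≤ d) : Tv d m = Sum.inl ⟨m, by omega⟩ := by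
  unfold Tv; rw [dif_pos h]

lemma Tv_hi (hd : 1 ≤ d) {m : ℕ} (h1 : d ≤ m) (h2 : m ≤ 2 * d - 2) :
    Tv d m = Sum.inr ⟨2 * d - 2 - m, by omega⟩ := by
  unfold Tv; rw [dif_neg (by omega), dif_pos ⟨h2, hd⟩]

lemma gf_spec (hd : 1 ≤ d) (k : ℕ) :
    (k + 1 ≤ d ∧ gf d k = k) ∨ (d ≤ k ∧ k ≤ d + 1 ∧ gf d k = d - 1) ∨
      (d + 2 ≤ k ∧ gf d k = k - 2) := by
  unfold gf; split_ifs <;> omega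

lemma adjBB (hd : 1 ≤ d) {k : ℕ} (hk : k + 1 ≤ 2 * d) :
    (HGraph d).Adj (Bv d k) (Bv d (k + 1)) := by
  rcases le_or_gt (k + 1) d with h | h
  · rw [Bv_lo (by omega), Bv_lo h, adj_ll]
    unfold Lrel; simp only [Fin.val_mk]; (try simp only [true_or, or_true, true_and, and_true]); omega
  · rcases le_or_gt k d with h2 | h2
    · rw [Bv_lo h2, Bv_hi hd h hk, adj_lr]
      unfold Lrel e2; simp only [Fin.val_mk]; split_ifs <;> (try simp only [true_or, or_true, true_and, and_true]) <;> omega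
    · rw [Bv_hi hd h2 (by omega), Bv_hi hd h hk, adj_rr]
      unfold Lrel e2; simp only [Fin.val_mk]; split_ifs <;> (try simp only [true_or, or_true, true_and, and_true]) <;> omega

lemma adjTT (hd : 1 ≤ d) {m : ℕ} (hm : m + 1 ≤ 2 * d - 2) :
    (HGraph d).Adj (Tv d m) (Tv d (m + 1)) := by
  rcases le_or_gt (m + 1 + 1) d with h | h
  · rw [Tv_lo (by omega), Tv_lo h, adj_ll]
    unfold Lrel; simp only [Fin.val_mk]; (try simp only [true_or, or_true, true_and, and_true]); omega
  · rcases le_or_gt (m + 1) d with h2 | h2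
    · rw [Tv_lo h2, Tv_hi hd (by omega) hm, adj_lr]
      unfold Lrel e2; simp only [Fin.val_mk]; split_ifs <;> (try simp only [true_or, or_true, true_and, and_true]) <;> omega
    · rw [Tv_hi hd (by omega) (by omega), Tv_hi hd (by omega) hm, adj_rr]
      unfold Lrel e2; simp only [Fin.val_mk]; split_ifs <;> (try simp only [true_or, or_true, true_and, and_true]) <;> omega

lemma adjTB (hd : 1 ≤ d) {k : ℕ} (hk : k ≤ 2 * d) :
    (HGraph d).Adj (Tv d (gf d k)) (Bv d k) := by
  rcases gf_spec hd k with ⟨h1, h2⟩ | ⟨h1, h1', h2⟩ | ⟨h1, h2⟩ <;> rw [h2]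
  · rw [Tv_lo (by omega), Bv_lo (by omega), adj_ll]
    unfold Lrel; simp only [Fin.val_mk]; (try simp only [true_or, or_true, true_and, and_true]); omega
  · rcases le_or_gt k d with h3 | h3
    · rw [Tv_lo (by omega), Bv_lo h3, adj_ll]
      unfold Lrel; simp only [Fin.val_mk]; (try simp only [true_or, or_true, true_and, and_true]); omega
    · rw [Tv_lo (by omega), Bv_hi hd h3 hk, adj_lr]
      unfold Lrel e2; simp only [Fin.val_mk]; split_ifs <;> (try simp only [true_or, or_true, true_and, and_true]) <;> omega
  · rw [Tv_hi hd (by omega) (by omega), Bv_hi hd (by omega) hk, adj_rr]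
    unfold Lrel e2; simp only [Fin.val_mk]; split_ifs <;> (try simp only [true_or, or_true, true_and, and_true]) <;> omega

lemma classBB (hd : 1 ≤ d) {k k' : ℕ} (hk : k ≤ 2 * d) (hk' : k' ≤ 2 * d)
    (h : (HGraph d).Adj (Bv d k) (Bv d k')) : k' = k + 1 ∨ k = k' + 1 := by
  rcases le_or_gt k d with h1 | h1 <;> rcases le_or_gt k' d with h2 | h2
  · rw [Bv_lo h1, Bv_lo h2, adj_ll] at h
    unfold Lrel at h; simp only [Fin.val_mk] at h; omega
  · rw [Bv_lo h1, Bv_hi hd h2 hk', adj_lr] at h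
    unfold Lrel e2 at h; simp only [Fin.val_mk] at h; split_ifs at h <;> omega
  · replace h := h.symm
    rw [Bv_lo h2, Bv_hi hd h1 hk, adj_lr] at h
    unfold Lrel e2 at h; simp only [Fin.val_mk] at h; split_ifs at h <;> omega
  · rw [Bv_hi hd h1 hk, Bv_hi hd h2 hk', adj_rr] at h
    unfold Lrel e2 at h; simp only [Fin.val_mk] at h; split_ifs at h <;> omega

lemma classTT (hd : 1 ≤ d) {m m' : ℕ} (hm : m ≤ 2 * d - 2) (hm' : m' ≤ 2 * d - 2)
    (h : (HGraph d).Adj (Tv d m) (Tv d m')) : m' = m + 1 ∨ m = m' + 1 := by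
  rcases le_or_gt (m + 1) d with h1 | h1 <;> rcases le_or_gt (m' + 1) d with h2 | h2
  · rw [Tv_lo h1, Tv_lo h2, adj_ll] at h
    unfold Lrel at h; simp only [Fin.val_mk] at h; omega
  · rw [Tv_lo h1, Tv_hi hd (by omega) hm', adj_lr] at h
    unfold Lrel e2 at h; simp only [Fin.val_mk] at h; split_ifs at h <;> omega
  · replace h := h.symm
    rw [Tv_lo h2, Tv_hi hd (by omega) hm, adj_lr] at h
    unfold Lrel e2 at h; simp only [Fin.val_mk] at h; split_ifs at h <;> omega
  · rw [Tv_hi hd (by omega) hm, Tv_hi hd (by omega) hm', adj_rr] at h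
    unfold Lrel e2 at h; simp only [Fin.val_mk] at h; split_ifs at h <;> omega

lemma classTB (hd : 1 ≤ d) {m k : ℕ} (hm : m ≤ 2 * d - 2) (hk : k ≤ 2 * d)
    (h : (HGraph d).Adj (Tv d m) (Bv d k)) : m = gf d k := by
  have hg := gf_spec hd k
  rcases le_or_gt (m + 1) d with h1 | h1 <;> rcases le_or_gt k d with h2 | h2
  · rw [Tv_lo h1, Bv_lo h2, adj_ll] at h
    unfold Lrel at h; simp only [Fin.val_mk] at h; omega
  · rw [Tv_lo h1, Bv_hi hd h2 hk, adj_lr] at h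
    unfold Lrel e2 at h; simp only [Fin.val_mk] at h; split_ifs at h <;> omega
  · replace h := h.symm
    rw [Tv_hi hd (by omega) hm, Bv_lo h2, adj_lr] at h
    unfold Lrel e2 at h; simp only [Fin.val_mk] at h; split_ifs at h <;> omega
  · rw [Tv_hi hd (by omega) hm, Bv_hi hd h2 hk, adj_rr] at h
    unfold Lrel e2 at h; simp only [Fin.val_mk] at h; split_ifs at h <;> omega

/-- edge selector for the interval cycle -/
def CycSel (d a b : ℕ) (x y : Fin (2 * d + 1) ⊕ Fin (2 * d - 1)) : Prop :=
  (∃ k, a - 1 ≤ k ∧ k < b ∧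
    ((x = Bv d k ∧ y = Bv d (k + 1)) ∨ (y = Bv d k ∧ x = Bv d (k + 1)))) ∨
  (∃ m, gf d (a - 1) ≤ m ∧ m < gf d b ∧
    ((x = Tv d m ∧ y = Tv d (m + 1)) ∨ (y = Tv d m ∧ x = Tv d (m + 1)))) ∨
  ((x = Tv d (gf d (a - 1)) ∧ y = Bv d (a - 1)) ∨
   (y = Tv d (gf d (a - 1)) ∧ x = Bv d (a - 1))) ∨
  ((x = Tv d (gf d b) ∧ y = Bv d b) ∨ (y = Tv d (gf d b) ∧ x = Bv d b))

set_option maxHeartbeats 1000000 in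
/-- the interval cycle as a subgraph of `HGraph d` -/
def Cyc (d a b : ℕ) : (HGraph d).Subgraph where
  verts := {v | (∃ k, a - 1 ≤ k ∧ k ≤ b ∧ v = Bv d k) ∨
                (∃ m, gf d (a - 1) ≤ m ∧ m ≤ gf d b ∧ v = Tv d m)}
  Adj x y := (1 ≤ a ∧ a ≤ b ∧ b ≤ 2 * d) ∧ (HGraph d).Adj x y ∧ CycSel d a b x y
  adj_sub h := h.2.1
  edge_vert := by
    rintro x y ⟨⟨ha, hab, hb⟩, hadj, hsel⟩
    rcases hsel with ⟨k, h1, h2, ⟨rfl, _⟩ | ⟨_, rfl⟩⟩ |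
      ⟨m, h1, h2, ⟨rfl, _⟩ | ⟨_, rfl⟩⟩ | (⟨rfl, _⟩ | ⟨_, rfl⟩) | (⟨rfl, _⟩ | ⟨_, rfl⟩)
    · exact Or.inl ⟨k, h1, by omega, rfl⟩
    · exact Or.inl ⟨k + 1, by omega, by omega, rfl⟩
    · exact Or.inr ⟨m, h1, by omega, rfl⟩
    · exact Or.inr ⟨m + 1, by omega, by omega, rfl⟩
    · exact Or.inr ⟨gf d (a - 1), le_refl _, gf_mono (by omega), rfl⟩
    · exact Or.inl ⟨a - 1, le_refl _, by omega, rfl⟩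
    · exact Or.inr ⟨gf d b, gf_mono (by omega), le_refl _, rfl⟩
    · exact Or.inl ⟨b, by omega, le_refl _, rfl⟩
  symm := by
    constructor
    rintro x y ⟨hg, hadj, hsel⟩
    refine ⟨hg, hadj.symm, ?_⟩
    rcases hsel with ⟨k, h1, h2, h3⟩ | ⟨m, h1, h2, h3⟩ | h3 | h3
    · exact Or.inl ⟨k, h1, h2, h3.symm⟩
    · exact Or.inr (Or.inl ⟨m, h1, h2, h3.symm⟩)
    · exact Or.inr (Or.inr (Or.inl h3.symm))
    · exact Or.inr (Or.inr (Or.inr h3.symm))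

lemma mem_cyc_B {d a b k : ℕ} (h1 : a - 1 ≤ k) (h2 : k ≤ b) :
    Bv d k ∈ (Cyc d a b).verts := Or.inl ⟨k, h1, h2, rfl⟩

lemma mem_cyc_T {d a b m : ℕ} (h1 : gf d (a - 1) ≤ m) (h2 : m ≤ gf d b) :
    Tv d m ∈ (Cyc d a b).verts := Or.inr ⟨m, h1, h2, rfl⟩

variable {d a b : ℕ}

lemma cyc_verts_eq :
    (Cyc d a b).verts =
      (Bv d) '' (Set.Icc (a - 1) b) ∪ (Tv d) '' (Set.Icc (gf d (a - 1)) (gf d b)) := by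
  ext v
  constructor
  · rintro (⟨k, h1, h2, rfl⟩ | ⟨m, h1, h2, rfl⟩)
    · exact Or.inl ⟨k, ⟨h1, h2⟩, rfl⟩
    · exact Or.inr ⟨m, ⟨h1, h2⟩, rfl⟩
  · rintro (⟨k, ⟨h1, h2⟩, rfl⟩ | ⟨m, ⟨h1, h2⟩, rfl⟩)
    · exact Or.inl ⟨k, h1, h2, rfl⟩
    · exact Or.inr ⟨m, h1, h2, rfl⟩

lemma cyc_card (hd : 1 ≤ d) (ha : 1 ≤ a) (hab : a ≤ b) (hb : b ≤ 2 * d) :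
    (Cyc d a b).verts.ncard = (b + 2 - a) + (gf d b + 1 - gf d (a - 1)) := by
  rw [cyc_verts_eq]
  rw [Set.ncard_union_eq ?dis ?f1 ?f2]
  case dis =>
    rw [Set.disjoint_left]
    rintro v ⟨k, ⟨hk1, hk2⟩, rfl⟩ ⟨m, ⟨hm1, hm2⟩, hm⟩
    exact Bv_ne_Tv hd (by omega) (le_trans hm2 (gf_le hd hb)) hm.symm
  case f1 => exact (Set.finite_Icc _ _).image _
  case f2 => exact (Set.finite_Icc _ _).image _
  rw [Set.ncard_image_of_injOn, Set.ncard_image_of_injOn]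
  · rw [← Finset.coe_Icc, ← Finset.coe_Icc, Set.ncard_coe_finset, Set.ncard_coe_finset,
      Nat.card_Icc, Nat.card_Icc]
    have := gf_mono (d := d) (show a - 1 ≤ b by omega)
    omega
  · intro m hm m' hm' hmm
    simp only [Set.mem_Icc] at hm hm'
    exact Tv_inj hd (le_trans hm.2 (gf_le hd hb)) (le_trans hm'.2 (gf_le hd hb)) hmm
  · intro k hk k' hk'
    simp only [Set.mem_Icc] at hk hk'
    exact Bv_inj hd (by omega) (by omega)

lemma cyc_parity (hd : 1 ≤ d) (ha : 1 ≤ a) (hab : a ≤ b) (hb : b ≤ 2 * d) :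
    (Odd (Cyc d a b).verts.ncard ↔ (b = d ∨ a = d + 1)) := by
  rw [cyc_card hd ha hab hb, Nat.odd_iff]
  unfold gf
  split_ifs <;> omega

lemma cyc_inj (hd : 1 ≤ d) {a' b' : ℕ} (ha : 1 ≤ a) (hab : a ≤ b) (hb : b ≤ 2 * d)
    (ha' : 1 ≤ a') (hab' : a' ≤ b') (hb' : b' ≤ 2 * d)
    (h : Cyc d a b = Cyc d a' b') : a = a' ∧ b = b' := by
  have key : ∀ x y u v : ℕ, 1 ≤ x → x ≤ y → y ≤ 2 * d → 1 ≤ u → u ≤ v → v ≤ 2 * d →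
      Cyc d x y = Cyc d u v → u - 1 ≤ x - 1 ∧ y ≤ v := by
    intro x y u v hx hxy hy hu huv hv heq
    have h1 : Bv d (x - 1) ∈ (Cyc d u v).verts := heq ▸ mem_cyc_B (le_refl _) (by omega)
    have h2 : Bv d y ∈ (Cyc d u v).verts := heq ▸ mem_cyc_B (by omega) (le_refl _)
    constructor
    · rcases h1 with ⟨j, hj1, hj2, hj⟩ | ⟨m, hm1, hm2, hm⟩
      · have := Bv_inj hd (by omega) (by omega) hj; omega
      · exact absurd hm (Bv_ne_Tv hd (by omega) (le_trans hm2 (gf_le hd hv)))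
    · rcases h2 with ⟨j, hj1, hj2, hj⟩ | ⟨m, hm1, hm2, hm⟩
      · have := Bv_inj hd (by omega) (by omega) hj; omega
      · exact absurd hm (Bv_ne_Tv hd (by omega) (le_trans hm2 (gf_le hd hv)))
  have k1 := key a b a' b' ha hab hb ha' hab' hb' h
  have k2 := key a' b' a b ha' hab' hb' ha hab hb h.symm
  omega

lemma cyc_deg (hd : 1 ≤ d) (ha : 1 ≤ a) (hab : a ≤ b) (hb : b ≤ 2 * d) :
    ∀ v ∈ (Cyc d a b).verts, ((Cyc d a b).neighborSet v).ncard = 2 := by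
  have hgab : gf d (a - 1) ≤ gf d b := gf_mono (by omega)
  have hgb : gf d b ≤ 2 * d - 2 := gf_le hd hb
  have hguard : 1 ≤ a ∧ a ≤ b ∧ b ≤ 2 * d := ⟨ha, hab, hb⟩
  intro v hv
  rcases hv with ⟨k, hk1, hk2, rfl⟩ | ⟨m, hm1, hm2, rfl⟩
  · -- bottom vertex
    have fwd : ∀ w, (Cyc d a b).Adj (Bv d k) w →
        (k < b ∧ w = Bv d (k + 1)) ∨ (a - 1 < k ∧ w = Bv d (k - 1)) ∨
        (k = a - 1 ∧ w = Tv d (gf d (a - 1))) ∨ (k = b ∧ w = Tv d (gf d b)) := by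
      rintro w ⟨hg, hadj, hsel⟩
      rcases hsel with ⟨j, h1, h2, ⟨hx, hy⟩ | ⟨hy, hx⟩⟩ |
        ⟨m', h1, h2, ⟨hx, hy⟩ | ⟨hy, hx⟩⟩ | (⟨hx, hy⟩ | ⟨hy, hx⟩) | (⟨hx, hy⟩ | ⟨hy, hx⟩)
      · have := Bv_inj hd (by omega) (by omega) hx
        subst this
        exact Or.inl ⟨by omega, hy⟩
      · have := Bv_inj hd (by omega) (by omega) hx
        refine Or.inr (Or.inl ⟨by omega, ?_⟩)
        rw [hy]; congr 1; omega
      · exact absurd hx (Bv_ne_Tv hd (by omega) (by omega))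
      · exact absurd hx (Bv_ne_Tv hd (by omega) (by omega))
      · exact absurd hx (Bv_ne_Tv hd (by omega) (le_trans hgab hgb))
      · have := Bv_inj hd (by omega) (by omega) hx
        exact Or.inr (Or.inr (Or.inl ⟨this, hy⟩))
      · exact absurd hx (Bv_ne_Tv hd (by omega) hgb)
      · have := Bv_inj hd (by omega) (by omega) hx
        exact Or.inr (Or.inr (Or.inr ⟨this, hy⟩))
    have adjR : k < b → (Cyc d a b).Adj (Bv d k) (Bv d (k + 1)) := by
      intro h
      exact ⟨hguard, adjBB hd (by omega), Or.inl ⟨k, hk1, h, Or.inl ⟨rfl, rfl⟩⟩⟩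
    have adjL : a - 1 < k → (Cyc d a b).Adj (Bv d k) (Bv d (k - 1)) := by
      intro h
      have hrw : k - 1 + 1 = k := by omega
      refine ⟨hguard, ?_, Or.inl ⟨k - 1, by omega, by omega, Or.inr ⟨rfl, by rw [hrw]⟩⟩⟩
      have := (adjBB hd (k := k - 1) (by omega)).symm
      rwa [hrw] at this
    have adjA : k = a - 1 → (Cyc d a b).Adj (Bv d k) (Tv d (gf d (a - 1))) := by
      rintro rfl
      exact ⟨hguard, (adjTB hd (by omega)).symm,
        Or.inr (Or.inr (Or.inl (Or.inr ⟨rfl, rfl⟩)))⟩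
    have adjBc : k = b → (Cyc d a b).Adj (Bv d k) (Tv d (gf d b)) := by
      rintro rfl
      exact ⟨hguard, (adjTB hd hb).symm, Or.inr (Or.inr (Or.inr (Or.inr ⟨rfl, rfl⟩)))⟩
    by_cases hka : k = a - 1
    · have hkb : k < b := by omega
      have : (Cyc d a b).neighborSet (Bv d k) = {Bv d (k + 1), Tv d (gf d (a - 1))} := by
        ext w
        simp only [Subgraph.mem_neighborSet, Set.mem_insert_iff, Set.mem_singleton_iff]
        constructor
        · intro h
          rcases fwd w h with ⟨h1, h2⟩ | ⟨h1, h2⟩ | ⟨h1, h2⟩ | ⟨h1, h2⟩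
          · exact Or.inl h2
          · omega
          · exact Or.inr h2
          · omega
        · rintro (rfl | rfl)
          · exact adjR hkb
          · exact adjA hka
      rw [this]
      exact Set.ncard_pair (Ne.symm (Bv_ne_Tv hd (by omega) (le_trans hgab hgb))).symm
    · by_cases hkb : k = b
      · have hka' : a - 1 < k := by omega
        have : (Cyc d a b).neighborSet (Bv d k) = {Bv d (k - 1), Tv d (gf d b)} := by
          ext w
          simp only [Subgraph.mem_neighborSet, Set.mem_insert_iff, Set.mem_singleton_iff]
          constructor
          · intro h
            rcases fwd w h with ⟨h1, h2⟩ | ⟨h1, h2⟩ | ⟨h1, h2⟩ | ⟨h1, h2⟩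
            · omega
            · exact Or.inl h2
            · omega
            · exact Or.inr h2
          · rintro (rfl | rfl)
            · exact adjL hka'
            · exact adjBc hkb
        rw [this]
        exact Set.ncard_pair (Bv_ne_Tv hd (by omega) hgb)
      · have h1 : k < b := by omega
        have h2 : a - 1 < k := by omega
        have : (Cyc d a b).neighborSet (Bv d k) = {Bv d (k + 1), Bv d (k - 1)} := by
          ext w
          simp only [Subgraph.mem_neighborSet, Set.mem_insert_iff, Set.mem_singleton_iff]
          constructor
          · intro h
            rcases fwd w h with ⟨ha1, hb1⟩ | ⟨ha1, hb1⟩ | ⟨ha1, hb1⟩ | ⟨ha1, hb1⟩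
            · exact Or.inl hb1
            · exact Or.inr hb1
            · omega
            · omega
          · rintro (rfl | rfl)
            · exact adjR h1
            · exact adjL h2
        rw [this]
        refine Set.ncard_pair (fun hcon => ?_)
        have := Bv_inj hd (by omega) (by omega) hcon
        omega
  · -- top vertex
    have fwd : ∀ w, (Cyc d a b).Adj (Tv d m) w →
        (m < gf d b ∧ w = Tv d (m + 1)) ∨ (gf d (a - 1) < m ∧ w = Tv d (m - 1)) ∨
        (m = gf d (a - 1) ∧ w = Bv d (a - 1)) ∨ (m = gf d b ∧ w = Bv d b) := by
      rintro w ⟨hg, hadj, hsel⟩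
      rcases hsel with ⟨j, h1, h2, ⟨hx, hy⟩ | ⟨hy, hx⟩⟩ |
        ⟨m', h1, h2, ⟨hx, hy⟩ | ⟨hy, hx⟩⟩ | (⟨hx, hy⟩ | ⟨hy, hx⟩) | (⟨hx, hy⟩ | ⟨hy, hx⟩)
      · exact absurd hx.symm (Bv_ne_Tv hd (by omega) (by omega))
      · exact absurd hx.symm (Bv_ne_Tv hd (by omega) (by omega))
      · have := Tv_inj hd (by omega) (by omega) hx
        subst this
        exact Or.inl ⟨by omega, hy⟩
      · have := Tv_inj hd (by omega) (by omega) hx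
        refine Or.inr (Or.inl ⟨by omega, ?_⟩)
        rw [hy]; congr 1; omega
      · have := Tv_inj hd (by omega) (le_trans hgab hgb) hx
        exact Or.inr (Or.inr (Or.inl ⟨this, hy⟩))
      · exact absurd hx.symm (Bv_ne_Tv hd (by omega) (by omega))
      · have := Tv_inj hd (by omega) hgb hx
        exact Or.inr (Or.inr (Or.inr ⟨this, hy⟩))
      · exact absurd hx.symm (Bv_ne_Tv hd (by omega) (by omega))
    have adjT1 : m < gf d b → (Cyc d a b).Adj (Tv d m) (Tv d (m + 1)) := by
      intro h
      exact ⟨hguard, adjTT hd (by omega), Or.inr (Or.inl ⟨m, hm1, h, Or.inl ⟨rfl, rfl⟩⟩)⟩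
    have adjT2 : gf d (a - 1) < m → (Cyc d a b).Adj (Tv d m) (Tv d (m - 1)) := by
      intro h
      have hrw : m - 1 + 1 = m := by omega
      refine ⟨hguard, ?_, Or.inr (Or.inl ⟨m - 1, by omega, by omega,
        Or.inr ⟨rfl, by rw [hrw]⟩⟩)⟩
      have := (adjTT hd (m := m - 1) (by omega)).symm
      rwa [hrw] at this
    have adjCA : m = gf d (a - 1) → (Cyc d a b).Adj (Tv d m) (Bv d (a - 1)) := by
      rintro rfl
      exact ⟨hguard, adjTB hd (by omega), Or.inr (Or.inr (Or.inl (Or.inl ⟨rfl, rfl⟩)))⟩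
    have adjCB : m = gf d b → (Cyc d a b).Adj (Tv d m) (Bv d b) := by
      rintro rfl
      exact ⟨hguard, adjTB hd hb, Or.inr (Or.inr (Or.inr (Or.inl ⟨rfl, rfl⟩)))⟩
    by_cases hflat : gf d (a - 1) = gf d b
    · have hma : m = gf d (a - 1) := by omega
      have : (Cyc d a b).neighborSet (Tv d m) = {Bv d (a - 1), Bv d b} := by
        ext w
        simp only [Subgraph.mem_neighborSet, Set.mem_insert_iff, Set.mem_singleton_iff]
        constructor
        · intro h
          rcases fwd w h with ⟨h1, h2⟩ | ⟨h1, h2⟩ | ⟨h1, h2⟩ | ⟨h1, h2⟩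
          · omega
          · omega
          · exact Or.inl h2
          · exact Or.inr h2
        · rintro (rfl | rfl)
          · exact adjCA hma
          · exact adjCB (by omega)
      rw [this]
      refine Set.ncard_pair (fun hcon => ?_)
      have := Bv_inj hd (by omega) (by omega) hcon
      omega
    · by_cases hma : m = gf d (a - 1)
      · have : (Cyc d a b).neighborSet (Tv d m) = {Tv d (m + 1), Bv d (a - 1)} := by
          ext w
          simp only [Subgraph.mem_neighborSet, Set.mem_insert_iff, Set.mem_singleton_iff]
          constructor
          · intro h
            rcases fwd w h with ⟨h1, h2⟩ | ⟨h1, h2⟩ | ⟨h1, h2⟩ | ⟨h1, h2⟩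
            · exact Or.inl h2
            · omega
            · exact Or.inr h2
            · omega
          · rintro (rfl | rfl)
            · exact adjT1 (by omega)
            · exact adjCA hma
        rw [this]
        exact Set.ncard_pair (Ne.symm (Bv_ne_Tv hd (by omega) (by omega)))
      · by_cases hmb : m = gf d b
        · have : (Cyc d a b).neighborSet (Tv d m) = {Tv d (m - 1), Bv d b} := by
            ext w
            simp only [Subgraph.mem_neighborSet, Set.mem_insert_iff, Set.mem_singleton_iff]
            constructor
            · intro h
              rcases fwd w h with ⟨h1, h2⟩ | ⟨h1, h2⟩ | ⟨h1, h2⟩ | ⟨h1, h2⟩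
              · omega
              · exact Or.inl h2
              · omega
              · exact Or.inr h2
            · rintro (rfl | rfl)
              · exact adjT2 (by omega)
              · exact adjCB hmb
          rw [this]
          exact Set.ncard_pair (Ne.symm (Bv_ne_Tv hd (by omega) (by omega)))
        · have : (Cyc d a b).neighborSet (Tv d m) = {Tv d (m + 1), Tv d (m - 1)} := by
            ext w
            simp only [Subgraph.mem_neighborSet, Set.mem_insert_iff, Set.mem_singleton_iff]
            constructor
            · intro h
              rcases fwd w h with ⟨h1, h2⟩ | ⟨h1, h2⟩ | ⟨h1, h2⟩ | ⟨h1, h2⟩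
              · exact Or.inl h2
              · exact Or.inr h2
              · omega
              · omega
            · rintro (rfl | rfl)
              · exact adjT1 (by omega)
              · exact adjT2 (by omega)
          rw [this]
          refine Set.ncard_pair (fun hcon => ?_)
          have := Tv_inj hd (by omega) (by omega) hcon
          omega

lemma cyc_conn (hd : 1 ≤ d) (ha : 1 ≤ a) (hab : a ≤ b) (hb : b ≤ 2 * d) :
    (Cyc d a b).coe.Connected := by
  have hguard : 1 ≤ a ∧ a ≤ b ∧ b ≤ 2 * d := ⟨ha, hab, hb⟩
  have hgab : gf d (a - 1) ≤ gf d b := gf_mono (by omega)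
  have hgb : gf d b ≤ 2 * d - 2 := gf_le hd hb
  have hbase : Bv d (a - 1) ∈ (Cyc d a b).verts := mem_cyc_B (le_refl _) (by omega)
  rw [connected_iff]
  refine ⟨?_, ⟨⟨_, hbase⟩⟩⟩
  have hcongr : ∀ (x y : Fin (2 * d + 1) ⊕ Fin (2 * d - 1)) (hx : x ∈ (Cyc d a b).verts)
      (hy : y ∈ (Cyc d a b).verts), x = y →
      (Cyc d a b).coe.Reachable ⟨x, hx⟩ ⟨y, hy⟩ := by
    rintro x y hx hy rfl
    exact Reachable.refl _
  have reachB : ∀ k (h1 : a - 1 ≤ k) (h2 : k ≤ b),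
      (Cyc d a b).coe.Reachable ⟨Bv d (a - 1), hbase⟩ ⟨Bv d k, mem_cyc_B h1 h2⟩ := by
    intro k
    induction k with
    | zero => intro h1 h2
              exact hcongr _ _ _ _ (by rw [show a - 1 = 0 from by omega])
    | succ n ih =>
      intro h1 h2
      rcases Nat.lt_or_ge (a - 1) (n + 1) with h | h
      · refine Reachable.trans (ih (by omega) (by omega)) (Adj.reachable ?_)
        show (Cyc d a b).Adj (Bv d n) (Bv d (n + 1))
        exact ⟨hguard, adjBB hd (by omega), Or.inl ⟨n, by omega, by omega,
          Or.inl ⟨rfl, rfl⟩⟩⟩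
      · exact hcongr _ _ _ _ (by rw [show a - 1 = n + 1 from by omega])
  have reachT : ∀ m (h1 : gf d (a - 1) ≤ m) (h2 : m ≤ gf d b),
      (Cyc d a b).coe.Reachable ⟨Bv d (a - 1), hbase⟩ ⟨Tv d m, mem_cyc_T h1 h2⟩ := by
    have hchord : (Cyc d a b).coe.Reachable ⟨Bv d (a - 1), hbase⟩
        ⟨Tv d (gf d (a - 1)), mem_cyc_T (le_refl _) hgab⟩ := by
      refine Adj.reachable ?_
      show (Cyc d a b).Adj (Bv d (a - 1)) (Tv d (gf d (a - 1)))
      exact ⟨hguard, (adjTB hd (by omega)).symm,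
        Or.inr (Or.inr (Or.inl (Or.inr ⟨rfl, rfl⟩)))⟩
    intro m
    induction m with
    | zero => intro h1 h2
              exact hchord.trans (hcongr _ _ _ _
                (by rw [show gf d (a - 1) = 0 from by omega]))
    | succ n ih =>
      intro h1 h2
      rcases Nat.lt_or_ge (gf d (a - 1)) (n + 1) with h | h
      · refine Reachable.trans (ih (by omega) (by omega)) (Adj.reachable ?_)
        show (Cyc d a b).Adj (Tv d n) (Tv d (n + 1))
        exact ⟨hguard, adjTT hd (by omega), Or.inr (Or.inl ⟨n, by omega, by omega,
          Or.inl ⟨rfl, rfl⟩⟩)⟩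
      · exact hchord.trans (hcongr _ _ _ _
          (by rw [show gf d (a - 1) = n + 1 from by omega]))
  intro u w
  obtain ⟨uv, hu⟩ := u
  obtain ⟨wv, hw⟩ := w
  have key : ∀ (x : Fin (2 * d + 1) ⊕ Fin (2 * d - 1)) (hx : x ∈ (Cyc d a b).verts),
      (Cyc d a b).coe.Reachable ⟨Bv d (a - 1), hbase⟩ ⟨x, hx⟩ := by
    intro x hx
    rcases hx with ⟨k, h1, h2, rfl⟩ | ⟨m, h1, h2, rfl⟩
    · exact reachB k h1 h2
    · exact reachT m h1 h2
  exact (key uv hu).symm.trans (key wv hw)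

lemma cyc_isCycleSub (hd : 1 ≤ d) (ha : 1 ≤ a) (hab : a ≤ b) (hb : b ≤ 2 * d) :
    (Cyc d a b).IsCycleSub :=
  ⟨⟨Bv d (a - 1), mem_cyc_B (le_refl _) (by omega)⟩, cyc_conn hd ha hab hb,
    cyc_deg hd ha hab hb⟩


lemma subcycle_eq {W : Type*} [Finite W] {G : SimpleGraph W} {C H : G.Subgraph}
    (hC : C.IsCycleSub) (hH : H.IsCycleSub) (hle : C ≤ H) : C = H := by
  obtain ⟨hCne, hCconn, hCdeg⟩ := hC
  obtain ⟨hHne, hHconn, hHdeg⟩ := hH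
  have hsub : C.verts ⊆ H.verts := hle.1
  have hN : ∀ v ∈ C.verts, C.neighborSet v = H.neighborSet v := by
    intro v hv
    refine Set.eq_of_subset_of_ncard_le (fun w hw => hle.2 hw) ?_ (Set.toFinite _)
    rw [hCdeg v hv, hHdeg v (hsub hv)]
  have hstep : ∀ x y, x ∈ C.verts → H.Adj x y → y ∈ C.verts ∧ C.Adj x y := by
    intro x y hx hadj
    have hmem : y ∈ C.neighborSet x := by rw [hN x hx]; exact hadj
    exact ⟨C.edge_vert (Subgraph.Adj.symm hmem), hmem⟩
  have walkind : ∀ (x y : H.verts) (_ : H.coe.Walk x y), x.val ∈ C.verts → y.val ∈ C.verts := by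
    intro x y w
    induction w with
    | nil => exact id
    | @cons u z y h p ih =>
      intro hx
      have hadj : H.Adj u.val z.val := h
      exact ih ((hstep _ _ hx hadj).1)
  have hverts : C.verts = H.verts := by
    refine hsub.antisymm (fun u hu => ?_)
    obtain ⟨v0, hv0⟩ := hCne
    obtain ⟨w⟩ := hHconn.preconnected ⟨v0, hsub hv0⟩ ⟨u, hu⟩
    exact walkind _ _ w hv0
  refine Subgraph.ext hverts ?_
  funext x y
  refine propext ⟨fun h => hle.2 h, fun h => ?_⟩
  have hx : x ∈ C.verts := by rw [hverts]; exact H.edge_vert h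
  exact (hstep x y hx h).2

lemma cycle_eq_cyc (hd : 1 ≤ d) (H : (HGraph d).Subgraph) (hH : H.IsCycleSub) :
    ∃ a b, 1 ≤ a ∧ a ≤ b ∧ b ≤ 2 * d ∧ H = Cyc d a b := by
  classical
  obtain ⟨hne, hconn, hdeg⟩ := hH
  have pairspec : ∀ v, v ∈ H.verts → ∃ w1 w2, w1 ≠ w2 ∧ H.Adj v w1 ∧ H.Adj v w2 ∧
      ∀ w, H.Adj v w → w = w1 ∨ w = w2 := by
    intro v hv
    obtain ⟨w1, w2, hne12, hset⟩ := Set.ncard_eq_two.mp (hdeg v hv)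
    have h1 : w1 ∈ H.neighborSet v := by rw [hset]; exact Set.mem_insert _ _
    have h2 : w2 ∈ H.neighborSet v := by rw [hset]; exact Set.mem_insert_of_mem _ rfl
    refine ⟨w1, w2, hne12, h1, h2, fun w hw => ?_⟩
    have : w ∈ H.neighborSet v := hw
    rw [hset] at this
    exact this
  have gclassB : ∀ k w, k ≤ 2 * d → (HGraph d).Adj (Bv d k) w →
      (1 ≤ k ∧ w = Bv d (k - 1)) ∨ (k + 1 ≤ 2 * d ∧ w = Bv d (k + 1)) ∨
        w = Tv d (gf d k) := by
    intro k w hk hadj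
    rcases vert_total hd w with ⟨k', hk', rfl⟩ | ⟨m, hm, rfl⟩
    · rcases classBB hd hk hk' hadj with h | h
      · exact Or.inr (Or.inl ⟨by omega, by rw [h]⟩)
      · refine Or.inl ⟨by omega, by rw [show k - 1 = k' from by omega]⟩
    · have := classTB hd hm hk hadj.symm
      exact Or.inr (Or.inr (by rw [this]))
  have gclassT : ∀ m w, m ≤ 2 * d - 2 → (HGraph d).Adj (Tv d m) w →
      (1 ≤ m ∧ w = Tv d (m - 1)) ∨ (m + 1 ≤ 2 * d - 2 ∧ w = Tv d (m + 1)) ∨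
        (∃ k, k ≤ 2 * d ∧ gf d k = m ∧ w = Bv d k) := by
    intro m w hm hadj
    rcases vert_total hd w with ⟨k', hk', rfl⟩ | ⟨m', hm', rfl⟩
    · exact Or.inr (Or.inr ⟨k', hk', (classTB hd hm hk' hadj).symm, rfl⟩)
    · rcases classTT hd hm hm' hadj with h | h
      · exact Or.inr (Or.inl ⟨by omega, by rw [h]⟩)
      · exact Or.inl ⟨by omega, by rw [show m - 1 = m' from by omega]⟩
  -- the set of bottom coordinates
  set SB : Finset ℕ := (Finset.range (2 * d + 1)).filter (fun k => Bv d k ∈ H.verts)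
    with hSB
  have memSB : ∀ k, k ∈ SB ↔ (k ≤ 2 * d ∧ Bv d k ∈ H.verts) := by
    intro k
    simp only [hSB, Finset.mem_filter, Finset.mem_range]
    constructor <;> rintro ⟨h, h2⟩ <;> exact ⟨by omega, h2⟩
  set ST : Finset ℕ := (Finset.range (2 * d - 1)).filter (fun m => Tv d m ∈ H.verts)
    with hST
  have memST : ∀ m, m ∈ ST ↔ (m ≤ 2 * d - 2 ∧ Tv d m ∈ H.verts) := by
    intro m
    simp only [hST, Finset.mem_filter, Finset.mem_range]
    constructor <;> rintro ⟨h, h2⟩ <;> exact ⟨by omega, h2⟩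
  have hSBne : SB.Nonempty := by
    by_contra hcon
    rw [Finset.not_nonempty_iff_eq_empty] at hcon
    have hnoB : ∀ k, k ≤ 2 * d → Bv d k ∉ H.verts := by
      intro k hk hmem
      have : k ∈ SB := (memSB k).2 ⟨hk, hmem⟩
      rw [hcon] at this
      exact absurd this (Finset.notMem_empty k)
    have hSTne : ST.Nonempty := by
      obtain ⟨v, hv⟩ := hne
      rcases vert_total hd v with ⟨k, hk, rfl⟩ | ⟨m, hm, rfl⟩
      · exact absurd hv (hnoB k hk)
      · exact ⟨m, (memST m).2 ⟨hm, hv⟩⟩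
    set mx := ST.max' hSTne with hmx
    have hmxmem := ST.max'_mem hSTne
    rw [memST] at hmxmem
    obtain ⟨w1, w2, hne12, ha1, ha2, hall⟩ := pairspec _ hmxmem.2
    have hcl : ∀ w, H.Adj (Tv d mx) w → w = Tv d (mx - 1) := by
      intro w hw
      rcases gclassT mx w hmxmem.1 (H.adj_sub hw) with ⟨h1, h2⟩ | ⟨h1, h2⟩ | ⟨k, h1, h2, h3⟩
      · exact h2
      · exfalso
        have hmem : Tv d (mx + 1) ∈ H.verts := by
          rw [← h2]; exact H.edge_vert hw.symm
        have : mx + 1 ∈ ST := (memST _).2 ⟨h1, hmem⟩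
        have := Finset.le_max' ST _ this
        omega
      · exfalso
        have hmem : Bv d k ∈ H.verts := by rw [← h3]; exact H.edge_vert hw.symm
        exact hnoB k h1 hmem
    have := (hcl w1 ha1).trans (hcl w2 ha2).symm
    exact hne12 this
  set k1 := SB.min' hSBne with hk1def
  set k2 := SB.max' hSBne with hk2def
  have hk1mem := SB.min'_mem hSBne
  rw [memSB] at hk1mem
  have hk1le : k1 ≤ 2 * d := hk1mem.1
  have hmin : ∀ k, k ≤ 2 * d → Bv d k ∈ H.verts → k1 ≤ k := by
    intro k hk hmem
    exact SB.min'_le k ((memSB k).2 ⟨hk, hmem⟩)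
  -- neighbors of Bv k1
  obtain ⟨w1, w2, hne12, ha1, ha2, hall⟩ := pairspec _ hk1mem.2
  have hclk1 : ∀ w, H.Adj (Bv d k1) w →
      (k1 + 1 ≤ 2 * d ∧ w = Bv d (k1 + 1)) ∨ w = Tv d (gf d k1) := by
    intro w hw
    rcases gclassB k1 w hk1le (H.adj_sub hw) with ⟨h1, h2⟩ | h | h
    · exfalso
      have hmem : Bv d (k1 - 1) ∈ H.verts := by rw [← h2]; exact H.edge_vert hw.symm
      have := hmin (k1 - 1) (by omega) hmem
      omega
    · exact Or.inl h
    · exact Or.inr h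
  have hkey1 : H.Adj (Bv d k1) (Bv d (k1 + 1)) ∧ k1 + 1 ≤ 2 * d ∧
      H.Adj (Bv d k1) (Tv d (gf d k1)) := by
    rcases hclk1 w1 ha1 with ⟨hle1, rfl⟩ | rfl <;>
      rcases hclk1 w2 ha2 with ⟨hle2, rfl⟩ | rfl
    · exact absurd rfl hne12
    · exact ⟨ha1, hle1, ha2⟩
    · exact ⟨ha2, hle2, ha1⟩
    · exact absurd rfl hne12
  obtain ⟨hadjk1, hk1lt, hchord1⟩ := hkey1
  clear hne12 ha1 ha2 hall
  -- greedy maximal bottom path starting at k1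
  set FB : Finset ℕ := (Finset.range (2 * d + 1)).filter
    (fun k => k1 < k ∧ ∀ j, k1 ≤ j → j < k → H.Adj (Bv d j) (Bv d (j + 1))) with hFB
  have memFB : ∀ k, k ∈ FB ↔ (k ≤ 2 * d ∧ k1 < k ∧
      ∀ j, k1 ≤ j → j < k → H.Adj (Bv d j) (Bv d (j + 1))) := by
    intro k
    simp only [hFB, Finset.mem_filter, Finset.mem_range]
    constructor <;> rintro ⟨h, h2⟩ <;> exact ⟨by omega, h2⟩
  have hFBne : FB.Nonempty := by
    refine ⟨k1 + 1, (memFB _).2 ⟨hk1lt, by omega, ?_⟩⟩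
    intro j hj1 hj2
    rw [show j = k1 from by omega]
    exact hadjk1
  set bs := FB.max' hFBne with hbsdef
  have hbsmem := FB.max'_mem hFBne
  rw [memFB] at hbsmem
  obtain ⟨hbs2d, hbsgt, hpath⟩ := hbsmem
  have hadjdown : H.Adj (Bv d bs) (Bv d (bs - 1)) := by
    have := (hpath (bs - 1) (by omega) (by omega)).symm
    rwa [show bs - 1 + 1 = bs from by omega] at this
  have hBbs : Bv d bs ∈ H.verts := H.edge_vert hadjdown
  obtain ⟨u1, u2, hu12, hb1, hb2, hballs⟩ := pairspec _ hBbs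
  have hclbs : ∀ w, H.Adj (Bv d bs) w → w = Bv d (bs - 1) ∨ w = Tv d (gf d bs) := by
    intro w hw
    rcases gclassB bs w hbs2d (H.adj_sub hw) with ⟨h1, h2⟩ | ⟨h1, h2⟩ | h
    · exact Or.inl h2
    · exfalso
      have hw' : H.Adj (Bv d bs) (Bv d (bs + 1)) := by rw [← h2]; exact hw
      have : bs + 1 ∈ FB := by
        refine (memFB _).2 ⟨h1, by omega, ?_⟩
        intro j hj1 hj2
        rcases Nat.lt_or_ge j bs with hj | hj
        · exact hpath j hj1 hj
        · rw [show j = bs from by omega]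
          exact hw'
      have := FB.le_max' _ this
      omega
    · exact Or.inr h
  have hchord2 : H.Adj (Bv d bs) (Tv d (gf d bs)) := by
    rcases hclbs u1 hb1 with h1 | h1 <;> rcases hclbs u2 hb2 with h2 | h2
    · exact absurd (h1.trans h2.symm) hu12
    · rw [← h2]; exact hb2
    · rw [← h1]; exact hb1
    · rw [← h1]; exact hb1
  clear hu12 hb1 hb2 hballs
  -- interior bottom vertices: neighbors are exactly the two bottom ones
  have hnbrint : ∀ j, k1 < j → j < bs → ∀ w, H.Adj (Bv d j) w →
      w = Bv d (j - 1) ∨ w = Bv d (j + 1) := by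
    intro j hj1 hj2 w hw
    have hup : H.Adj (Bv d j) (Bv d (j + 1)) := hpath j (by omega) hj2
    have hdown : H.Adj (Bv d j) (Bv d (j - 1)) := by
      have := (hpath (j - 1) (by omega) (by omega)).symm
      rwa [show j - 1 + 1 = j from by omega] at this
    obtain ⟨x1, x2, hx12, hxa1, hxa2, hxall⟩ := pairspec _ (H.edge_vert hup)
    have hupdown : Bv d (j + 1) ≠ Bv d (j - 1) := by
      intro hcon
      have := Bv_inj hd (by omega) (by omega) hcon
      omega
    rcases hxall _ hup with h1 | h1 <;> rcases hxall _ hdown with h2 | h2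
    · exact absurd (h1.trans h2.symm) hupdown
    · rcases hxall _ hw with h3 | h3
      · exact Or.inr (h3.trans h1.symm)
      · exact Or.inl (h3.trans h2.symm)
    · rcases hxall _ hw with h3 | h3
      · exact Or.inl (h3.trans h2.symm)
      · exact Or.inr (h3.trans h1.symm)
    · exact absurd (h1.trans h2.symm) hupdown
  -- minimum of the top coordinates
  have hTgfk1 : Tv d (gf d k1) ∈ H.verts := H.edge_vert hchord1.symm
  have hgfk1le : gf d k1 ≤ 2 * d - 2 := gf_le hd hk1le
  have hSTne : ST.Nonempty := ⟨gf d k1, (memST _).2 ⟨hgfk1le, hTgfk1⟩⟩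
  have hTmin : ∀ m, m ≤ 2 * d - 2 → Tv d m ∈ H.verts → gf d k1 ≤ m := by
    have hm1mem := ST.min'_mem hSTne
    rw [memST] at hm1mem
    have hm1le : ST.min' hSTne ≤ gf d k1 := ST.min'_le _ ((memST _).2 ⟨hgfk1le, hTgfk1⟩)
    have hm1ge : gf d k1 ≤ ST.min' hSTne := by
      set m1 := ST.min' hSTne with hm1def
      obtain ⟨y1, y2, hy12, hya1, hya2, hyall⟩ := pairspec _ hm1mem.2
      have hcl : ∀ w, H.Adj (Tv d m1) w → w = Tv d (m1 + 1) ∨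
          (∃ k, k ≤ 2 * d ∧ gf d k = m1 ∧ w = Bv d k) := by
        intro w hw
        rcases gclassT m1 w hm1mem.1 (H.adj_sub hw) with ⟨h1, h2⟩ | ⟨h1, h2⟩ | h
        · exfalso
          have hmem : Tv d (m1 - 1) ∈ H.verts := by rw [← h2]; exact H.edge_vert hw.symm
          have : m1 - 1 ∈ ST := (memST _).2 ⟨by omega, hmem⟩
          have := ST.min'_le _ this
          omega
        · exact Or.inl h2
        · exact Or.inr h
      have hex : ∃ k, k ≤ 2 * d ∧ gf d k = m1 ∧ Bv d k ∈ H.verts := by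
        rcases hcl y1 hya1 with h1 | ⟨k, hk, hgk, hk2⟩
        · rcases hcl y2 hya2 with h2 | ⟨k, hk, hgk, hk2⟩
          · exact absurd (h1.trans h2.symm) hy12
          · exact ⟨k, hk, hgk, by rw [← hk2]; exact H.edge_vert hya2.symm⟩
        · exact ⟨k, hk, hgk, by rw [← hk2]; exact H.edge_vert hya1.symm⟩
      obtain ⟨k, hk, hgk, hkmem⟩ := hex
      have := gf_mono (d := d) (hmin k hk hkmem)
      omega
    intro m hm hmem
    have := ST.min'_le _ ((memST _).2 ⟨hm, hmem⟩)
    omega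
  -- top path forcing
  have hgfbsle : gf d bs ≤ 2 * d - 2 := gf_le hd hbs2d
  have hchordexc : ∀ m w, gf d k1 < m → m < gf d bs → H.Adj (Tv d m) w → m ≤ 2 * d - 2 →
      w = Tv d (m - 1) ∨ w = Tv d (m + 1) := by
    intro m w hm1' hm2' hw hmle
    rcases gclassT m w hmle (H.adj_sub hw) with ⟨h1, h2⟩ | ⟨h1, h2⟩ | ⟨k, hk, hgk, h2⟩
    · exact Or.inl h2
    · exact Or.inr h2
    · exfalso
      have hw' : H.Adj (Tv d m) (Bv d k) := by rw [← h2]; exact hw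
      have hkmem : Bv d k ∈ H.verts := H.edge_vert hw'.symm
      have hk1k : k1 ≤ k := hmin k hk hkmem
      rcases Nat.lt_or_ge k bs with hkbs | hkbs
      · rcases Nat.eq_or_lt_of_le hk1k with rfl | hk1k'
        · omega
        · rcases hnbrint k hk1k' hkbs (Tv d m) hw'.symm with hcon | hcon <;>
            exact Bv_ne_Tv hd (by omega) hmle hcon.symm
      · have := gf_mono (d := d) hkbs
        omega
  have htop : ∀ m, gf d k1 ≤ m → m < gf d bs → H.Adj (Tv d m) (Tv d (m + 1)) := by
    intro m hm
    induction m, hm using Nat.le_induction with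
    | base =>
      intro hlt
      obtain ⟨y1, y2, hy12, hya1, hya2, hyall⟩ := pairspec _ hTgfk1
      have hcl : ∀ w, H.Adj (Tv d (gf d k1)) w → w = Tv d (gf d k1 + 1) ∨ w = Bv d k1 := by
        intro w hw
        rcases gclassT _ w hgfk1le (H.adj_sub hw) with ⟨h1, h2⟩ | ⟨h1, h2⟩ | ⟨k, hk, hgk, h2⟩
        · exfalso
          have hmem : Tv d (gf d k1 - 1) ∈ H.verts := by
            rw [← h2]; exact H.edge_vert hw.symm
          have := hTmin _ (by omega) hmem
          omega
        · exact Or.inl h2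
        · have hw' : H.Adj (Tv d (gf d k1)) (Bv d k) := by rw [← h2]; exact hw
          have hkmem : Bv d k ∈ H.verts := H.edge_vert hw'.symm
          have hk1k : k1 ≤ k := hmin k hk hkmem
          rcases Nat.eq_or_lt_of_le hk1k with rfl | hk1k'
          · exact Or.inr h2
          · exfalso
            rcases Nat.lt_or_ge k bs with hkbs | hkbs
            · rcases hnbrint k hk1k' hkbs _ hw'.symm with hcon | hcon <;>
                exact Bv_ne_Tv hd (by omega) hgfk1le hcon.symm
            · have := gf_mono (d := d) hkbs
              omega
      rcases hcl y1 hya1 with h1 | h1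
      · rw [← h1]; exact hya1
      · rcases hcl y2 hya2 with h2 | h2
        · rw [← h2]; exact hya2
        · exfalso
          have hBk1 : y1 = y2 := h1.trans h2.symm
          exact hy12 hBk1
    | succ m hm ih =>
      intro hlt
      have hprev : H.Adj (Tv d m) (Tv d (m + 1)) := ih (by omega)
      have hmem : Tv d (m + 1) ∈ H.verts := H.edge_vert hprev.symm
      obtain ⟨y1, y2, hy12, hya1, hya2, hyall⟩ := pairspec _ hmem
      have hmle : m + 1 ≤ 2 * d - 2 := by omega
      have hcl := fun w hw => hchordexc (m + 1) w (by omega) hlt hw hmle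
      rcases hcl y1 hya1 with h1 | h1
      · rcases hcl y2 hya2 with h2 | h2
        · exact absurd (h1.trans h2.symm) hy12
        · rw [← h2]; exact hya2
      · rw [← h1]; exact hya1
  -- assembly
  have hc1 : 1 ≤ k1 + 1 := by omega
  have hc2 : k1 + 1 ≤ bs := by omega
  have hred : k1 + 1 - 1 = k1 := by omega
  have hle : Cyc d (k1 + 1) bs ≤ H := by
    constructor
    · rintro v (⟨k, h1, h2, rfl⟩ | ⟨m, h1, h2, rfl⟩)
      · rcases Nat.eq_or_lt_of_le (show k1 ≤ k from by omega) with rfl | hk'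
        · exact hk1mem.2
        · have := (hpath (k - 1) (by omega) (by omega)).symm
          rw [show k - 1 + 1 = k from by omega] at this
          exact H.edge_vert this
      · rw [hred] at h1
        rcases Nat.eq_or_lt_of_le h1 with heq | hlt'
        · rw [← heq]; exact hTgfk1
        · have := htop (m - 1) (by omega) (by omega)
          rw [show m - 1 + 1 = m from by omega] at this
          exact H.edge_vert this.symm
    · rintro x y ⟨hg, hadj, hsel⟩
      rcases hsel with ⟨j, h1, h2, ⟨rfl, rfl⟩ | ⟨rfl, rfl⟩⟩ |
        ⟨m, h1, h2, ⟨rfl, rfl⟩ | ⟨rfl, rfl⟩⟩ | (⟨rfl, rfl⟩ | ⟨rfl, rfl⟩) |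
        (⟨rfl, rfl⟩ | ⟨rfl, rfl⟩)
      · exact hpath j (by omega) h2
      · exact (hpath j (by omega) h2).symm
      · rw [hred] at h1
        exact htop m h1 h2
      · rw [hred] at h1
        exact (htop m h1 h2).symm
      · rw [hred]
        exact hchord1.symm
      · rw [hred]
        exact hchord1
      · exact hchord2.symm
      · exact hchord2
  have heq := subcycle_eq (cyc_isCycleSub hd hc1 hc2 hbs2d) ⟨hne, hconn, hdeg⟩ hle
  exact ⟨k1 + 1, bs, hc1, hc2, hbs2d, heq.symm⟩

def Ptri (d : ℕ) : Finset (ℕ × ℕ) :=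
  ((Finset.Icc 1 (2 * d)) ×ˢ (Finset.Icc 1 (2 * d))).filter (fun p => p.1 ≤ p.2)

def Podd (d : ℕ) : Finset (ℕ × ℕ) := (Ptri d).filter (fun p => p.2 = d ∨ p.1 = d + 1)

def Peven (d : ℕ) : Finset (ℕ × ℕ) :=
  (Ptri d).filter (fun p => ¬(p.2 = d ∨ p.1 = d + 1))

lemma memPtri {p : ℕ × ℕ} : p ∈ Ptri d ↔ 1 ≤ p.1 ∧ p.1 ≤ p.2 ∧ p.2 ≤ 2 * d := by
  simp only [Ptri, Finset.mem_filter, Finset.mem_product, Finset.mem_Icc]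
  omega

lemma memPodd {p : ℕ × ℕ} :
    p ∈ Podd d ↔ (1 ≤ p.1 ∧ p.1 ≤ p.2 ∧ p.2 ≤ 2 * d) ∧ (p.2 = d ∨ p.1 = d + 1) := by
  simp only [Podd, Finset.mem_filter, memPtri]

lemma memPeven {p : ℕ × ℕ} :
    p ∈ Peven d ↔ (1 ≤ p.1 ∧ p.1 ≤ p.2 ∧ p.2 ≤ 2 * d) ∧ ¬(p.2 = d ∨ p.1 = d + 1) := by
  simp only [Peven, Finset.mem_filter, memPtri]

lemma gauss : ∀ n : ℕ, (∑ b ∈ Finset.Icc 1 n, b) * 2 = n * (n + 1) := by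
  intro n
  induction n with
  | zero => simp
  | succ n ih =>
    rw [Finset.sum_Icc_succ_top (by omega)]
    have h2 : (n + 1) * (n + 1 + 1) = n * (n + 1) + (n + 1) * 2 := by ring
    rw [h2, ← ih]
    ring

lemma Ptri_card : (Ptri d).card = d * (2 * d + 1) := by
  have hP : Ptri d =
      (Finset.Icc 1 (2 * d)).biUnion (fun b => (Finset.Icc 1 b).image (fun a => (a, b))) := by
    ext ⟨a, b⟩
    simp only [memPtri, Finset.mem_biUnion, Finset.mem_image, Finset.mem_Icc, Prod.mk.injEq]
    constructor
    · rintro ⟨h1, h2, h3⟩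
      exact ⟨b, ⟨by omega, h3⟩, a, ⟨h1, h2⟩, rfl, rfl⟩
    · rintro ⟨b', ⟨hb1, hb2⟩, a', ⟨ha1, ha2⟩, rfl, rfl⟩
      exact ⟨ha1, ha2, hb2⟩
  rw [hP, Finset.card_biUnion]
  · have : ∀ b ∈ Finset.Icc 1 (2 * d),
        ((Finset.Icc 1 b).image (fun a => (a, b))).card = b := by
      intro b _
      rw [Finset.card_image_of_injective _ (fun x y h => (Prod.ext_iff.1 h).1),
        Nat.card_Icc]
      omega
    rw [Finset.sum_congr rfl this]
    have h3 : (∑ b ∈ Finset.Icc 1 (2 * d), b) * 2 = d * (2 * d + 1) * 2 := by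
      rw [gauss (2 * d)]; ring
    omega
  · intro x _ y _ hxy
    rw [Function.onFun, Finset.disjoint_left]
    rintro ⟨a, b⟩ hmem hmem'
    simp only [Finset.mem_image, Finset.mem_Icc, Prod.mk.injEq] at hmem hmem'
    obtain ⟨_, _, _, rfl⟩ := hmem
    obtain ⟨_, _, _, rfl⟩ := hmem'
    exact hxy rfl

lemma Podd_card (hd : 1 ≤ d) : (Podd d).card = 2 * d := by
  have hsplit : Podd d = ((Finset.Icc 1 d).image (fun a => (a, d))) ∪
      ((Finset.Icc (d + 1) (2 * d)).image (fun b => (d + 1, b))) := by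
    ext ⟨a, b⟩
    simp only [memPodd, Finset.mem_union, Finset.mem_image, Finset.mem_Icc, Prod.mk.injEq]
    constructor
    · rintro ⟨⟨h1, h2, h3⟩, h4 | h4⟩
      · exact Or.inl ⟨a, ⟨h1, by omega⟩, rfl, h4.symm⟩
      · exact Or.inr ⟨b, ⟨by omega, h3⟩, h4.symm, rfl⟩
    · rintro (⟨a', ⟨h1, h2⟩, rfl, rfl⟩ | ⟨b', ⟨h1, h2⟩, rfl, rfl⟩)
      · exact ⟨⟨h1, h2, by omega⟩, Or.inl rfl⟩
      · exact ⟨⟨by omega, h1, h2⟩, Or.inr rfl⟩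
  rw [hsplit, Finset.card_union_of_disjoint, Finset.card_image_of_injective _
      (fun x y h => (Prod.ext_iff.1 h).1),
    Finset.card_image_of_injective _ (fun x y h => (Prod.ext_iff.1 h).2),
    Nat.card_Icc, Nat.card_Icc]
  · omega
  · rw [Finset.disjoint_left]
    rintro ⟨a, b⟩ hmem hmem'
    simp only [Finset.mem_image, Finset.mem_Icc, Prod.mk.injEq] at hmem hmem'
    obtain ⟨x, hx, rfl, rfl⟩ := hmem
    obtain ⟨y, hy, h1, h2⟩ := hmem'
    omega

lemma Peven_card (hd : 1 ≤ d) : (Peven d).card = d * (2 * d - 1) := by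
  have := Finset.card_filter_add_card_filter_not
    (s := Ptri d) (p := fun p => p.2 = d ∨ p.1 = d + 1)
  have h1 : (Podd d).card + (Peven d).card = (Ptri d).card := this
  rw [Ptri_card] at h1
  rw [Podd_card hd] at h1
  have h2 : d * (2 * d + 1) = d * (2 * d - 1) + 2 * d := by
    have h3 : 2 * d + 1 = (2 * d - 1) + 2 := by omega
    rw [h3]; ring
  omega

lemma set_odd_eq (hd : 1 ≤ d) :
    {H : (HGraph d).Subgraph | H.IsCycleSub ∧ Odd H.verts.ncard} =
      (fun p : ℕ × ℕ => Cyc d p.1 p.2) '' ↑(Podd d) := by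
  ext H
  simp only [Set.mem_setOf_eq, Set.mem_image, Finset.mem_coe]
  constructor
  · rintro ⟨hcyc, hodd⟩
    obtain ⟨a, b, ha, hab, hb, rfl⟩ := cycle_eq_cyc hd H hcyc
    refine ⟨(a, b), memPodd.2 ⟨⟨ha, hab, hb⟩, (cyc_parity hd ha hab hb).1 hodd⟩, rfl⟩
  · rintro ⟨⟨a, b⟩, hmem, rfl⟩
    rw [memPodd] at hmem
    obtain ⟨⟨ha, hab, hb⟩, hpar⟩ := hmem
    exact ⟨cyc_isCycleSub hd ha hab hb, (cyc_parity hd ha hab hb).2 hpar⟩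

lemma set_even_eq (hd : 1 ≤ d) :
    {H : (HGraph d).Subgraph | H.IsCycleSub ∧ Even H.verts.ncard} =
      (fun p : ℕ × ℕ => Cyc d p.1 p.2) '' ↑(Peven d) := by
  ext H
  simp only [Set.mem_setOf_eq, Set.mem_image, Finset.mem_coe]
  constructor
  · rintro ⟨hcyc, heven⟩
    obtain ⟨a, b, ha, hab, hb, rfl⟩ := cycle_eq_cyc hd H hcyc
    refine ⟨(a, b), memPeven.2 ⟨⟨ha, hab, hb⟩, ?_⟩, rfl⟩
    intro h
    exact (Nat.not_odd_iff_even.2 heven) ((cyc_parity hd ha hab hb).2 h)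
  · rintro ⟨⟨a, b⟩, hmem, rfl⟩
    rw [memPeven] at hmem
    obtain ⟨⟨ha, hab, hb⟩, hpar⟩ := hmem
    refine ⟨cyc_isCycleSub hd ha hab hb, ?_⟩
    exact Nat.not_odd_iff_even.1 (fun hodd => hpar ((cyc_parity hd ha hab hb).1 hodd))

lemma cyc_injOn (hd : 1 ≤ d) {s : Finset (ℕ × ℕ)} (hs : ∀ p ∈ s, p ∈ Ptri d) :
    Set.InjOn (fun p : ℕ × ℕ => Cyc d p.1 p.2) ↑s := by
  intro p hp q hq heq
  have hp' := memPtri.1 (hs p hp)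
  have hq' := memPtri.1 (hs q hq)
  have := cyc_inj hd hp'.1 hp'.2.1 hp'.2.2 hq'.1 hq'.2.1 hq'.2.2 heq
  exact Prod.ext this.1 this.2

lemma cOdd_HGraph (hd : 1 ≤ d) : cOdd (HGraph d) = 2 * d := by
  rw [cOdd, set_odd_eq hd,
    Set.ncard_image_of_injOn (cyc_injOn hd (s := Podd d)
      (fun p hp => memPtri.2 (memPodd.1 hp).1)),
    Set.ncard_coe_finset, Podd_card hd]

lemma cEven_HGraph (hd : 1 ≤ d) : cEven (HGraph d) = d * (2 * d - 1) := by
  rw [cEven, set_even_eq hd,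
    Set.ncard_image_of_injOn (cyc_injOn hd (s := Peven d)
      (fun p hp => memPtri.2 (memPeven.1 hp).1)),
    Set.ncard_coe_finset, Peven_card hd]

theorem ratio_HGraph :
    (∀ d : ℕ, 1 ≤ d →
      (cEven (HGraph d) : ℝ) / (cOdd (HGraph d) : ℝ) = (d : ℝ) - 1 / 2) ∧
    Tendsto (fun d : ℕ => (cEven (HGraph d) : ℝ) / (cOdd (HGraph d) : ℝ)) atTop atTop := by
  have hratio : ∀ d : ℕ, 1 ≤ d →
      (cEven (HGraph d) : ℝ) / (cOdd (HGraph d) : ℝ) = (d : ℝ) - 1 / 2 := by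
    intro d hd
    rw [cOdd_HGraph hd, cEven_HGraph hd]
    have h1 : ((d * (2 * d - 1) : ℕ) : ℝ) = (d : ℝ) * (2 * (d : ℝ) - 1) := by
      rw [Nat.cast_mul, Nat.cast_sub (by omega)]
      push_cast
      ring
    have h2 : ((2 * d : ℕ) : ℝ) = 2 * (d : ℝ) := by push_cast; ring
    rw [h1, h2]
    have hd' : (0 : ℝ) < (d : ℝ) := by exact_mod_cast Nat.pos_of_ne_zero (by omega)
    field_simp
  refine ⟨hratio, ?_⟩
  have hbase : Tendsto (fun d : ℕ => (d : ℝ) - 1 / 2) atTop atTop := by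
    have := tendsto_atTop_add_const_right atTop (-(1 / 2) : ℝ)
      (tendsto_natCast_atTop_atTop (R := ℝ))
    simpa [sub_eq_add_neg] using this
  refine Tendsto.congr' ?_ hbase
  filter_upwards [eventually_ge_atTop 1] with d hd
  exact (hratio d hd).symm
end

section
/- Let t ≥ 3 be an integer and let I be a nonempty subset of {0,…,t−1} with |I| = s. Then the graph S(t,I) satisfies c_o(S(t,I)) = 2^{s−1} + s and c_e(S(t,I)) = 2^{s−1}. -/
open SimpleGraph Filter

/-- The graph `S(t, I)`: a `t`-cycle `v_0 … v_(t-1)` together with, for each `i ∈ I`,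
an extra vertex `r_i` joined to `v_i` and `v_(i+1)` (a triangle attached along the
edge `v_i v_(i+1)`). -/
def SGraph (t : ℕ) (I : Finset (ZMod t)) : SimpleGraph (ZMod t ⊕ {i : ZMod t // i ∈ I}) :=
  SimpleGraph.fromRel (fun x y =>
    (∃ i : ZMod t, x = Sum.inl i ∧ y = Sum.inl (i + 1)) ∨
    (∃ r : {i : ZMod t // i ∈ I}, y = Sum.inr r ∧
      (x = Sum.inl r.val ∨ x = Sum.inl (r.val + 1))))


namespace SCount
open Sum

variable {t : ℕ} {I : Finset (ZMod t)}

lemma adj_inl_inl {i j : ZMod t} :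
    (SGraph t I).Adj (inl i) (inl j) ↔ i ≠ j ∧ (j = i + 1 ∨ i = j + 1) := by
  simp [SGraph, SimpleGraph.fromRel_adj]

lemma adj_inl_inr {i : ZMod t} {r : {i : ZMod t // i ∈ I}} :
    (SGraph t I).Adj (inl i) (inr r) ↔ (i = r.val ∨ i = r.val + 1) := by
  simp [SGraph, SimpleGraph.fromRel_adj]

lemma adj_inr_inl {i : ZMod t} {r : {i : ZMod t // i ∈ I}} :
    (SGraph t I).Adj (inr r) (inl i) ↔ (i = r.val ∨ i = r.val + 1) := by
  rw [SimpleGraph.adj_comm]; exact adj_inl_inr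

lemma not_adj_inr_inr {r s : {i : ZMod t // i ∈ I}} :
    ¬ (SGraph t I).Adj (inr r) (inr s) := by
  simp [SGraph, SimpleGraph.fromRel_adj]

section ZModFacts
variable (ht : 3 ≤ t)
include ht

lemma one_ne : (1 : ZMod t) ≠ 0 := by
  have : ((1:ℕ) : ZMod t) ≠ 0 := by
    haveI : NeZero t := ⟨by omega⟩
    rw [Ne, ZMod.natCast_eq_zero_iff]
    intro h; have := Nat.le_of_dvd one_pos h; omega
  simpa using this

lemma two_ne : (2 : ZMod t) ≠ 0 := by
  have : ((2:ℕ) : ZMod t) ≠ 0 := by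
    haveI : NeZero t := ⟨by omega⟩
    rw [Ne, ZMod.natCast_eq_zero_iff]
    intro h; have := Nat.le_of_dvd two_pos h; omega
  simpa using this

lemma succ_ne (i : ZMod t) : i + 1 ≠ i := by
  intro h; exact one_ne ht (by linear_combination h)

lemma sub_one_ne (i : ZMod t) : i - 1 ≠ i := by
  intro h; exact one_ne ht (by linear_combination -h)

lemma sub_one_ne_add_one (i : ZMod t) : i - 1 ≠ i + 1 := by
  intro h; exact two_ne ht (by linear_combination -h)

lemma add_two_ne (i : ZMod t) : i + 2 ≠ i := by
  intro h; exact two_ne ht (by linear_combination h)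

end ZModFacts

/-- The triangle with vertices `v_i, v_(i+1), r_i`. -/
def tri (i : ZMod t) : (SGraph t I).Subgraph :=
  (⊤ : (SGraph t I).Subgraph).induce
    ({inl i, inl (i+1)} ∪ inr '' {r : {i : ZMod t // i ∈ I} | r.val = i})

def CAdj (J : Finset (ZMod t)) :
    (ZMod t ⊕ {i : ZMod t // i ∈ I}) → (ZMod t ⊕ {i : ZMod t // i ∈ I}) → Prop
  | inl i, inl j => i ≠ j ∧ ((j = i + 1 ∧ i ∉ J) ∨ (i = j + 1 ∧ j ∉ J))
  | inl i, inr r => r.val ∈ J ∧ (i = r.val ∨ i = r.val + 1)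
  | inr r, inl i => r.val ∈ J ∧ (i = r.val ∨ i = r.val + 1)
  | inr _, inr _ => False

/-- The ring cycle which detours through `r_i` for `i ∈ J`. -/
def ring (J : Finset (ZMod t)) : (SGraph t I).Subgraph where
  verts := Set.range inl ∪ inr '' {r : {i : ZMod t // i ∈ I} | r.val ∈ J}
  Adj := CAdj J
  adj_sub := by
    rintro (i | r) (j | s) h
    · obtain ⟨hne, h | h⟩ := h
      · exact adj_inl_inl.2 ⟨hne, Or.inl h.1⟩
      · exact adj_inl_inl.2 ⟨hne, Or.inr h.1⟩
    · exact adj_inl_inr.2 h.2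
    · exact adj_inr_inl.2 h.2
    · exact h.elim
  edge_vert := by
    rintro (i | r) (j | s) h
    · exact Or.inl ⟨i, rfl⟩
    · exact Or.inl ⟨i, rfl⟩
    · exact Or.inr ⟨r, h.1, rfl⟩
    · exact h.elim
  symm := by
    constructor
    rintro (i | r) (j | s) h
    · exact ⟨h.1.symm, h.2.symm⟩
    · exact h
    · exact h
    · exact h.elim

lemma ring_verts (J : Finset (ZMod t)) :
    (ring (I := I) J).verts
      = Set.range inl ∪ inr '' {r : {i : ZMod t // i ∈ I} | r.val ∈ J} := rfl

@[simp] lemma ring_adj_inl_inl {J : Finset (ZMod t)} {i j : ZMod t} :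
    (ring (I := I) J).Adj (inl i) (inl j)
      ↔ i ≠ j ∧ ((j = i + 1 ∧ i ∉ J) ∨ (i = j + 1 ∧ j ∉ J)) := Iff.rfl

@[simp] lemma ring_adj_inl_inr {J : Finset (ZMod t)} {i : ZMod t} {r} :
    (ring (I := I) J).Adj (inl i) (inr r) ↔ r.val ∈ J ∧ (i = r.val ∨ i = r.val + 1) := Iff.rfl

@[simp] lemma ring_adj_inr_inl {J : Finset (ZMod t)} {i : ZMod t} {r} :
    (ring (I := I) J).Adj (inr r) (inl i) ↔ r.val ∈ J ∧ (i = r.val ∨ i = r.val + 1) := Iff.rfl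

@[simp] lemma ring_adj_inr_inr {J : Finset (ZMod t)} {r s} :
    ¬ (ring (I := I) J).Adj (inr r) (inr s) := fun h => h


section Tri
variable (ht : 3 ≤ t)

lemma tri_verts {i : ZMod t} (hi : i ∈ I) :
    (tri (I := I) i).verts = {inl i, inl (i+1), inr ⟨i, hi⟩} := by
  show ({inl i, inl (i+1)} ∪ inr '' {r : {i : ZMod t // i ∈ I} | r.val = i} : Set _) = _
  ext x
  constructor
  · rintro ((h | h) | ⟨r, hr, rfl⟩)
    · exact Or.inl h
    · exact Or.inr (Or.inl h)
    · refine Or.inr (Or.inr ?_)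
      simp only [Set.mem_singleton_iff, inr.injEq]
      exact Subtype.ext hr
  · rintro (h | h | h)
    · exact Or.inl (Or.inl h)
    · exact Or.inl (Or.inr h)
    · exact Or.inr ⟨⟨i, hi⟩, rfl, h.symm⟩

lemma tri_adj {i : ZMod t} {x y} :
    (tri (I := I) i).Adj x y ↔ x ∈ (tri (I := I) i).verts ∧ y ∈ (tri (I := I) i).verts ∧
      (SGraph t I).Adj x y := by
  constructor
  · intro h
    exact ⟨h.fst_mem, h.snd_mem, h.adj_sub⟩
  · rintro ⟨hx, hy, h⟩
    exact ⟨hx, hy, h⟩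

include ht

lemma tri_pair_adj {i : ZMod t} (hi : i ∈ I) :
    ∀ x ∈ (tri (I := I) i).verts, ∀ y ∈ (tri (I := I) i).verts, x ≠ y →
      (SGraph t I).Adj x y := by
  have hne : i ≠ i + 1 := fun h => succ_ne ht i h.symm
  intro x hx y hy hxy
  rw [tri_verts hi] at hx hy
  rcases hx with rfl | rfl | rfl <;> rcases hy with rfl | rfl | rfl <;>
    first
      | exact absurd rfl hxy
      | exact adj_inl_inl.2 ⟨hne, Or.inl rfl⟩
      | exact adj_inl_inl.2 ⟨fun h => hne h.symm, Or.inr rfl⟩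
      | exact adj_inl_inr.2 (Or.inl rfl)
      | exact adj_inl_inr.2 (Or.inr rfl)
      | exact adj_inr_inl.2 (Or.inl rfl)
      | exact adj_inr_inl.2 (Or.inr rfl)

lemma tri_nb {i : ZMod t} (hi : i ∈ I) {v} (hv : v ∈ (tri (I := I) i).verts) :
    (tri (I := I) i).neighborSet v = (tri (I := I) i).verts \ {v} := by
  ext x
  simp only [SimpleGraph.Subgraph.mem_neighborSet, Set.mem_diff, Set.mem_singleton_iff]
  constructor
  · intro h
    exact ⟨h.snd_mem, fun hx => (h.adj_sub.ne (hx ▸ rfl)).elim⟩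
  · rintro ⟨hx, hne⟩
    exact tri_adj.2 ⟨hv, hx, tri_pair_adj ht hi v hv x hx (Ne.symm hne)⟩

lemma tri_verts_ncard {i : ZMod t} (hi : i ∈ I) : (tri (I := I) i).verts.ncard = 3 := by
  rw [tri_verts hi]
  have h1 : (inl i : ZMod t ⊕ {i : ZMod t // i ∈ I}) ≠ inl (i+1) := by
    simp only [ne_eq, inl.injEq]; exact fun h => succ_ne ht i h.symm
  have h2 : (inl i : ZMod t ⊕ {i : ZMod t // i ∈ I}) ≠ inr ⟨i, hi⟩ := by simp
  have h3 : (inl (i+1) : ZMod t ⊕ {i : ZMod t // i ∈ I}) ≠ inr ⟨i, hi⟩ := by simp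
  rw [Set.ncard_insert_of_notMem (by simp [h1, h2]) (Set.toFinite _),
    Set.ncard_insert_of_notMem (by simp [h3]) (Set.toFinite _), Set.ncard_singleton]

lemma tri_isCycle {i : ZMod t} (hi : i ∈ I) : (tri (I := I) i).IsCycleSub := by
  have hmem : inl i ∈ (tri (I := I) i).verts := by rw [tri_verts hi]; exact Or.inl rfl
  refine ⟨⟨inl i, hmem⟩, ?_, ?_⟩
  · haveI : Nonempty ((tri (I := I) i).verts) := ⟨⟨inl i, hmem⟩⟩
    refine ⟨fun u v => ?_⟩
    by_cases h : (u : ZMod t ⊕ {i : ZMod t // i ∈ I}) = (v : _ ⊕ _)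
    · exact (Subtype.ext h) ▸ SimpleGraph.Reachable.refl u
    · refine SimpleGraph.Adj.reachable ?_
      exact tri_adj.2 ⟨u.2, v.2, tri_pair_adj ht hi _ u.2 _ v.2 h⟩
  · intro v hv
    haveI : NeZero t := ⟨by omega⟩
    rw [tri_nb ht hi hv]
    have : ((tri (I := I) i).verts \ {v}).ncard = (tri (I := I) i).verts.ncard - 1 := by
      rw [Set.ncard_diff_singleton_of_mem hv]
    rw [this, tri_verts_ncard ht hi]

end Tri


section Ring
variable {J : Finset (ZMod t)}

lemma inl_mem_ring (i : ZMod t) : inl i ∈ (ring (I := I) J).verts := Or.inl ⟨i, rfl⟩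

lemma inr_mem_ring_iff {r : {i : ZMod t // i ∈ I}} :
    inr r ∈ (ring (I := I) J).verts ↔ r.val ∈ J := by
  constructor
  · rintro (⟨i, h⟩ | ⟨s, hs, h⟩)
    · exact absurd h (by simp)
    · obtain rfl : s = r := by simpa using h
      exact hs
  · intro h; exact Or.inr ⟨r, h, rfl⟩

lemma ring_nb_inr {r : {i : ZMod t // i ∈ I}} (hr : r.val ∈ J) :
    (ring (I := I) J).neighborSet (inr r) = {inl r.val, inl (r.val + 1)} := by
  ext x
  rcases x with i | s
  · simp only [SimpleGraph.Subgraph.mem_neighborSet, ring_adj_inr_inl,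
      Set.mem_insert_iff, Set.mem_singleton_iff, inl.injEq]
    tauto
  · simp only [SimpleGraph.Subgraph.mem_neighborSet, Set.mem_insert_iff,
      Set.mem_singleton_iff]
    constructor
    · exact fun h => absurd h (ring_adj_inr_inr)
    · rintro (h | h) <;> exact absurd h (by simp)

lemma eq_sub_one_iff {i j : ZMod t} : i = j + 1 ↔ j = i - 1 := by
  rw [eq_sub_iff_add_eq, eq_comm]

lemma inl_mem_nb_inl (ht : 3 ≤ t) {i j : ZMod t} :
    inl j ∈ (ring (I := I) J).neighborSet (inl i)
      ↔ (j = i + 1 ∧ i ∉ J) ∨ (j = i - 1 ∧ i - 1 ∉ J) := by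
  simp only [SimpleGraph.Subgraph.mem_neighborSet, ring_adj_inl_inl]
  constructor
  · rintro ⟨hne, ⟨rfl, h⟩ | ⟨h', h⟩⟩
    · exact Or.inl ⟨rfl, h⟩
    · have hj : j = i - 1 := by linear_combination -h'
      exact Or.inr ⟨hj, hj ▸ h⟩
  · rintro (⟨rfl, h⟩ | ⟨rfl, h⟩)
    · exact ⟨fun e => succ_ne ht i e.symm, Or.inl ⟨rfl, h⟩⟩
    · exact ⟨fun e => sub_one_ne ht i e.symm, Or.inr ⟨by ring, h⟩⟩

lemma inr_mem_nb_inl {i : ZMod t} {s : {i : ZMod t // i ∈ I}} :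
    inr s ∈ (ring (I := I) J).neighborSet (inl i)
      ↔ s.val ∈ J ∧ (s.val = i ∨ s.val = i - 1) := by
  simp only [SimpleGraph.Subgraph.mem_neighborSet, ring_adj_inl_inr]
  constructor
  · rintro ⟨hs, h | h⟩
    · exact ⟨hs, Or.inl h.symm⟩
    · exact ⟨hs, Or.inr (by linear_combination -h)⟩
  · rintro ⟨hs, h | h⟩
    · exact ⟨hs, Or.inl h.symm⟩
    · exact ⟨hs, Or.inr (by linear_combination -h)⟩

lemma ring_nb_inl (ht : 3 ≤ t) (hJ : J ⊆ I) (i : ZMod t) :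
    (ring (I := I) J).neighborSet (inl i)
      = (if h : i ∈ J then {inr ⟨i, hJ h⟩} else {inl (i+1)})
        ∪ (if h : i - 1 ∈ J then {inr ⟨i-1, hJ h⟩} else {inl (i-1)}) := by
  ext x
  rcases x with j | s
  · rw [inl_mem_nb_inl ht]
    split_ifs with h1 h2 h2 <;>
      simp only [Set.mem_union, Set.mem_singleton_iff, inl.injEq, reduceCtorEq,
        or_false, false_or, h1, h2, not_true_eq_false, not_false_eq_true,
        and_true, and_false, false_or, or_false] <;> tauto
  · rw [inr_mem_nb_inl]
    split_ifs with h1 h2 h2 <;>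
      simp only [Set.mem_union, Set.mem_singleton_iff, inr.injEq, reduceCtorEq,
        Subtype.ext_iff, or_false, false_or]
    · constructor
      · rintro ⟨hs, h⟩; exact h
      · rintro (h | h)
        · exact ⟨h ▸ h1, Or.inl h⟩
        · exact ⟨h ▸ h2, Or.inr h⟩
    · constructor
      · rintro ⟨hs, h | h⟩
        · exact h
        · exact absurd (h ▸ hs) h2
      · intro h; exact ⟨h ▸ h1, Or.inl h⟩
    · constructor
      · rintro ⟨hs, h | h⟩
        · exact absurd (h ▸ hs) h1
        · exact h
      · intro h; exact ⟨h ▸ h2, Or.inr h⟩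
    · constructor
      · rintro ⟨hs, h | h⟩
        · exact absurd (h ▸ hs) h1
        · exact absurd (h ▸ hs) h2
      · rintro (h | h) <;> exact absurd h (by simp)

lemma ring_deg_inl (ht : 3 ≤ t) (hJ : J ⊆ I) (i : ZMod t) :
    ((ring (I := I) J).neighborSet (inl i)).ncard = 2 := by
  rw [ring_nb_inl ht hJ i]
  split_ifs with h1 h2 h2 <;> rw [Set.singleton_union] <;> apply Set.ncard_pair
  · simp only [ne_eq, inr.injEq, Subtype.ext_iff]
    exact fun e => sub_one_ne ht i e.symm
  · simp
  · simp
  · simp only [ne_eq, inl.injEq]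
    exact fun e => sub_one_ne_add_one ht i e.symm

lemma ring_deg_inr (ht : 3 ≤ t) {r : {i : ZMod t // i ∈ I}} (hr : r.val ∈ J) :
    ((ring (I := I) J).neighborSet (inr r)).ncard = 2 := by
  rw [ring_nb_inr hr]
  apply Set.ncard_pair
  simp only [ne_eq, inl.injEq]
  exact fun e => succ_ne ht r.val e.symm

lemma ring_reach_step (ht : 3 ≤ t) (hJ : J ⊆ I) (i : ZMod t) :
    (ring (I := I) J).coe.Reachable ⟨inl i, inl_mem_ring i⟩ ⟨inl (i+1), inl_mem_ring _⟩ := by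
  by_cases h : i ∈ J
  · have h1 : (ring (I := I) J).Adj (inl i) (inr ⟨i, hJ h⟩) := ⟨h, Or.inl rfl⟩
    have h2 : (ring (I := I) J).Adj (inr ⟨i, hJ h⟩) (inl (i+1)) := ⟨h, Or.inr rfl⟩
    have hm : inr (⟨i, hJ h⟩ : {i : ZMod t // i ∈ I}) ∈ (ring (I := I) J).verts :=
      inr_mem_ring_iff.2 h
    exact (SimpleGraph.Adj.reachable (by exact h1 :
        (ring (I := I) J).coe.Adj ⟨inl i, _⟩ ⟨inr ⟨i, hJ h⟩, hm⟩)).trans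
      (SimpleGraph.Adj.reachable (by exact h2))
  · have h1 : (ring (I := I) J).Adj (inl i) (inl (i+1)) :=
      ⟨fun e => succ_ne ht i e.symm, Or.inl ⟨rfl, h⟩⟩
    exact SimpleGraph.Adj.reachable (by exact h1)

lemma ring_connected (ht : 3 ≤ t) (hJ : J ⊆ I) : (ring (I := I) J).coe.Connected := by
  haveI : NeZero t := ⟨by omega⟩
  haveI : Nonempty ((ring (I := I) J).verts) := ⟨⟨inl 0, inl_mem_ring 0⟩⟩
  have key : ∀ n : ℕ, (ring (I := I) J).coe.Reachable
      ⟨inl 0, inl_mem_ring 0⟩ ⟨inl (n : ZMod t), inl_mem_ring _⟩ := by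
    intro n
    induction n with
    | zero =>
        simp only [Nat.cast_zero]
        exact SimpleGraph.Reachable.refl _
    | succ n ih =>
        have : ((n+1 : ℕ) : ZMod t) = (n : ZMod t) + 1 := by push_cast; ring
        rw [this]
        exact ih.trans (ring_reach_step ht hJ _)
  have key' : ∀ i : ZMod t, (ring (I := I) J).coe.Reachable
      ⟨inl 0, inl_mem_ring 0⟩ ⟨inl i, inl_mem_ring i⟩ := by
    intro i
    obtain ⟨n, rfl⟩ : ∃ n : ℕ, ((n : ℕ) : ZMod t) = i := ⟨i.val, ZMod.natCast_rightInverse i⟩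
    exact key n
  have key2 : ∀ u : (ring (I := I) J).verts,
      (ring (I := I) J).coe.Reachable ⟨inl 0, inl_mem_ring 0⟩ u := by
    rintro ⟨x, hx⟩
    rcases x with i | r
    · exact key' i
    · have hr : r.val ∈ J := inr_mem_ring_iff.1 hx
      have h1 : (ring (I := I) J).Adj (inl r.val) (inr r) := ⟨hr, Or.inl rfl⟩
      exact (key' r.val).trans
        (SimpleGraph.Adj.reachable (by exact h1 :
          (ring (I := I) J).coe.Adj ⟨inl r.val, inl_mem_ring _⟩ ⟨inr r, hx⟩))
  exact ⟨fun u v => (key2 u).symm.trans (key2 v)⟩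

lemma ring_isCycle (ht : 3 ≤ t) (hJ : J ⊆ I) : (ring (I := I) J).IsCycleSub := by
  refine ⟨⟨inl 0, inl_mem_ring 0⟩, ring_connected ht hJ, ?_⟩
  rintro (i | r) hv
  · exact ring_deg_inl ht hJ i
  · exact ring_deg_inr ht (inr_mem_ring_iff.1 hv)

lemma ring_verts_ncard (ht : 3 ≤ t) (hJ : J ⊆ I) :
    (ring (I := I) J).verts.ncard = t + J.card := by
  haveI : NeZero t := ⟨by omega⟩
  rw [ring_verts]
  rw [Set.ncard_union_eq (by
      rw [Set.disjoint_left]; rintro x ⟨i, rfl⟩ ⟨r, _, h⟩; exact absurd h (by simp))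
    (Set.toFinite _) (Set.toFinite _)]
  congr 1
  · rw [← Set.image_univ, Set.ncard_image_of_injective _ inl_injective]
    simp [Set.ncard_univ, Nat.card_zmod]
  · rw [Set.ncard_image_of_injective _ inr_injective]
    have : Subtype.val '' {r : {i : ZMod t // i ∈ I} | r.val ∈ J} = (J : Set (ZMod t)) := by
      ext x
      simp only [Set.mem_image, Set.mem_setOf_eq, Finset.coe_sort_coe, Subtype.exists,
        exists_and_left, exists_prop, exists_eq_right_right, Finset.mem_coe]
      exact ⟨fun h => h.1, fun h => ⟨h, hJ h⟩⟩
    rw [← Set.ncard_image_of_injective _ Subtype.val_injective, this, Set.ncard_coe_finset]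

end Ring

section Classify
variable {H : (SGraph t I).Subgraph}

/-- The neighborhood of an `r`-vertex in any cycle subgraph. -/
lemma cyc_nb_inr (ht : 3 ≤ t) (hH : H.IsCycleSub) {r : {i : ZMod t // i ∈ I}}
    (hr : inr r ∈ H.verts) :
    H.neighborSet (inr r) = {inl r.val, inl (r.val + 1)} := by
  haveI : NeZero t := ⟨by omega⟩
  have hsub : H.neighborSet (inr r) ⊆ {inl r.val, inl (r.val + 1)} := by
    rintro (i | s) hx
    · rcases adj_inr_inl.1 hx.adj_sub with h | h
      · exact Or.inl (by simp [h])
      · exact Or.inr (by simp [h])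
    · exact absurd hx.adj_sub not_adj_inr_inr
  have hcard : ({inl r.val, inl (r.val + 1)} :
      Set (ZMod t ⊕ {i : ZMod t // i ∈ I})).ncard = 2 :=
    Set.ncard_pair (by simp only [ne_eq, inl.injEq]; exact fun e => succ_ne ht r.val e.symm)
  exact Set.eq_of_subset_of_ncard_le hsub (by rw [hcard, hH.2.2 _ hr]) (Set.toFinite _)

lemma cyc_adj_inr (ht : 3 ≤ t) (hH : H.IsCycleSub) {r : {i : ZMod t // i ∈ I}}
    (hr : inr r ∈ H.verts) :
    H.Adj (inr r) (inl r.val) ∧ H.Adj (inr r) (inl (r.val + 1)) := by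
  have h := cyc_nb_inr ht hH hr
  constructor
  · have : inl r.val ∈ H.neighborSet (inr r) := by rw [h]; exact Or.inl rfl
    exact this
  · have : inl (r.val + 1) ∈ H.neighborSet (inr r) := by rw [h]; exact Or.inr rfl
    exact this

/-- A nonempty "closed" subset of the vertices of a connected subgraph is everything. -/
lemma verts_eq_of_closed (hH : H.IsCycleSub) (S : Set (ZMod t ⊕ {i : ZMod t // i ∈ I}))
    (hSv : S ⊆ H.verts) (hcl : ∀ v ∈ S, H.neighborSet v ⊆ S) (hne : S.Nonempty) :
    H.verts = S := by
  refine Set.Subset.antisymm ?_ hSv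
  obtain ⟨v0, hv0⟩ := hne
  intro u hu
  have hreach : H.coe.Reachable ⟨v0, hSv hv0⟩ ⟨u, hu⟩ := hH.2.1.preconnected _ _
  obtain ⟨w⟩ := hreach
  have : ∀ (a b : H.verts), H.coe.Walk a b → (a : ZMod t ⊕ _) ∈ S →
      (b : ZMod t ⊕ _) ∈ S := by
    intro a b w
    induction w with
    | nil => exact id
    | cons h p ih =>
        intro ha
        refine ih ?_
        exact hcl _ ha h
  exact this _ _ w hv0

end Classify

section Classify2
variable {H : (SGraph t I).Subgraph}

lemma eq_tri (ht : 3 ≤ t) (hH : H.IsCycleSub) {a : ZMod t} (ha : a ∈ I)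
    (hr : inr ⟨a, ha⟩ ∈ H.verts) (h1 : H.Adj (inl a) (inl (a+1))) :
    H = tri a := by
  haveI : NeZero t := ⟨by omega⟩
  obtain ⟨e1, e2⟩ := cyc_adj_inr ht hH hr
  have hane : (inl a : ZMod t ⊕ {i : ZMod t // i ∈ I}) ≠ inl (a + 1) := by
    simp only [ne_eq, inl.injEq]; exact fun e => succ_ne ht a e.symm
  have hN1 : H.neighborSet (inl a) = {inl (a+1), inr ⟨a, ha⟩} := by
    refine (Set.eq_of_subset_of_ncard_le ?_ ?_ (Set.toFinite _)).symm
    · rintro x (rfl | rfl)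
      · exact h1
      · exact e1.symm
    · rw [hH.2.2 _ h1.fst_mem, Set.ncard_pair (by simp)]
  have hN2 : H.neighborSet (inl (a+1)) = {inl a, inr ⟨a, ha⟩} := by
    refine (Set.eq_of_subset_of_ncard_le ?_ ?_ (Set.toFinite _)).symm
    · rintro x (rfl | rfl)
      · exact h1.symm
      · exact e2.symm
    · rw [hH.2.2 _ h1.snd_mem, Set.ncard_pair (by simp)]
  have hN3 : H.neighborSet (inr ⟨a, ha⟩) = {inl a, inl (a+1)} := cyc_nb_inr ht hH hr
  have hS : H.verts = {inl a, inl (a+1), inr ⟨a, ha⟩} := by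
    refine verts_eq_of_closed hH _ ?_ ?_ ⟨inl a, Or.inl rfl⟩
    · rintro x (rfl | rfl | rfl)
      · exact h1.fst_mem
      · exact h1.snd_mem
      · exact hr
    · rintro x (rfl | rfl | rfl)
      · rw [hN1]; rintro y (rfl | rfl)
        · exact Or.inr (Or.inl rfl)
        · exact Or.inr (Or.inr rfl)
      · rw [hN2]; rintro y (rfl | rfl)
        · exact Or.inl rfl
        · exact Or.inr (Or.inr rfl)
      · rw [hN3]; rintro y (rfl | rfl)
        · exact Or.inl rfl
        · exact Or.inr (Or.inl rfl)
  apply SimpleGraph.Subgraph.ext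
  · rw [hS, tri_verts ha]
  · ext x y
    constructor
    · intro h
      refine tri_adj.2 ⟨?_, ?_, h.adj_sub⟩
      · rw [tri_verts ha, ← hS]; exact h.fst_mem
      · rw [tri_verts ha, ← hS]; exact h.snd_mem
    · intro h
      obtain ⟨hx, hy, hadj⟩ := tri_adj.1 h
      rw [tri_verts ha] at hx hy
      have hne := hadj.ne
      rcases hx with rfl | rfl | rfl <;> rcases hy with rfl | rfl | rfl <;>
        first
          | exact absurd rfl hne
          | exact h1
          | exact h1.symm
          | exact e1
          | exact e1.symm
          | exact e2
          | exact e2.symm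

lemma classify_partial (ht : 3 ≤ t) (hH : H.IsCycleSub)
    (hnot : ¬ ∀ i : ZMod t, inl i ∈ H.verts) :
    ∃ a ∈ I, H = tri a := by
  haveI : NeZero t := ⟨by omega⟩
  obtain ⟨i0, hi0⟩ := not_forall.1 hnot
  obtain ⟨v, hv⟩ := hH.1
  have hk : ∃ k, inl k ∈ H.verts := by
    rcases v with k | r
    · exact ⟨k, hv⟩
    · exact ⟨r.val, ((cyc_adj_inr ht hH hv).1).snd_mem⟩
  obtain ⟨k, hk⟩ := hk
  have hbd : ∃ m, inl m ∈ H.verts ∧ inl (m+1) ∉ H.verts := by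
    by_contra hb
    push_neg at hb
    have hall : ∀ n : ℕ, inl (k + (n : ZMod t)) ∈ H.verts := by
      intro n; induction n with
      | zero => simpa using hk
      | succ n ih =>
          have e : (k + ((n+1 : ℕ) : ZMod t)) = (k + (n : ZMod t)) + 1 := by push_cast; ring
          rw [e]; exact hb _ ih
    apply hi0
    have hcast : (((i0 - k).val : ℕ) : ZMod t) = i0 - k := ZMod.natCast_rightInverse (i0 - k)
    have e : k + (((i0 - k).val : ℕ) : ZMod t) = i0 := by rw [hcast]; ring
    have := hall (i0 - k).val
    rwa [e] at this
  obtain ⟨m, hm, hm1⟩ := hbd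
  have hsub : ∀ x ∈ H.neighborSet (inl m),
      x = inl (m-1) ∨ ∃ r : {i : ZMod t // i ∈ I}, x = inr r ∧ r.val = m - 1 := by
    rintro (j | r) hx
    · rcases adj_inl_inl.1 hx.adj_sub with ⟨hne, h | h⟩
      · exact absurd (h ▸ hx.snd_mem) hm1
      · left; rw [inl.injEq]; linear_combination -h
    · rcases adj_inl_inr.1 hx.adj_sub with h | h
      · exfalso
        have h2 := (cyc_adj_inr ht hH hx.snd_mem).2.snd_mem
        rw [← h] at h2; exact hm1 h2
      · exact Or.inr ⟨r, rfl, by linear_combination -h⟩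
  have hmI : m - 1 ∈ I := by
    by_contra hno
    have hsub' : H.neighborSet (inl m) ⊆ {inl (m-1)} := by
      intro x hx
      rcases hsub x hx with h | ⟨r, rfl, hr⟩
      · exact h
      · exact absurd (hr ▸ r.2) hno
    have hle := Set.ncard_le_ncard hsub' (Set.toFinite _)
    rw [hH.2.2 _ hm, Set.ncard_singleton] at hle; omega
  have hNsub : H.neighborSet (inl m) ⊆ {inl (m-1), inr ⟨m-1, hmI⟩} := by
    intro x hx
    rcases hsub x hx with h | ⟨r, rfl, hr⟩
    · exact Or.inl h
    · refine Or.inr ?_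
      simp only [Set.mem_singleton_iff, inr.injEq]
      exact Subtype.ext hr
  have hN : H.neighborSet (inl m) = {inl (m-1), inr ⟨m-1, hmI⟩} :=
    Set.eq_of_subset_of_ncard_le hNsub
      (le_of_eq (by rw [Set.ncard_pair (by simp), hH.2.2 _ hm])) (Set.toFinite _)
  have hadj1 : H.Adj (inl m) (inl (m-1)) := by
    have : inl (m-1) ∈ H.neighborSet (inl m) := by rw [hN]; exact Or.inl rfl
    exact this
  have hadj2 : H.Adj (inl m) (inr ⟨m-1, hmI⟩) := by
    have : inr ⟨m-1, hmI⟩ ∈ H.neighborSet (inl m) := by rw [hN]; exact Or.inr rfl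
    exact this
  refine ⟨m - 1, hmI, ?_⟩
  have h1 : H.Adj (inl (m-1)) (inl ((m-1)+1)) := by
    rw [sub_add_cancel]; exact hadj1.symm
  exact eq_tri ht hH hmI hadj2.snd_mem h1

end Classify2

section Classify3
variable {H : (SGraph t I).Subgraph}

lemma notboth (ht : 3 ≤ t) (hH : H.IsCycleSub) {i : ZMod t}
    (ha : H.Adj (inl i) (inl (i+1))) (hb : ∃ hr : i ∈ I, inr ⟨i, hr⟩ ∈ H.verts)
    (hall : ∀ j : ZMod t, inl j ∈ H.verts) : False := by
  obtain ⟨hi, hbv⟩ := hb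
  have hEq := eq_tri ht hH hi hbv ha
  have h2 := hall (i+2)
  rw [hEq, tri_verts hi] at h2
  rcases h2 with h | h | h
  · exact add_two_ne ht i (by simpa using h)
  · rw [inl.injEq] at h
    exact one_ne ht (by linear_combination h)
  · exact absurd h (by simp)

lemma atleast (ht : 3 ≤ t) (hH : H.IsCycleSub) (hall : ∀ j : ZMod t, inl j ∈ H.verts)
    (i : ZMod t) :
    H.Adj (inl i) (inl (i+1)) ∨ ∃ hr : i ∈ I, inr ⟨i, hr⟩ ∈ H.verts := by
  haveI : NeZero t := ⟨by omega⟩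
  by_contra hcon
  push_neg at hcon
  obtain ⟨hna, hnb⟩ := hcon
  have hdeg : (H.neighborSet (inl (i+1))).ncard = 2 := hH.2.2 _ (hall (i+1))
  have hnbI : ∀ r : {i : ZMod t // i ∈ I}, r.val = i → inr r ∉ H.verts := by
    intro r hr hv
    subst hr
    exact hnb r.2 hv
  by_cases hb1 : ∃ hr : i + 1 ∈ I, inr ⟨i+1, hr⟩ ∈ H.verts
  · have hna1 : ¬ H.Adj (inl (i+1)) (inl ((i+1)+1)) := fun ha1 =>
      notboth ht hH ha1 hb1 hall
    obtain ⟨hI1, _⟩ := hb1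
    have hsub : H.neighborSet (inl (i+1)) ⊆ {inr ⟨i+1, hI1⟩} := by
      rintro (j | r) hx
      · exfalso
        rcases adj_inl_inl.1 hx.adj_sub with ⟨hne, h | h⟩
        · rw [h] at hx; exact hna1 hx
        · have hj : j = i := by linear_combination -h
          rw [hj] at hx
          exact hna hx.symm
      · rcases adj_inl_inr.1 hx.adj_sub with h | h
        · simp only [Set.mem_singleton_iff, inr.injEq]
          exact Subtype.ext h.symm
        · exfalso
          have hr : r.val = i := by linear_combination -h
          exact hnbI r hr hx.snd_mem
    have hle := Set.ncard_le_ncard hsub (Set.toFinite _)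
    rw [hdeg, Set.ncard_singleton] at hle; omega
  · have hsub : H.neighborSet (inl (i+1)) ⊆ {inl ((i+1)+1)} := by
      rintro (j | r) hx
      · rcases adj_inl_inl.1 hx.adj_sub with ⟨hne, h | h⟩
        · exact h ▸ rfl
        · exfalso
          have hj : j = i := by linear_combination -h
          rw [hj] at hx
          exact hna hx.symm
      · exfalso
        rcases adj_inl_inr.1 hx.adj_sub with h | h
        · refine hb1 ⟨h.symm ▸ r.2, ?_⟩
          have he : (⟨i+1, h.symm ▸ r.2⟩ : {i : ZMod t // i ∈ I}) = r := Subtype.ext h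
          rw [he]; exact hx.snd_mem
        · have hr : r.val = i := by linear_combination -h
          exact hnbI r hr hx.snd_mem
    have hle := Set.ncard_le_ncard hsub (Set.toFinite _)
    rw [hdeg, Set.ncard_singleton] at hle; omega

lemma classify_full (ht : 3 ≤ t) (hH : H.IsCycleSub)
    (hall : ∀ j : ZMod t, inl j ∈ H.verts) :
    ∃ J : Finset (ZMod t), J ⊆ I ∧ H = ring J := by
  haveI : NeZero t := ⟨by omega⟩
  set P : ZMod t → Prop := fun j => ∃ hr : j ∈ I, inr ⟨j, hr⟩ ∈ H.verts with hP
  set J : Finset (ZMod t) := (Set.toFinite {j | P j}).toFinset with hJ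
  have hmem : ∀ j, j ∈ J ↔ P j := by intro j; rw [hJ, Set.Finite.mem_toFinset]; rfl
  have hJI : J ⊆ I := by
    intro j hj; exact ((hmem j).1 hj).1
  have hPr : ∀ r : {i : ZMod t // i ∈ I}, inr r ∈ H.verts ↔ r.val ∈ J := by
    intro r
    rw [hmem]
    constructor
    · intro h; exact ⟨r.2, h⟩
    · rintro ⟨hr, h⟩; exact h
  refine ⟨J, hJI, ?_⟩
  apply SimpleGraph.Subgraph.ext
  · ext x
    rcases x with i | r
    · simp only [ring_verts, Set.mem_union, Set.mem_range]
      exact ⟨fun _ => Or.inl ⟨i, rfl⟩, fun _ => hall i⟩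
    · rw [show (ring (I := I) J).verts = _ from rfl] at *
      constructor
      · intro h; exact inr_mem_ring_iff.2 ((hPr r).1 h)
      · intro h; exact (hPr r).2 (inr_mem_ring_iff.1 h)
  · ext x y
    constructor
    · intro h
      rcases x with i | r <;> rcases y with j | s
      · rcases adj_inl_inl.1 h.adj_sub with ⟨hne, hor⟩
        refine ring_adj_inl_inl.2 ⟨hne, ?_⟩
        rcases hor with rfl | rfl
        · refine Or.inl ⟨rfl, fun hiJ => ?_⟩
          exact notboth ht hH h ((hmem i).1 hiJ) hall
        · refine Or.inr ⟨rfl, fun hjJ => ?_⟩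
          exact notboth ht hH h.symm ((hmem j).1 hjJ) hall
      · exact ring_adj_inl_inr.2 ⟨(hPr s).1 h.snd_mem, adj_inl_inr.1 h.adj_sub⟩
      · exact ring_adj_inr_inl.2 ⟨(hPr r).1 h.fst_mem, adj_inr_inl.1 h.adj_sub⟩
      · exact absurd h.adj_sub not_adj_inr_inr
    · intro h
      rcases x with i | r <;> rcases y with j | s
      · rcases ring_adj_inl_inl.1 h with ⟨hne, ⟨rfl, hiJ⟩ | ⟨hij, hjJ⟩⟩
        · rcases atleast ht hH hall i with ha | hb
          · exact ha
          · exact absurd ((hmem i).2 hb) hiJ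
        · subst hij
          rcases atleast ht hH hall j with ha | hb
          · exact ha.symm
          · exact absurd ((hmem j).2 hb) hjJ
      · obtain ⟨hsJ, hor⟩ := ring_adj_inl_inr.1 h
        have hsv : inr s ∈ H.verts := (hPr s).2 hsJ
        obtain ⟨e1, e2⟩ := cyc_adj_inr ht hH hsv
        rcases hor with rfl | rfl
        · exact e1.symm
        · exact e2.symm
      · obtain ⟨hrJ, hor⟩ := ring_adj_inr_inl.1 h
        have hrv : inr r ∈ H.verts := (hPr r).2 hrJ
        obtain ⟨e1, e2⟩ := cyc_adj_inr ht hH hrv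
        rcases hor with rfl | rfl
        · exact e1
        · exact e2
      · exact absurd h ring_adj_inr_inr

lemma classify (ht : 3 ≤ t) (hH : H.IsCycleSub) :
    (∃ a ∈ I, H = tri a) ∨ ∃ J : Finset (ZMod t), J ⊆ I ∧ H = ring J := by
  by_cases hall : ∀ j : ZMod t, inl j ∈ H.verts
  · exact Or.inr (classify_full ht hH hall)
  · exact Or.inl (classify_partial ht hH hall)

end Classify3

section Count

lemma tri_inj (ht : 3 ≤ t) {i j : ZMod t} (hi : i ∈ I) (hj : j ∈ I)
    (h : tri (I := I) i = tri (I := I) j) : i = j := by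
  have hm : inr ⟨i, hi⟩ ∈ (tri (I := I) i).verts := by
    rw [tri_verts hi]; exact Or.inr (Or.inr rfl)
  rw [h, tri_verts hj] at hm
  rcases hm with hm | hm | hm
  · exact absurd hm (by simp)
  · exact absurd hm (by simp)
  · rw [Set.mem_singleton_iff, inr.injEq] at hm
    exact congrArg Subtype.val hm

lemma ring_inj {J J' : Finset (ZMod t)} (hJ : J ⊆ I) (hJ' : J' ⊆ I)
    (h : ring (I := I) J = ring (I := I) J') : J = J' := by
  ext j
  constructor
  · intro hjJ
    have : inr (⟨j, hJ hjJ⟩ : {i : ZMod t // i ∈ I}) ∈ (ring (I := I) J).verts :=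
      inr_mem_ring_iff.2 hjJ
    rw [h] at this
    exact inr_mem_ring_iff.1 this
  · intro hjJ
    have : inr (⟨j, hJ' hjJ⟩ : {i : ZMod t // i ∈ I}) ∈ (ring (I := I) J').verts :=
      inr_mem_ring_iff.2 hjJ
    rw [← h] at this
    exact inr_mem_ring_iff.1 this

lemma tri_ne_ring (ht : 3 ≤ t) {i : ZMod t} (hi : i ∈ I) {J : Finset (ZMod t)} :
    tri (I := I) i ≠ ring (I := I) J := by
  intro h
  have hm : inl (i + 2) ∈ (ring (I := I) J).verts := inl_mem_ring _
  rw [← h, tri_verts hi] at hm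
  rcases hm with hm | hm | hm
  · rw [inl.injEq] at hm
    exact add_two_ne ht i hm
  · rw [inl.injEq] at hm
    exact one_ne ht (by linear_combination hm)
  · exact absurd hm (by simp)

lemma parity_count {α : Type*} [DecidableEq α] {S : Finset α} (hS : S.Nonempty) :
    (S.powerset.filter fun J => Even J.card).card = 2 ^ (S.card - 1) ∧
    (S.powerset.filter fun J => ¬ Even J.card).card = 2 ^ (S.card - 1) := by
  obtain ⟨a, ha⟩ := hS
  set f : Finset α → Finset α := fun J => if a ∈ J then J.erase a else insert a J with hf
  have hmapsto : ∀ J ∈ S.powerset, f J ∈ S.powerset := by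
    intro J hJ
    rw [Finset.mem_powerset] at hJ ⊢
    simp only [hf]
    split_ifs with h
    · exact (Finset.erase_subset _ _).trans hJ
    · exact Finset.insert_subset ha hJ
  have hinvol : ∀ J ∈ S.powerset, f (f J) = J := by
    intro J _
    simp only [hf]
    by_cases h : a ∈ J
    · simp only [h, if_pos, Finset.mem_erase, ne_eq, not_true_eq_false, false_and, if_neg,
        not_false_eq_true]
      exact Finset.insert_erase h
    · simp only [h, if_neg, not_false_eq_true, Finset.mem_insert, true_or, if_pos]
      exact Finset.erase_insert h
  have hflip : ∀ J : Finset α, Even (f J).card ↔ ¬ Even J.card := by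
    intro J
    simp only [hf]
    by_cases h : a ∈ J
    · rw [if_pos h]
      have h1 : 1 ≤ J.card := Finset.card_pos.2 ⟨a, h⟩
      have : J.card = (J.erase a).card + 1 := by
        rw [Finset.card_erase_of_mem h]; omega
      rw [this, Nat.even_add_one, not_not]
    · rw [if_neg h, Finset.card_insert_of_notMem h, Nat.even_add_one]
  have hcardeq : (S.powerset.filter fun J => Even J.card).card
      = (S.powerset.filter fun J => ¬ Even J.card).card := by
    apply Finset.card_bij' (fun J _ => f J) (fun J _ => f J)
    · intro J hJ
      rw [Finset.mem_filter] at hJ ⊢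
      exact ⟨hmapsto J hJ.1, fun he => (hflip J).1 he hJ.2⟩
    · intro J hJ
      rw [Finset.mem_filter] at hJ ⊢
      refine ⟨hmapsto J hJ.1, ?_⟩
      rw [hflip J]
      exact hJ.2
    · intro J hJ
      exact hinvol J (Finset.mem_filter.1 hJ).1
    · intro J hJ
      exact hinvol J (Finset.mem_filter.1 hJ).1
  have hsum : (S.powerset.filter fun J => Even J.card).card
      + (S.powerset.filter fun J => ¬ Even J.card).card = 2 ^ S.card := by
    rw [Finset.card_filter_add_card_filter_not, Finset.card_powerset]
  have hs1 : 1 ≤ S.card := Finset.card_pos.2 ⟨a, ha⟩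
  have hpow : 2 ^ S.card = 2 * 2 ^ (S.card - 1) := by
    rw [← pow_succ']
    congr 1
    omega
  constructor <;> omega

end Count

section Final

lemma count_cycles (ht : 3 ≤ t) (p : ℕ → Prop) [DecidablePred p] :
    {H : (SGraph t I).Subgraph | H.IsCycleSub ∧ p H.verts.ncard}.ncard
      = (if p 3 then I.card else 0)
        + (I.powerset.filter fun J => p (t + J.card)).card := by
  haveI : NeZero t := ⟨by omega⟩
  by_cases hp3 : p 3
  · have hset : {H : (SGraph t I).Subgraph | H.IsCycleSub ∧ p H.verts.ncard}
        = (fun a => tri (I := I) a) '' ↑I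
          ∪ (fun J => ring (I := I) J) '' ↑(I.powerset.filter fun J => p (t + J.card)) := by
      ext H
      simp only [Set.mem_setOf_eq, Set.mem_union, Set.mem_image, Finset.mem_coe,
        Finset.mem_filter, Finset.mem_powerset]
      constructor
      · rintro ⟨hcyc, hp⟩
        rcases classify ht hcyc with ⟨a, ha, rfl⟩ | ⟨J, hJ, rfl⟩
        · exact Or.inl ⟨a, ha, rfl⟩
        · refine Or.inr ⟨J, ⟨hJ, ?_⟩, rfl⟩
          rwa [ring_verts_ncard ht hJ] at hp
      · rintro (⟨a, ha, rfl⟩ | ⟨J, ⟨hJ, hpar⟩, rfl⟩)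
        · exact ⟨tri_isCycle ht ha, by rwa [tri_verts_ncard ht ha]⟩
        · exact ⟨ring_isCycle ht hJ, by rwa [ring_verts_ncard ht hJ]⟩
    rw [hset, if_pos hp3,
      Set.ncard_union_eq
        (Set.disjoint_left.2 (by
          rintro x ⟨a, ha, rfl⟩ ⟨J, hJ, hEq⟩
          exact tri_ne_ring ht ha hEq.symm))
        ((Finset.finite_toSet I).image _)
        ((Finset.finite_toSet _).image _)]
    congr 1
    · exact (Set.ncard_image_of_injOn
        (fun a ha b hb hab => tri_inj ht ha hb hab)).trans (Set.ncard_coe_finset _)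
    · exact (Set.ncard_image_of_injOn (fun J hJ J' hJ' h =>
        ring_inj (Finset.mem_powerset.1 (Finset.mem_filter.1 hJ).1)
          (Finset.mem_powerset.1 (Finset.mem_filter.1 hJ').1) h)).trans
        (Set.ncard_coe_finset _)
  · have hset : {H : (SGraph t I).Subgraph | H.IsCycleSub ∧ p H.verts.ncard}
        = (fun J => ring (I := I) J) '' ↑(I.powerset.filter fun J => p (t + J.card)) := by
      ext H
      simp only [Set.mem_setOf_eq, Set.mem_image, Finset.mem_coe,
        Finset.mem_filter, Finset.mem_powerset]
      constructor
      · rintro ⟨hcyc, hp⟩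
        rcases classify ht hcyc with ⟨a, ha, rfl⟩ | ⟨J, hJ, rfl⟩
        · rw [tri_verts_ncard ht ha] at hp
          exact absurd hp hp3
        · refine ⟨J, ⟨hJ, ?_⟩, rfl⟩
          rwa [ring_verts_ncard ht hJ] at hp
      · rintro ⟨J, ⟨hJ, hpar⟩, rfl⟩
        exact ⟨ring_isCycle ht hJ, by rwa [ring_verts_ncard ht hJ]⟩
    rw [hset, if_neg hp3, zero_add]
    exact (Set.ncard_image_of_injOn (fun J hJ J' hJ' h =>
        ring_inj (Finset.mem_powerset.1 (Finset.mem_filter.1 hJ).1)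
          (Finset.mem_powerset.1 (Finset.mem_filter.1 hJ').1) h)).trans
        (Set.ncard_coe_finset _)

lemma filter_parity_card (ht : 3 ≤ t) (hI : I.Nonempty) :
    (I.powerset.filter fun J => Odd (t + J.card)).card = 2 ^ (I.card - 1) ∧
    (I.powerset.filter fun J => Even (t + J.card)).card = 2 ^ (I.card - 1) := by
  obtain ⟨he, ho⟩ := parity_count hI
  rcases Nat.even_or_odd t with hte | hto
  · rw [Nat.even_iff] at hte
    constructor
    · rw [Finset.filter_congr (q := fun J => ¬ Even J.card)
        (fun J _ => by simp only [Nat.odd_iff, Nat.even_iff]; omega)]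
      exact ho
    · rw [Finset.filter_congr (q := fun J => Even J.card)
        (fun J _ => by simp only [Nat.even_iff]; omega)]
      exact he
  · rw [Nat.odd_iff] at hto
    constructor
    · rw [Finset.filter_congr (q := fun J => Even J.card)
        (fun J _ => by simp only [Nat.odd_iff, Nat.even_iff]; omega)]
      exact he
    · rw [Finset.filter_congr (q := fun J => ¬ Even J.card)
        (fun J _ => by simp only [Nat.even_iff]; omega)]
      exact ho

end Final
end SCount

theorem cOdd_cEven_SGraph (t : ℕ) (ht : 3 ≤ t) (I : Finset (ZMod t)) (hI : I.Nonempty) :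
    cOdd (SGraph t I) = 2 ^ (I.card - 1) + I.card ∧ cEven (SGraph t I) = 2 ^ (I.card - 1) := by
  obtain ⟨hodd, heven⟩ := SCount.filter_parity_card ht hI
  constructor
  · rw [cOdd, SCount.count_cycles ht Odd, if_pos (by exact ⟨1, rfl⟩), hodd]
    ring
  · rw [cEven, SCount.count_cycles ht Even, if_neg (by decide), zero_add, heven]
end

section
/- For the graphs S_t := S(t, {0,…,t−1}) (a t-cycle with a triangle attached along every edge), both real sequences t ↦ c_o(S_t)/c_e(S_t) and t ↦ c_e(S_t)/c_o(S_t) (t ≥ 3) converge to 1 as t → ∞. -/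
open SimpleGraph Filter

namespace SP

variable {t : ℕ} [NeZero t]

abbrev Vt (t : ℕ) [NeZero t] := ZMod t ⊕ {i : ZMod t // i ∈ (Finset.univ : Finset (ZMod t))}
abbrev Gt (t : ℕ) [NeZero t] : SimpleGraph (Vt t) := SGraph t Finset.univ

def vv (i : ZMod t) : Vt t := Sum.inl i
def rr (i : ZMod t) : Vt t := Sum.inr ⟨i, Finset.mem_univ i⟩

lemma inr_eq_rr (x : {i : ZMod t // i ∈ (Finset.univ : Finset (ZMod t))}) :
    (Sum.inr x : Vt t) = rr x.val := by
  cases x; rfl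

lemma vv_inj : Function.Injective (vv : ZMod t → Vt t) := fun a b h => Sum.inl.inj h

lemma rr_inj : Function.Injective (rr : ZMod t → Vt t) := by
  intro a b h
  simpa [rr] using h

@[simp] lemma vv_ne_rr (a b : ZMod t) : vv a ≠ rr b := by simp [vv, rr]
@[simp] lemma rr_ne_vv (a b : ZMod t) : rr a ≠ vv b := by simp [vv, rr]
@[simp] lemma vv_eq_vv {a b : ZMod t} : vv a = vv b ↔ a = b := by simp [vv]
@[simp] lemma rr_eq_rr {a b : ZMod t} : rr a = rr b ↔ a = b := by simp [rr]

section ht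
variable (ht : 5 ≤ t)
include ht

lemma one_ne_zero' : (1 : ZMod t) ≠ 0 := by
  have : ((1 : ℕ) : ZMod t) ≠ 0 := by
    rw [Ne, ZMod.natCast_eq_zero_iff]
    intro h
    have := Nat.le_of_dvd one_pos h
    omega
  simpa using this

lemma two_ne_zero' : (2 : ZMod t) ≠ 0 := by
  have : ((2 : ℕ) : ZMod t) ≠ 0 := by
    rw [Ne, ZMod.natCast_eq_zero_iff]
    intro h
    have := Nat.le_of_dvd two_pos h
    omega
  simpa using this

lemma add_one_ne (i : ZMod t) : i + 1 ≠ i := by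
  rw [Ne, add_eq_left]
  exact one_ne_zero' ht

lemma add_two_ne (i : ZMod t) : i + 1 + 1 ≠ i := by
  rw [add_assoc, Ne, add_eq_left]
  have := two_ne_zero' ht
  intro h
  apply this
  rw [← h]; ring

end ht

lemma adj_iff {x y : Vt t} : (Gt t).Adj x y ↔ x ≠ y ∧
    (((∃ i : ZMod t, x = Sum.inl i ∧ y = Sum.inl (i + 1)) ∨
      (∃ r, y = Sum.inr r ∧ (x = Sum.inl r.val ∨ x = Sum.inl (r.val + 1)))) ∨
     ((∃ i : ZMod t, y = Sum.inl i ∧ x = Sum.inl (i + 1)) ∨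
      (∃ r, x = Sum.inr r ∧ (y = Sum.inl r.val ∨ y = Sum.inl (r.val + 1))))) := by
  unfold Gt SGraph
  rw [SimpleGraph.fromRel_adj]

section adj
variable (ht : 5 ≤ t)
include ht

lemma adj_vv_vv {a b : ZMod t} : (Gt t).Adj (vv a) (vv b) ↔ b = a + 1 ∨ a = b + 1 := by
  rw [adj_iff]
  constructor
  · rintro ⟨hne, h⟩
    rcases h with (⟨i, h1, h2⟩ | ⟨r, h, -⟩) | (⟨i, h1, h2⟩ | ⟨r, h, -⟩)
    · simp only [vv, Sum.inl.injEq] at h1 h2; subst h1; left; exact h2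
    · exact absurd h (by simp [vv])
    · simp only [vv, Sum.inl.injEq] at h1 h2; subst h1; right; exact h2
    · exact absurd h (by simp [vv])
  · rintro (h | h)
    · subst h
      exact ⟨fun hc => add_one_ne ht a (by simpa using hc.symm), Or.inl (Or.inl ⟨a, rfl, rfl⟩)⟩
    · subst h
      exact ⟨fun hc => add_one_ne ht b (by simpa using hc), Or.inr (Or.inl ⟨b, rfl, rfl⟩)⟩

lemma adj_vv_rr {a b : ZMod t} : (Gt t).Adj (vv a) (rr b) ↔ a = b ∨ a = b + 1 := by
  rw [adj_iff]
  constructor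
  · rintro ⟨hne, h⟩
    rcases h with (⟨i, h1, h2⟩ | ⟨r, h, h'⟩) | (⟨i, h1, h2⟩ | ⟨r, h, h'⟩)
    · exact absurd h2 (by simp [vv, rr])
    · rw [inr_eq_rr, rr_eq_rr] at h
      subst h
      rcases h' with h' | h' <;> simp only [vv, Sum.inl.injEq] at h' <;> [left; right] <;> exact h'
    · exact absurd h1 (by simp [vv, rr])
    · exact absurd h (by simp [vv, rr])
  · rintro (h | h) <;> subst h
    · exact ⟨by simp, Or.inl (Or.inr ⟨⟨a, Finset.mem_univ a⟩, rfl, Or.inl rfl⟩)⟩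
    · exact ⟨by simp, Or.inl (Or.inr ⟨⟨b, Finset.mem_univ b⟩, rfl, Or.inr rfl⟩)⟩

lemma adj_rr_vv {a b : ZMod t} : (Gt t).Adj (rr a) (vv b) ↔ b = a ∨ b = a + 1 := by
  rw [(Gt t).adj_comm, adj_vv_rr ht]

end adj

lemma not_adj_rr_rr (a b : ZMod t) : ¬ (Gt t).Adj (rr a) (rr b) := by
  rw [adj_iff]
  rintro ⟨hne, h⟩
  rcases h with (⟨i, h1, -⟩ | ⟨r, h, (h' | h')⟩) | (⟨i, h1, -⟩ | ⟨r, h, (h' | h')⟩) <;>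
    simp_all [rr]


section generic
variable {V : Type*} {G : SimpleGraph V} {H : G.Subgraph}


variable {V : Type*} {G : SimpleGraph V} {H : G.Subgraph}

lemma reach_of_walk {x y : H.verts} (w : H.coe.Walk x y) :
    Relation.ReflTransGen H.Adj x.val y.val := by
  induction w with
  | nil => exact Relation.ReflTransGen.refl
  | cons h p ih => exact Relation.ReflTransGen.head (by simpa using h) ih

lemma reach_to_coe {x y : V} (h : Relation.ReflTransGen H.Adj x y) :
    ∀ (hx : x ∈ H.verts) (hy : y ∈ H.verts), H.coe.Reachable ⟨x, hx⟩ ⟨y, hy⟩ := by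
  induction h with
  | refl => intro hx hy; rfl
  | tail hab hbc ih =>
    intro hx hy
    exact (ih hx (H.edge_vert hbc)).trans (SimpleGraph.Adj.reachable (by simpa using hbc))

lemma connected_iff' : H.coe.Connected ↔ H.verts.Nonempty ∧
    ∀ x ∈ H.verts, ∀ y ∈ H.verts, Relation.ReflTransGen H.Adj x y := by
  constructor
  · intro hc
    refine ⟨Set.nonempty_coe_sort.mp hc.nonempty, fun x hx y hy => ?_⟩
    obtain ⟨w⟩ := hc.preconnected ⟨x, hx⟩ ⟨y, hy⟩
    exact reach_of_walk w
  · rintro ⟨hne, h⟩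
    rw [SimpleGraph.connected_iff]
    refine ⟨fun a b => reach_to_coe (h a.val a.prop b.val b.prop) a.prop b.prop, ?_⟩
    · rcases hne with ⟨x, hx⟩; exact ⟨⟨x, hx⟩⟩

/-- Closure: a nonempty "closed" set in a connected subgraph contains all vertices. -/
lemma verts_subset_closed (hconn : H.coe.Connected) {S : Set V}
    (hx : ∃ x ∈ S, x ∈ H.verts)
    (hcl : ∀ x ∈ S, ∀ y, H.Adj x y → y ∈ S) : H.verts ⊆ S := by
  obtain ⟨x, hxS, hxV⟩ := hx
  intro w hw
  have hreach := (connected_iff'.mp hconn).2 x hxV w hw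
  clear hw
  induction hreach with
  | refl => exact hxS
  | tail hab hbc ih => exact hcl _ ih _ hbc

lemma transfer_reach {α : Type*} {r s : α → α → Prop} (f : α → α)
    (h : ∀ a b, r a b → Relation.ReflTransGen s (f a) (f b)) :
    ∀ {x y}, Relation.ReflTransGen r x y → Relation.ReflTransGen s (f x) (f y) := by
  intro x y hxy
  induction hxy with
  | refl => exact Relation.ReflTransGen.refl
  | tail hab hbc ih => exact ih.trans (h _ _ hbc)

/-- degree-2: if the neighbor set contains two distinct elements, it is that pair. -/
lemma nbhd_eq_pair {v a b : V} (hH : (H.neighborSet v).ncard = 2) (hab : a ≠ b)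
    (ha : H.Adj v a) (hb : H.Adj v b) : H.neighborSet v = {a, b} := by
  have hsub : ({a, b} : Set V) ⊆ H.neighborSet v := by
    rintro z (rfl | rfl)
    · exact ha
    · exact hb
  refine (Set.eq_of_subset_of_ncard_le hsub ?_ ?_).symm
  · rw [hH, Set.ncard_pair hab]
  · exact Set.finite_of_ncard_ne_zero (by rw [hH]; omega)

/-- degree-2: the neighbor set is a pair containing any given neighbor. -/
lemma nbhd_pair_of_mem {v a : V} (hH : (H.neighborSet v).ncard = 2)
    (ha : H.Adj v a) : ∃ b, b ≠ a ∧ H.Adj v b ∧ H.neighborSet v = {a, b} := by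
  obtain ⟨x, y, hxy, hset⟩ := Set.ncard_eq_two.mp hH
  have hmem : a ∈ ({x, y} : Set V) := hset ▸ ha
  rcases hmem with rfl | rfl
  · exact ⟨y, fun h => hxy h.symm, by rw [← Subgraph.mem_neighborSet, hset]; right; rfl, hset⟩
  · refine ⟨x, fun h => hxy h, by rw [← Subgraph.mem_neighborSet, hset]; left; rfl, ?_⟩
    rw [hset, Set.pair_comm]


lemma nbhd_eq_of_sub {v a b : V} (hH : (H.neighborSet v).ncard = 2)
    (hsub : H.neighborSet v ⊆ {a, b}) : H.neighborSet v = {a, b} := by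
  apply Set.eq_of_subset_of_ncard_le hsub _ (Set.finite_singleton b |>.insert a)
  calc ({a, b} : Set V).ncard ≤ ({b} : Set V).ncard + 1 := Set.ncard_insert_le a {b}
    _ ≤ 2 := by rw [Set.ncard_singleton]
    _ = (H.neighborSet v).ncard := hH.symm

lemma connected_of_hub {c : V} (hc : c ∈ H.verts)
    (h : ∀ x ∈ H.verts, Relation.ReflTransGen H.Adj c x) : H.coe.Connected := by
  rw [connected_iff']
  refine ⟨⟨c, hc⟩, fun x hx y hy => ?_⟩
  exact (haveI := H.symm; (Relation.ReflTransGen.symmetric (r := H.Adj)).symm _ _ (h x hx)).trans (h y hy)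

end generic

def pR (a b : Vt t) : Vt t → Vt t → Prop := fun x y => (x = a ∧ y = b) ∨ (x = b ∧ y = a)

lemma pR_symm {a b x y : Vt t} (h : pR a b x y) : pR a b y x := by
  unfold pR at *; tauto

def usesE (H : (Gt t).Subgraph) (k : ZMod t) : Prop := H.Adj (vv k) (vv (k + 1))
def usesR (H : (Gt t).Subgraph) (k : ZMod t) : Prop := rr k ∈ H.verts

def Tr (k : ZMod t) : (Gt t).Subgraph where
  verts := {vv k, vv (k + 1), rr k}
  Adj x y := (Gt t).Adj x y ∧
    (pR (vv k) (vv (k + 1)) x y ∨ pR (vv k) (rr k) x y ∨ pR (vv (k + 1)) (rr k) x y)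
  adj_sub h := h.1
  edge_vert := by
    rintro x y ⟨-, (⟨rfl, -⟩ | ⟨rfl, -⟩) | (⟨rfl, -⟩ | ⟨rfl, -⟩) | (⟨rfl, -⟩ | ⟨rfl, -⟩)⟩ <;>
      simp [Set.mem_insert_iff]
  symm := by
    constructor
    rintro x y ⟨ha, h⟩
    refine ⟨ha.symm, ?_⟩
    unfold pR at *; tauto

lemma Tr_verts (k : ZMod t) : (Tr k).verts = {vv k, vv (k + 1), rr k} := rfl

lemma mem_Tr_verts {k : ZMod t} {x : Vt t} :
    x ∈ (Tr k).verts ↔ x = vv k ∨ x = vv (k + 1) ∨ x = rr k := by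
  rw [Tr_verts]; simp [Set.mem_insert_iff]

lemma Tr_adj {k : ZMod t} {x y : Vt t} : (Tr k).Adj x y ↔ (Gt t).Adj x y ∧
    (pR (vv k) (vv (k + 1)) x y ∨ pR (vv k) (rr k) x y ∨ pR (vv (k + 1)) (rr k) x y) :=
  Iff.rfl

lemma Tr_inj {k j : ZMod t} (h : Tr k = Tr j) : k = j := by
  have : rr k ∈ (Tr j).verts := by
    rw [← h, mem_Tr_verts]
    tauto
  rw [mem_Tr_verts] at this
  rcases this with h' | h' | h' <;> simp_all

section struct
variable (ht : 5 ≤ t)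
include ht

lemma gadj_vv_vv1 (k : ZMod t) : (Gt t).Adj (vv k) (vv (k + 1)) := (adj_vv_vv ht).mpr (Or.inl rfl)
lemma gadj_vv_rr1 (k : ZMod t) : (Gt t).Adj (vv k) (rr k) := (adj_vv_rr ht).mpr (Or.inl rfl)
lemma gadj_vv_rr2 (k : ZMod t) : (Gt t).Adj (vv (k + 1)) (rr k) := (adj_vv_rr ht).mpr (Or.inr rfl)
lemma gadj_rr_vv1 (k : ZMod t) : (Gt t).Adj (rr k) (vv k) := ((gadj_vv_rr1 ht k)).symm
lemma gadj_rr_vv2 (k : ZMod t) : (Gt t).Adj (rr k) (vv (k + 1)) := ((gadj_vv_rr2 ht k)).symm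

lemma vv_succ_ne (k : ZMod t) : vv (k + 1) ≠ vv k := by
  rw [Ne, vv_eq_vv]; exact add_one_ne ht k

lemma Tr_nbhd_vv1 (k : ZMod t) : (Tr k).neighborSet (vv k) = {vv (k + 1), rr k} := by
  ext z
  simp only [Subgraph.mem_neighborSet, Set.mem_insert_iff, Set.mem_singleton_iff, Tr_adj]
  constructor
  · rintro ⟨-, h⟩
    unfold pR at h
    rcases h with (⟨-, rfl⟩ | ⟨h, -⟩) | (⟨-, rfl⟩ | ⟨h, -⟩) | (⟨h, -⟩ | ⟨h, -⟩)
    · exact Or.inl rfl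
    · exact absurd h (vv_succ_ne ht k).symm
    · exact Or.inr rfl
    · exact absurd h (by simp)
    · exact absurd h (vv_succ_ne ht k).symm
    · exact absurd h (by simp)
  · rintro (rfl | rfl)
    · exact ⟨gadj_vv_vv1 ht k, Or.inl (Or.inl ⟨rfl, rfl⟩)⟩
    · exact ⟨gadj_vv_rr1 ht k, Or.inr (Or.inl (Or.inl ⟨rfl, rfl⟩))⟩

lemma Tr_nbhd_vv2 (k : ZMod t) : (Tr k).neighborSet (vv (k + 1)) = {vv k, rr k} := by
  ext z
  simp only [Subgraph.mem_neighborSet, Set.mem_insert_iff, Set.mem_singleton_iff, Tr_adj]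
  constructor
  · rintro ⟨-, h⟩
    unfold pR at h
    rcases h with (⟨h, -⟩ | ⟨-, rfl⟩) | (⟨h, -⟩ | ⟨h, -⟩) | (⟨-, rfl⟩ | ⟨h, -⟩)
    · exact absurd h (vv_succ_ne ht k)
    · exact Or.inl rfl
    · exact absurd h (vv_succ_ne ht k)
    · exact absurd h (by simp)
    · exact Or.inr rfl
    · exact absurd h (by simp)
  · rintro (rfl | rfl)
    · exact ⟨(gadj_vv_vv1 ht k).symm, Or.inl (Or.inr ⟨rfl, rfl⟩)⟩
    · exact ⟨gadj_vv_rr2 ht k, Or.inr (Or.inr (Or.inl ⟨rfl, rfl⟩))⟩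

lemma Tr_nbhd_rr (k : ZMod t) : (Tr k).neighborSet (rr k) = {vv k, vv (k + 1)} := by
  ext z
  simp only [Subgraph.mem_neighborSet, Set.mem_insert_iff, Set.mem_singleton_iff, Tr_adj]
  constructor
  · rintro ⟨-, h⟩
    unfold pR at h
    rcases h with (⟨h, -⟩ | ⟨h, -⟩) | (⟨h, -⟩ | ⟨-, rfl⟩) | (⟨h, -⟩ | ⟨-, rfl⟩)
    · exact absurd h (by simp)
    · exact absurd h (by simp)
    · exact absurd h (by simp)
    · exact Or.inl rfl
    · exact absurd h (by simp)
    · exact Or.inr rfl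
  · rintro (rfl | rfl)
    · exact ⟨gadj_rr_vv1 ht k, Or.inr (Or.inl (Or.inr ⟨rfl, rfl⟩))⟩
    · exact ⟨gadj_rr_vv2 ht k, Or.inr (Or.inr (Or.inr ⟨rfl, rfl⟩))⟩

lemma Tr_isCycle (k : ZMod t) : (Tr k).IsCycleSub := by
  refine ⟨⟨vv k, mem_Tr_verts.mpr (Or.inl rfl)⟩, ?_, ?_⟩
  · apply connected_of_hub (c := vv k) (mem_Tr_verts.mpr (Or.inl rfl))
    intro x hx
    rcases mem_Tr_verts.mp hx with rfl | rfl | rfl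
    · exact Relation.ReflTransGen.refl
    · exact Relation.ReflTransGen.single ⟨gadj_vv_vv1 ht k, Or.inl (Or.inl ⟨rfl, rfl⟩)⟩
    · exact Relation.ReflTransGen.single ⟨gadj_vv_rr1 ht k, Or.inr (Or.inl (Or.inl ⟨rfl, rfl⟩))⟩
  · intro v hv
    rcases mem_Tr_verts.mp hv with rfl | rfl | rfl
    · rw [Tr_nbhd_vv1 ht k]
      exact Set.ncard_pair (by simp)
    · rw [Tr_nbhd_vv2 ht k]
      exact Set.ncard_pair (by simp)
    · rw [Tr_nbhd_rr ht k]
      exact Set.ncard_pair (Ne.symm (vv_succ_ne ht k))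

lemma Tr_verts_ncard (k : ZMod t) : (Tr k).verts.ncard = 3 := by
  rw [Tr_verts]
  rw [Set.ncard_insert_of_notMem (by
    simp only [Set.mem_insert_iff, Set.mem_singleton_iff]
    push_neg
    exact ⟨(vv_succ_ne ht k).symm, by simp⟩)]
  rw [Set.ncard_pair (by simp)]

lemma Tr_usesE (k : ZMod t) : usesE (Tr k) k := ⟨gadj_vv_vv1 ht k, Or.inl (Or.inl ⟨rfl, rfl⟩)⟩

lemma Tr_usesR_iff {k j : ZMod t} : usesR (Tr k) j ↔ j = k := by
  unfold usesR
  rw [mem_Tr_verts]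
  constructor
  · rintro (h | h | h) <;> simp_all
  · rintro rfl; tauto

/-- r-vertices force both of their edges. -/
lemma rr_forces {H : (Gt t).Subgraph} (hc : H.IsCycleSub) {i : ZMod t} (hi : usesR H i) :
    H.Adj (rr i) (vv i) ∧ H.Adj (rr i) (vv (i + 1)) := by
  have hsub : H.neighborSet (rr i) ⊆ {vv i, vv (i + 1)} := by
    intro z hz
    have hg : (Gt t).Adj (rr i) z := H.adj_sub hz
    rcases z with a | x
    · have : (Gt t).Adj (rr i) (vv a) := hg
      rcases (adj_rr_vv ht).mp this with rfl | rfl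
      · exact Or.inl rfl
      · exact Or.inr rfl
    · rw [inr_eq_rr] at hg
      exact absurd hg (not_adj_rr_rr _ _)
  have heq := nbhd_eq_of_sub (hc.2.2 _ hi) hsub
  constructor
  · show vv i ∈ H.neighborSet (rr i)
    rw [heq]; exact Or.inl rfl
  · show vv (i + 1) ∈ H.neighborSet (rr i)
    rw [heq]; exact Or.inr rfl

/-- A cycle using both forms of a gap is the triangle at that gap. -/
lemma both_forms_eq_Tr {H : (Gt t).Subgraph} (hc : H.IsCycleSub) {k : ZMod t}
    (hE : usesE H k) (hR : usesR H k) : H = Tr k := by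
  obtain ⟨h1, h2⟩ := rr_forces ht hc hR
  have hvk : vv k ∈ H.verts := H.edge_vert hE
  have hvk1 : vv (k + 1) ∈ H.verts := H.edge_vert hE.symm
  have nvk : H.neighborSet (vv k) = {vv (k + 1), rr k} :=
    nbhd_eq_pair (hc.2.2 _ hvk) (by simp) hE h1.symm
  have nvk1 : H.neighborSet (vv (k + 1)) = {vv k, rr k} :=
    nbhd_eq_pair (hc.2.2 _ hvk1) (by simp) hE.symm h2.symm
  have nrk : H.neighborSet (rr k) = {vv k, vv (k + 1)} :=
    nbhd_eq_pair (hc.2.2 _ hR) (Ne.symm (vv_succ_ne ht k)) h1 h2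
  have hverts : H.verts = (Tr k).verts := by
    apply Set.Subset.antisymm
    · apply verts_subset_closed hc.2.1 ⟨vv k, mem_Tr_verts.mpr (Or.inl rfl), hvk⟩
      intro x hx y hy
      rw [mem_Tr_verts]
      rcases mem_Tr_verts.mp hx with rfl | rfl | rfl
      · have : y ∈ H.neighborSet (vv k) := hy
        rw [nvk] at this
        rcases this with rfl | rfl
        · tauto
        · tauto
      · have : y ∈ H.neighborSet (vv (k + 1)) := hy
        rw [nvk1] at this
        rcases this with rfl | rfl
        · tauto
        · tauto
      · have : y ∈ H.neighborSet (rr k) := hy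
        rw [nrk] at this
        rcases this with rfl | rfl
        · tauto
        · tauto
    · intro x hx
      rcases mem_Tr_verts.mp hx with rfl | rfl | rfl
      · exact hvk
      · exact hvk1
      · exact hR
  apply Subgraph.ext hverts
  ext x y
  rw [Tr_adj]
  constructor
  · intro hxy
    refine ⟨H.adj_sub hxy, ?_⟩
    have hx : x ∈ (Tr k).verts := hverts ▸ H.edge_vert hxy
    rcases mem_Tr_verts.mp hx with rfl | rfl | rfl
    · have : y ∈ H.neighborSet (vv k) := hxy
      rw [nvk] at this
      rcases this with rfl | rfl
      · exact Or.inl (Or.inl ⟨rfl, rfl⟩)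
      · exact Or.inr (Or.inl (Or.inl ⟨rfl, rfl⟩))
    · have : y ∈ H.neighborSet (vv (k + 1)) := hxy
      rw [nvk1] at this
      rcases this with rfl | rfl
      · exact Or.inl (Or.inr ⟨rfl, rfl⟩)
      · exact Or.inr (Or.inr (Or.inl ⟨rfl, rfl⟩))
    · have : y ∈ H.neighborSet (rr k) := hxy
      rw [nrk] at this
      rcases this with rfl | rfl
      · exact Or.inr (Or.inl (Or.inr ⟨rfl, rfl⟩))
      · exact Or.inr (Or.inr (Or.inr ⟨rfl, rfl⟩))
  · rintro ⟨-, (⟨rfl, rfl⟩ | ⟨rfl, rfl⟩) | (⟨rfl, rfl⟩ | ⟨rfl, rfl⟩) | (⟨rfl, rfl⟩ | ⟨rfl, rfl⟩)⟩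
    · exact hE
    · exact hE.symm
    · exact h1.symm
    · exact h1
    · exact h2.symm
    · exact h2

/-- Every cycle uses some gap. -/
lemma exists_used_gap {H : (Gt t).Subgraph} (hc : H.IsCycleSub) :
    ∃ k, usesE H k ∨ usesR H k := by
  obtain ⟨v, hv⟩ := hc.1
  have h2 := hc.2.2 v hv
  have : (H.neighborSet v).Nonempty := Set.nonempty_of_ncard_ne_zero (by rw [h2]; omega)
  obtain ⟨w, hw⟩ := this
  have hadj : H.Adj v w := hw
  rcases w with b | x
  · rcases v with a | x
    · have : (Gt t).Adj (vv a) (vv b) := H.adj_sub hadj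
      rcases (adj_vv_vv ht).mp this with rfl | rfl
      · exact ⟨a, Or.inl hadj⟩
      · exact ⟨b, Or.inl hadj.symm⟩
    · rw [inr_eq_rr] at hadj
      exact ⟨x.val, Or.inr (H.edge_vert hadj)⟩
  · rw [inr_eq_rr] at hadj
    exact ⟨x.val, Or.inr (H.edge_vert hadj.symm)⟩

end struct

def toDetour (k : ZMod t) (H : (Gt t).Subgraph) : (Gt t).Subgraph where
  verts := insert (rr k) (insert (vv k) (insert (vv (k + 1)) H.verts))
  Adj x y := (H.Adj x y ∧ ¬ pR (vv k) (vv (k + 1)) x y) ∨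
    ((Gt t).Adj x y ∧ (pR (vv k) (rr k) x y ∨ pR (vv (k + 1)) (rr k) x y))
  adj_sub h := by
    rcases h with ⟨h, -⟩ | ⟨h, -⟩
    · exact H.adj_sub h
    · exact h
  edge_vert := by
    rintro x y (⟨h, -⟩ | ⟨-, (⟨rfl, -⟩ | ⟨rfl, -⟩) | (⟨rfl, -⟩ | ⟨rfl, -⟩)⟩)
    · exact Or.inr (Or.inr (Or.inr (H.edge_vert h)))
    · exact Or.inr (Or.inl rfl)
    · exact Or.inl rfl
    · exact Or.inr (Or.inr (Or.inl rfl))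
    · exact Or.inl rfl
  symm := by
    constructor
    rintro x y (⟨h, hp⟩ | ⟨h, hp | hp⟩)
    · exact Or.inl ⟨H.adj_symm h, fun hc => hp (pR_symm hc)⟩
    · exact Or.inr ⟨h.symm, Or.inl (pR_symm hp)⟩
    · exact Or.inr ⟨h.symm, Or.inr (pR_symm hp)⟩

def toEdge (k : ZMod t) (H : (Gt t).Subgraph) : (Gt t).Subgraph where
  verts := (insert (vv k) (insert (vv (k + 1)) H.verts)) \ {rr k}
  Adj x y := (H.Adj x y ∧ x ≠ rr k ∧ y ≠ rr k) ∨
    ((Gt t).Adj x y ∧ pR (vv k) (vv (k + 1)) x y)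
  adj_sub h := by
    rcases h with ⟨h, -⟩ | ⟨h, -⟩
    · exact H.adj_sub h
    · exact h
  edge_vert := by
    rintro x y (⟨h, hx, -⟩ | ⟨-, ⟨rfl, -⟩ | ⟨rfl, -⟩⟩)
    · exact ⟨Or.inr (Or.inr (H.edge_vert h)), hx⟩
    · exact ⟨Or.inl rfl, by simp⟩
    · exact ⟨Or.inr (Or.inl rfl), by simp⟩
  symm := by
    constructor
    rintro x y (⟨h, hx, hy⟩ | ⟨h, hp⟩)
    · exact Or.inl ⟨H.adj_symm h, hy, hx⟩
    · exact Or.inr ⟨h.symm, pR_symm hp⟩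

section flip1
variable (ht : 5 ≤ t) {H : (Gt t).Subgraph} {k : ZMod t}
  (hc : H.IsCycleSub) (hE : usesE H k) (hR : ¬ usesR H k)
include ht hc hE hR

lemma td_verts : (toDetour k H).verts = insert (rr k) H.verts := by
  show insert (rr k) (insert (vv k) (insert (vv (k + 1)) H.verts)) = _
  rw [Set.insert_eq_self.mpr (H.edge_vert hE.symm), Set.insert_eq_self.mpr (H.edge_vert hE)]

lemma td_ncard : (toDetour k H).verts.ncard = H.verts.ncard + 1 := by
  rw [td_verts ht hc hE hR, Set.ncard_insert_of_notMem hR]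

lemma td_usesR : usesR (toDetour k H) k := Or.inl rfl

lemma td_not_usesE : ¬ usesE (toDetour k H) k := by
  rintro (⟨-, hp⟩ | ⟨-, hp | hp⟩)
  · exact hp (Or.inl ⟨rfl, rfl⟩)
  · rcases hp with ⟨-, h⟩ | ⟨h, -⟩ <;> simp_all
  · rcases hp with ⟨h, -⟩ | ⟨h, -⟩
    · exact (vv_succ_ne ht k) h.symm
    · simp_all

lemma td_usesE_other {j : ZMod t} (hj : j ≠ k) : usesE (toDetour k H) j ↔ usesE H j := by
  constructor
  · rintro (⟨h, -⟩ | ⟨-, hp | hp⟩)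
    · exact h
    · rcases hp with ⟨-, h⟩ | ⟨h, -⟩ <;> simp_all
    · rcases hp with ⟨-, h⟩ | ⟨h, -⟩ <;> simp_all
  · intro h
    refine Or.inl ⟨h, ?_⟩
    rintro (⟨h1, -⟩ | ⟨h1, h2⟩)
    · rw [vv_eq_vv] at h1; exact hj h1
    · rw [vv_eq_vv] at h1 h2
      subst h1
      exact add_two_ne ht k h2

lemma td_usesR_other {j : ZMod t} (hj : j ≠ k) : usesR (toDetour k H) j ↔ usesR H j := by
  unfold usesR
  rw [td_verts ht hc hE hR, Set.mem_insert_iff, rr_eq_rr]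
  simp [hj]

lemma td_nbhd_rr : (toDetour k H).neighborSet (rr k) = {vv k, vv (k + 1)} := by
  ext z
  simp only [Subgraph.mem_neighborSet, Set.mem_insert_iff, Set.mem_singleton_iff]
  constructor
  · rintro (⟨h, -⟩ | ⟨-, hp | hp⟩)
    · exact absurd (H.edge_vert h) hR
    · rcases hp with ⟨h, -⟩ | ⟨-, h⟩
      · simp_all
      · exact Or.inl h
    · rcases hp with ⟨h, -⟩ | ⟨-, h⟩
      · simp_all
      · exact Or.inr h
  · rintro (rfl | rfl)
    · exact Or.inr ⟨gadj_rr_vv1 ht k, Or.inl (Or.inr ⟨rfl, rfl⟩)⟩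
    · exact Or.inr ⟨gadj_rr_vv2 ht k, Or.inr (Or.inr ⟨rfl, rfl⟩)⟩

lemma td_nbhd_vvk {w : Vt t} (hw : w ≠ vv (k + 1))
    (hnb : H.neighborSet (vv k) = {vv (k + 1), w}) :
    (toDetour k H).neighborSet (vv k) = {w, rr k} := by
  ext z
  simp only [Subgraph.mem_neighborSet, Set.mem_insert_iff, Set.mem_singleton_iff]
  constructor
  · rintro (⟨h, hp⟩ | ⟨-, hp | hp⟩)
    · have : z ∈ H.neighborSet (vv k) := h
      rw [hnb] at this
      rcases this with rfl | rfl
      · exact absurd (Or.inl ⟨rfl, rfl⟩) hp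
      · exact Or.inl rfl
    · rcases hp with ⟨-, rfl⟩ | ⟨h, -⟩
      · exact Or.inr rfl
      · simp_all
    · rcases hp with ⟨h, -⟩ | ⟨h, -⟩
      · exact absurd h.symm (vv_succ_ne ht k)
      · simp_all
  · rintro (rfl | rfl)
    · have hz : z ∈ H.neighborSet (vv k) := by rw [hnb]; exact Or.inr rfl
      refine Or.inl ⟨hz, ?_⟩
      rintro (⟨-, h⟩ | ⟨h, -⟩)
      · exact hw h
      · exact (vv_succ_ne ht k) h.symm
    · exact Or.inr ⟨gadj_vv_rr1 ht k, Or.inl (Or.inl ⟨rfl, rfl⟩)⟩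

lemma td_nbhd_vvk1 {w : Vt t} (hw : w ≠ vv k)
    (hnb : H.neighborSet (vv (k + 1)) = {vv k, w}) :
    (toDetour k H).neighborSet (vv (k + 1)) = {w, rr k} := by
  ext z
  simp only [Subgraph.mem_neighborSet, Set.mem_insert_iff, Set.mem_singleton_iff]
  constructor
  · rintro (⟨h, hp⟩ | ⟨-, hp | hp⟩)
    · have : z ∈ H.neighborSet (vv (k + 1)) := h
      rw [hnb] at this
      rcases this with rfl | rfl
      · exact absurd (Or.inr ⟨rfl, rfl⟩) hp
      · exact Or.inl rfl
    · rcases hp with ⟨h, -⟩ | ⟨h, -⟩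
      · exact absurd h (vv_succ_ne ht k)
      · simp_all
    · rcases hp with ⟨-, rfl⟩ | ⟨h, -⟩
      · exact Or.inr rfl
      · simp_all
  · rintro (rfl | rfl)
    · have hz : z ∈ H.neighborSet (vv (k + 1)) := by rw [hnb]; exact Or.inr rfl
      refine Or.inl ⟨hz, ?_⟩
      rintro (⟨h, -⟩ | ⟨-, h⟩)
      · exact (vv_succ_ne ht k) h
      · exact hw h
    · exact Or.inr ⟨gadj_vv_rr2 ht k, Or.inr (Or.inl ⟨rfl, rfl⟩)⟩

lemma td_nbhd_other {v : Vt t} (h1 : v ≠ vv k) (h2 : v ≠ vv (k + 1)) (h3 : v ≠ rr k) :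
    (toDetour k H).neighborSet v = H.neighborSet v := by
  ext z
  simp only [Subgraph.mem_neighborSet]
  constructor
  · rintro (⟨h, -⟩ | ⟨-, hp | hp⟩)
    · exact h
    · rcases hp with ⟨h, -⟩ | ⟨h, -⟩ <;> [exact absurd h h1; exact absurd h h3]
    · rcases hp with ⟨h, -⟩ | ⟨h, -⟩ <;> [exact absurd h h2; exact absurd h h3]
  · intro h
    refine Or.inl ⟨h, ?_⟩
    rintro (⟨h', -⟩ | ⟨h', -⟩) <;> [exact h1 h'; exact h2 h']

lemma td_isCycle : (toDetour k H).IsCycleSub := by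
  have hvk : vv k ∈ H.verts := H.edge_vert hE
  have hvk1 : vv (k + 1) ∈ H.verts := H.edge_vert hE.symm
  obtain ⟨w, hw, hwadj, hnb⟩ := nbhd_pair_of_mem (hc.2.2 _ hvk) hE
  obtain ⟨w', hw', hwadj', hnb'⟩ := nbhd_pair_of_mem (hc.2.2 _ hvk1) hE.symm
  have hwr : w ≠ rr k := fun h => hR (H.edge_vert (h ▸ hwadj).symm)
  have hwr' : w' ≠ rr k := fun h => hR (H.edge_vert (h ▸ hwadj').symm)
  have haux : ∀ a b, H.Adj a b → Relation.ReflTransGen (toDetour k H).Adj a b := by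
    intro a b hab
    by_cases hp : pR (vv k) (vv (k + 1)) a b
    · rcases hp with ⟨rfl, rfl⟩ | ⟨rfl, rfl⟩
      · exact Relation.ReflTransGen.head
          (Or.inr ⟨gadj_vv_rr1 ht k, Or.inl (Or.inl ⟨rfl, rfl⟩)⟩)
          (Relation.ReflTransGen.single
            (Or.inr ⟨gadj_rr_vv2 ht k, Or.inr (Or.inr ⟨rfl, rfl⟩)⟩))
      · exact Relation.ReflTransGen.head
          (Or.inr ⟨gadj_vv_rr2 ht k, Or.inr (Or.inl ⟨rfl, rfl⟩)⟩)
          (Relation.ReflTransGen.single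
            (Or.inr ⟨gadj_rr_vv1 ht k, Or.inl (Or.inr ⟨rfl, rfl⟩)⟩))
    · exact Relation.ReflTransGen.single (Or.inl ⟨hab, hp⟩)
  refine ⟨⟨rr k, Or.inl rfl⟩, ?_, ?_⟩
  · refine connected_of_hub (c := vv k) ?_ ?_
    · exact Or.inr (Or.inl rfl)
    intro x hx
    rcases hx with rfl | rfl | rfl | hx
    · exact Relation.ReflTransGen.single (Or.inr ⟨gadj_vv_rr1 ht k, Or.inl (Or.inl ⟨rfl, rfl⟩)⟩)
    · exact Relation.ReflTransGen.refl
    · exact haux _ _ hE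
    · have := (connected_iff'.mp hc.2.1).2 (vv k) hvk x hx
      simpa using transfer_reach id (fun a b h => haux a b h) this
  · intro v hv
    rcases hv with rfl | rfl | rfl | hv
    · rw [td_nbhd_rr ht hc hE hR]
      exact Set.ncard_pair (Ne.symm (vv_succ_ne ht k))
    · rw [td_nbhd_vvk ht hc hE hR hw hnb]
      exact Set.ncard_pair hwr
    · rw [td_nbhd_vvk1 ht hc hE hR hw' hnb']
      exact Set.ncard_pair hwr'
    · by_cases h1 : v = vv k
      · subst h1
        rw [td_nbhd_vvk ht hc hE hR hw hnb]
        exact Set.ncard_pair hwr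
      by_cases h2 : v = vv (k + 1)
      · subst h2
        rw [td_nbhd_vvk1 ht hc hE hR hw' hnb']
        exact Set.ncard_pair hwr'
      have h3 : v ≠ rr k := fun h => hR (show rr k ∈ H.verts from h ▸ hv)
      rw [td_nbhd_other ht hc hE hR h1 h2 h3]
      exact hc.2.2 v hv

lemma td_inv : toEdge k (toDetour k H) = H := by
  have hvk : vv k ∈ H.verts := H.edge_vert hE
  have hvk1 : vv (k + 1) ∈ H.verts := H.edge_vert hE.symm
  apply Subgraph.ext
  · show (insert (vv k) (insert (vv (k + 1)) (toDetour k H).verts)) \ {rr k} = H.verts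
    rw [td_verts ht hc hE hR]
    ext z
    simp only [Set.mem_diff, Set.mem_insert_iff, Set.mem_singleton_iff]
    constructor
    · rintro ⟨rfl | rfl | rfl | hz, hne⟩
      · exact hvk
      · exact hvk1
      · exact absurd rfl hne
      · exact hz
    · intro hz
      exact ⟨Or.inr (Or.inr (Or.inr hz)), fun h => hR (show rr k ∈ H.verts from h ▸ hz)⟩
  · ext x y
    show ((toDetour k H).Adj x y ∧ x ≠ rr k ∧ y ≠ rr k) ∨
      ((Gt t).Adj x y ∧ pR (vv k) (vv (k + 1)) x y) ↔ H.Adj x y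
    constructor
    · rintro (⟨⟨h, -⟩ | ⟨-, hp | hp⟩, hx, hy⟩ | ⟨-, ⟨rfl, rfl⟩ | ⟨rfl, rfl⟩⟩)
      · exact h
      · rcases hp with ⟨-, h⟩ | ⟨h, -⟩ <;> [exact absurd h hy; exact absurd h hx]
      · rcases hp with ⟨-, h⟩ | ⟨h, -⟩ <;> [exact absurd h hy; exact absurd h hx]
      · exact hE
      · exact hE.symm
    · intro h
      by_cases hp : pR (vv k) (vv (k + 1)) x y
      · exact Or.inr ⟨H.adj_sub h, hp⟩
      · refine Or.inl ⟨Or.inl ⟨h, hp⟩, ?_, ?_⟩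
        · exact fun hx => hR (H.edge_vert (hx ▸ h))
        · exact fun hy => hR (H.edge_vert (hy ▸ h).symm)

end flip1

section flip2
variable (ht : 5 ≤ t) {H : (Gt t).Subgraph} {k : ZMod t}
  (hc : H.IsCycleSub) (hR : usesR H k) (hE : ¬ usesE H k)
include ht hc hR hE

lemma te_verts : (toEdge k H).verts = H.verts \ {rr k} := by
  obtain ⟨h1, h2⟩ := rr_forces ht hc hR
  show (insert (vv k) (insert (vv (k + 1)) H.verts)) \ {rr k} = _
  rw [Set.insert_eq_self.mpr (H.edge_vert h2.symm), Set.insert_eq_self.mpr (H.edge_vert h1.symm)]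

lemma te_ncard : (toEdge k H).verts.ncard = H.verts.ncard - 1 := by
  rw [te_verts ht hc hR hE, Set.ncard_diff_singleton_of_mem hR]

lemma te_usesE : usesE (toEdge k H) k :=
  Or.inr ⟨gadj_vv_vv1 ht k, Or.inl ⟨rfl, rfl⟩⟩

lemma te_not_usesR : ¬ usesR (toEdge k H) k := by
  intro h
  rw [show usesR (toEdge k H) k = (rr k ∈ (toEdge k H).verts) from rfl,
    te_verts ht hc hR hE] at h
  exact h.2 rfl

lemma te_usesE_other {j : ZMod t} (hj : j ≠ k) : usesE (toEdge k H) j ↔ usesE H j := by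
  constructor
  · rintro (⟨h, -⟩ | ⟨-, hp⟩)
    · exact h
    · rcases hp with ⟨h1, h2⟩ | ⟨h1, h2⟩
      · rw [vv_eq_vv] at h1; exact absurd h1 hj
      · rw [vv_eq_vv] at h1 h2
        subst h1
        exact absurd h2 (add_two_ne ht k)
  · intro h
    exact Or.inl ⟨h, by simp, by simp⟩

lemma te_usesR_other {j : ZMod t} (hj : j ≠ k) : usesR (toEdge k H) j ↔ usesR H j := by
  show rr j ∈ (toEdge k H).verts ↔ rr j ∈ H.verts
  rw [te_verts ht hc hR hE]
  simp [hj]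

lemma te_nbhd_vvk {w : Vt t} (hw : w ≠ rr k)
    (hnb : H.neighborSet (vv k) = {rr k, w}) :
    (toEdge k H).neighborSet (vv k) = {w, vv (k + 1)} := by
  ext z
  simp only [Subgraph.mem_neighborSet, Set.mem_insert_iff, Set.mem_singleton_iff]
  constructor
  · rintro (⟨h, -, hz⟩ | ⟨-, hp⟩)
    · have : z ∈ H.neighborSet (vv k) := h
      rw [hnb] at this
      rcases this with rfl | rfl
      · exact absurd rfl hz
      · exact Or.inl rfl
    · rcases hp with ⟨-, rfl⟩ | ⟨h, -⟩
      · exact Or.inr rfl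
      · exact absurd h.symm (vv_succ_ne ht k)
  · rintro (rfl | rfl)
    · have hz : z ∈ H.neighborSet (vv k) := by rw [hnb]; exact Or.inr rfl
      exact Or.inl ⟨hz, by simp, hw⟩
    · exact Or.inr ⟨gadj_vv_vv1 ht k, Or.inl ⟨rfl, rfl⟩⟩

lemma te_nbhd_vvk1 {w : Vt t} (hw : w ≠ rr k)
    (hnb : H.neighborSet (vv (k + 1)) = {rr k, w}) :
    (toEdge k H).neighborSet (vv (k + 1)) = {w, vv k} := by
  ext z
  simp only [Subgraph.mem_neighborSet, Set.mem_insert_iff, Set.mem_singleton_iff]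
  constructor
  · rintro (⟨h, -, hz⟩ | ⟨-, hp⟩)
    · have : z ∈ H.neighborSet (vv (k + 1)) := h
      rw [hnb] at this
      rcases this with rfl | rfl
      · exact absurd rfl hz
      · exact Or.inl rfl
    · rcases hp with ⟨h, -⟩ | ⟨-, rfl⟩
      · exact absurd h (vv_succ_ne ht k)
      · exact Or.inr rfl
  · rintro (rfl | rfl)
    · have hz : z ∈ H.neighborSet (vv (k + 1)) := by rw [hnb]; exact Or.inr rfl
      exact Or.inl ⟨hz, by simp, hw⟩
    · exact Or.inr ⟨(gadj_vv_vv1 ht k).symm, Or.inr ⟨rfl, rfl⟩⟩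

lemma te_nbhd_other {v : Vt t} (h1 : v ≠ vv k) (h2 : v ≠ vv (k + 1)) (h3 : v ≠ rr k)
    (hnrk : H.neighborSet (rr k) = {vv k, vv (k + 1)}) :
    (toEdge k H).neighborSet v = H.neighborSet v := by
  ext z
  simp only [Subgraph.mem_neighborSet]
  constructor
  · rintro (⟨h, -⟩ | ⟨-, hp⟩)
    · exact h
    · rcases hp with ⟨h, -⟩ | ⟨h, -⟩ <;> [exact absurd h h1; exact absurd h h2]
  · intro h
    refine Or.inl ⟨h, h3, ?_⟩
    rintro rfl
    have : v ∈ H.neighborSet (rr k) := H.adj_symm h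
    rw [hnrk] at this
    rcases this with rfl | rfl <;> [exact h1 rfl; exact h2 rfl]

lemma te_isCycle : (toEdge k H).IsCycleSub := by
  obtain ⟨h1, h2⟩ := rr_forces ht hc hR
  have hvk : vv k ∈ H.verts := H.edge_vert h1.symm
  have hvk1 : vv (k + 1) ∈ H.verts := H.edge_vert h2.symm
  have hnrk : H.neighborSet (rr k) = {vv k, vv (k + 1)} :=
    nbhd_eq_pair (hc.2.2 _ hR) (Ne.symm (vv_succ_ne ht k)) h1 h2
  obtain ⟨w, hw, hwadj, hnb⟩ := nbhd_pair_of_mem (hc.2.2 _ hvk) h1.symm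
  obtain ⟨w', hw', hwadj', hnb'⟩ := nbhd_pair_of_mem (hc.2.2 _ hvk1) h2.symm
  have hwv1 : w ≠ vv (k + 1) := by
    rintro rfl
    exact hE hwadj
  have hwv : w' ≠ vv k := by
    rintro rfl
    exact hE hwadj'.symm
  set f : Vt t → Vt t := fun x => if x = rr k then vv k else x with hf
  have haux : ∀ a b, H.Adj a b → Relation.ReflTransGen (toEdge k H).Adj (f a) (f b) := by
    intro a b hab
    by_cases ha : a = rr k
    · subst ha
      have : b ∈ H.neighborSet (rr k) := hab
      rw [hnrk] at this
      rcases this with rfl | rfl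
      · simp only [hf, if_pos rfl, if_neg (show vv k ≠ rr k by simp)]
        exact Relation.ReflTransGen.refl
      · simp only [hf, if_pos rfl, if_neg (show vv (k + 1) ≠ rr k by simp)]
        exact Relation.ReflTransGen.single (Or.inr ⟨gadj_vv_vv1 ht k, Or.inl ⟨rfl, rfl⟩⟩)
    · by_cases hb : b = rr k
      · subst hb
        have : a ∈ H.neighborSet (rr k) := H.adj_symm hab
        rw [hnrk] at this
        rcases this with rfl | rfl
        · simp only [hf, if_pos rfl, if_neg (show vv k ≠ rr k by simp)]
          exact Relation.ReflTransGen.refl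
        · simp only [hf, if_pos rfl, if_neg (show vv (k + 1) ≠ rr k by simp)]
          exact Relation.ReflTransGen.single
            (Or.inr ⟨(gadj_vv_vv1 ht k).symm, Or.inr ⟨rfl, rfl⟩⟩)
      · simp only [hf, if_neg ha, if_neg hb]
        exact Relation.ReflTransGen.single (Or.inl ⟨hab, ha, hb⟩)
  refine ⟨⟨vv k, by rw [te_verts ht hc hR hE]; exact ⟨hvk, by simp⟩⟩, ?_, ?_⟩
  · refine connected_of_hub (c := vv k) ?_ ?_
    · rw [te_verts ht hc hR hE]; exact ⟨hvk, by simp⟩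
    intro x hx
    rw [te_verts ht hc hR hE] at hx
    obtain ⟨hxH, hxr⟩ := hx
    have hreach := (connected_iff'.mp hc.2.1).2 (vv k) hvk x hxH
    have := transfer_reach f haux hreach
    rw [hf] at this
    simpa [if_neg (show vv k ≠ rr k by simp), if_neg (show x ≠ rr k from hxr)] using this
  · intro v hv
    rw [te_verts ht hc hR hE] at hv
    obtain ⟨hvH, hvr⟩ := hv
    by_cases hv1 : v = vv k
    · subst hv1
      rw [te_nbhd_vvk ht hc hR hE hw hnb]
      exact Set.ncard_pair hwv1
    by_cases hv2 : v = vv (k + 1)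
    · subst hv2
      rw [te_nbhd_vvk1 ht hc hR hE hw' hnb']
      exact Set.ncard_pair hwv
    rw [te_nbhd_other ht hc hR hE hv1 hv2 hvr hnrk]
    exact hc.2.2 v hvH

lemma te_inv : toDetour k (toEdge k H) = H := by
  obtain ⟨h1, h2⟩ := rr_forces ht hc hR
  have hvk : vv k ∈ H.verts := H.edge_vert h1.symm
  have hvk1 : vv (k + 1) ∈ H.verts := H.edge_vert h2.symm
  have hnrk : H.neighborSet (rr k) = {vv k, vv (k + 1)} :=
    nbhd_eq_pair (hc.2.2 _ hR) (Ne.symm (vv_succ_ne ht k)) h1 h2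
  apply Subgraph.ext
  · show insert (rr k) (insert (vv k) (insert (vv (k + 1)) (toEdge k H).verts)) = H.verts
    rw [te_verts ht hc hR hE]
    ext z
    simp only [Set.mem_insert_iff, Set.mem_diff, Set.mem_singleton_iff]
    constructor
    · rintro (rfl | rfl | rfl | ⟨hz, -⟩)
      · exact hR
      · exact hvk
      · exact hvk1
      · exact hz
    · intro hz
      by_cases h : z = rr k
      · exact Or.inl h
      · exact Or.inr (Or.inr (Or.inr ⟨hz, h⟩))
  · ext x y
    show ((toEdge k H).Adj x y ∧ ¬ pR (vv k) (vv (k + 1)) x y) ∨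
      ((Gt t).Adj x y ∧ (pR (vv k) (rr k) x y ∨ pR (vv (k + 1)) (rr k) x y)) ↔ H.Adj x y
    constructor
    · rintro (⟨⟨h, -⟩ | ⟨-, hp⟩, hnp⟩ | ⟨-, hp | hp⟩)
      · exact h
      · exact absurd hp hnp
      · rcases hp with ⟨rfl, rfl⟩ | ⟨rfl, rfl⟩ <;> [exact h1.symm; exact h1]
      · rcases hp with ⟨rfl, rfl⟩ | ⟨rfl, rfl⟩ <;> [exact h2.symm; exact h2]
    · intro h
      by_cases hx : x = rr k
      · subst hx
        have : y ∈ H.neighborSet (rr k) := h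
        rw [hnrk] at this
        rcases this with rfl | rfl
        · exact Or.inr ⟨H.adj_sub h, Or.inl (Or.inr ⟨rfl, rfl⟩)⟩
        · exact Or.inr ⟨H.adj_sub h, Or.inr (Or.inr ⟨rfl, rfl⟩)⟩
      by_cases hy : y = rr k
      · subst hy
        have : x ∈ H.neighborSet (rr k) := H.adj_symm h
        rw [hnrk] at this
        rcases this with rfl | rfl
        · exact Or.inr ⟨H.adj_sub h, Or.inl (Or.inl ⟨rfl, rfl⟩)⟩
        · exact Or.inr ⟨H.adj_sub h, Or.inr (Or.inl ⟨rfl, rfl⟩)⟩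
      refine Or.inl ⟨Or.inl ⟨h, hx, hy⟩, ?_⟩
      rintro (⟨rfl, rfl⟩ | ⟨rfl, rfl⟩)
      · exact hE h
      · exact hE h.symm

end flip2

section counting

instance : Finite ((Gt t).Subgraph) := by
  have : Function.Injective (fun H : (Gt t).Subgraph => (H.verts, H.Adj)) := by
    intro a b h
    simp only [Prod.mk.injEq] at h
    exact Subgraph.ext h.1 h.2
  exact Finite.of_injective _ this

def gapSet (H : (Gt t).Subgraph) : Set ℕ :=
  {m | usesE H (m : ZMod t) ∨ usesR H (m : ZMod t)}

noncomputable def mg (H : (Gt t).Subgraph) : ZMod t := ((sInf (gapSet H) : ℕ) : ZMod t)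

open scoped Classical in
noncomputable def flip (H : (Gt t).Subgraph) : (Gt t).Subgraph :=
  if usesE H (mg H) then toDetour (mg H) H else toEdge (mg H) H

section flipspec
variable (ht : 5 ≤ t) {H : (Gt t).Subgraph}
  (hc : H.IsCycleSub) (hnt : ∀ k, H ≠ Tr k)
include ht hc

lemma mg_used : usesE H (mg H) ∨ usesR H (mg H) := by
  have hne : (gapSet H).Nonempty := by
    obtain ⟨k, hk⟩ := exists_used_gap ht hc
    exact ⟨k.val, by rwa [gapSet, Set.mem_setOf_eq, ZMod.natCast_rightInverse k]⟩
  exact Nat.sInf_mem hne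

include hnt in
lemma flip_spec :
    (flip H).IsCycleSub ∧ (∀ k, flip H ≠ Tr k) ∧ flip (flip H) = H ∧
      ((flip H).verts.ncard = H.verts.ncard + 1 ∨
        (H.verts.ncard = (flip H).verts.ncard + 1 ∧ 1 ≤ H.verts.ncard)) := by
  classical
  set k := mg H with hmg
  have hone : ¬ (usesE H k ∧ usesR H k) := by
    rintro ⟨h1, h2⟩
    exact hnt k (both_forms_eq_Tr ht hc h1 h2)
  by_cases hE : usesE H k
  · have hR : ¬ usesR H k := fun h => hone ⟨hE, h⟩
    have hflip : flip H = toDetour k H := if_pos hE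
    have hcyc := td_isCycle ht hc hE hR
    have hnt' : ∀ j, toDetour k H ≠ Tr j := by
      intro j hj
      have h1 : usesR (toDetour k H) k := td_usesR ht hc hE hR
      rw [hj] at h1
      have hkj := (Tr_usesR_iff ht).mp h1
      subst hkj
      exact td_not_usesE ht hc hE hR (by rw [hj]; exact Tr_usesE ht k)
    have hgap : gapSet (toDetour k H) = gapSet H := by
      ext m
      by_cases hm : (m : ZMod t) = k
      · simp only [gapSet, Set.mem_setOf_eq, hm]
        exact ⟨fun _ => Or.inl hE, fun _ => Or.inr (td_usesR ht hc hE hR)⟩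
      · simp only [gapSet, Set.mem_setOf_eq]
        rw [td_usesE_other ht hc hE hR hm, td_usesR_other ht hc hE hR hm]
    have hmg' : mg (toDetour k H) = k := by
      show ((sInf (gapSet (toDetour k H)) : ℕ) : ZMod t) = k
      rw [hgap]
      exact hmg.symm
    refine ⟨hflip ▸ hcyc, hflip ▸ hnt', ?_, ?_⟩
    · rw [hflip, flip, hmg', if_neg (td_not_usesE ht hc hE hR)]
      exact td_inv ht hc hE hR
    · left
      rw [hflip]
      exact td_ncard ht hc hE hR
  · have hR : usesR H k := (mg_used ht hc).resolve_left hE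
    have hflip : flip H = toEdge k H := if_neg hE
    have hcyc := te_isCycle ht hc hR hE
    have hnt' : ∀ j, toEdge k H ≠ Tr j := by
      intro j hj
      have hjk : j ≠ k := by
        rintro rfl
        exact te_not_usesR ht hc hR hE (by rw [hj]; exact (Tr_usesR_iff ht).mpr rfl)
      have huR : usesR H j := by
        rw [← te_usesR_other ht hc hR hE hjk, hj]
        exact (Tr_usesR_iff ht).mpr rfl
      have huE : usesE H j := by
        rw [← te_usesE_other ht hc hR hE hjk, hj]
        exact Tr_usesE ht j
      exact hnt j (both_forms_eq_Tr ht hc huE huR)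
    have hgap : gapSet (toEdge k H) = gapSet H := by
      ext m
      by_cases hm : (m : ZMod t) = k
      · simp only [gapSet, Set.mem_setOf_eq, hm]
        exact ⟨fun _ => Or.inr hR, fun _ => Or.inl (te_usesE ht hc hR hE)⟩
      · simp only [gapSet, Set.mem_setOf_eq]
        rw [te_usesE_other ht hc hR hE hm, te_usesR_other ht hc hR hE hm]
    have hmg' : mg (toEdge k H) = k := by
      show ((sInf (gapSet (toEdge k H)) : ℕ) : ZMod t) = k
      rw [hgap]
      exact hmg.symm
    refine ⟨hflip ▸ hcyc, hflip ▸ hnt', ?_, ?_⟩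
    · rw [hflip, flip, hmg', if_pos (te_usesE ht hc hR hE)]
      exact te_inv ht hc hR hE
    · right
      constructor
      · rw [hflip, te_ncard ht hc hR hE]
        have h1 : 0 < H.verts.ncard := (Set.ncard_pos (Set.toFinite _)).mpr ⟨rr k, hR⟩
        omega
      · exact (Set.ncard_pos (Set.toFinite _)).mpr ⟨rr k, hR⟩

end flipspec

section countsets
variable (ht : 5 ≤ t)
include ht

lemma ncard_nontri_eq : {H : (Gt t).Subgraph | H.IsCycleSub ∧ Odd H.verts.ncard ∧
      ∀ k, H ≠ Tr k}.ncard =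
    {H : (Gt t).Subgraph | H.IsCycleSub ∧ Even H.verts.ncard ∧ ∀ k, H ≠ Tr k}.ncard := by
  set A := {H : (Gt t).Subgraph | H.IsCycleSub ∧ Odd H.verts.ncard ∧ ∀ k, H ≠ Tr k} with hA
  set B := {H : (Gt t).Subgraph | H.IsCycleSub ∧ Even H.verts.ncard ∧ ∀ k, H ≠ Tr k} with hB
  have hparity : ∀ {H : (Gt t).Subgraph}, H.IsCycleSub → (∀ k, H ≠ Tr k) →
      (Odd H.verts.ncard ↔ Even (flip H).verts.ncard) := by
    intro H hc hnt
    obtain ⟨-, -, -, hn | ⟨hn, hge⟩⟩ := flip_spec ht hc hnt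
    · rw [hn, Nat.even_add_one, Nat.odd_iff, Nat.even_iff]
      omega
    · rw [Nat.odd_iff, Nat.even_iff]
      omega
  have hmapsAB : ∀ H ∈ A, flip H ∈ B := by
    rintro H ⟨hc, ho, hnt⟩
    obtain ⟨hc', hnt', -, -⟩ := flip_spec ht hc hnt
    exact ⟨hc', (hparity hc hnt).mp ho, hnt'⟩
  have hmapsBA : ∀ H ∈ B, flip H ∈ A := by
    rintro H ⟨hc, he, hnt⟩
    obtain ⟨hc', hnt', hff, hn | ⟨hn, hge⟩⟩ := flip_spec ht hc hnt
    · refine ⟨hc', ?_, hnt'⟩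
      rw [hn, Nat.odd_add_one]
      exact Nat.not_odd_iff_even.mpr he
    · refine ⟨hc', ?_, hnt'⟩
      rw [Nat.odd_iff]
      rw [Nat.even_iff] at he
      omega
  have hinv : ∀ H ∈ A, flip (flip H) = H := by
    rintro H ⟨hc, -, hnt⟩
    exact (flip_spec ht hc hnt).2.2.1
  have hinvB : ∀ H ∈ B, flip (flip H) = H := by
    rintro H ⟨hc, -, hnt⟩
    exact (flip_spec ht hc hnt).2.2.1
  have hbij : Set.BijOn flip A B := by
    refine ⟨hmapsAB, ?_, ?_⟩
    · intro x hx y hy hxy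
      rw [← hinv x hx, ← hinv y hy, hxy]
    · intro y hy
      exact ⟨flip y, hmapsBA y hy, hinvB y hy⟩
  rw [← hbij.image_eq, Set.ncard_image_of_injOn hbij.injOn]

lemma count_identity : cOdd (Gt t) = cEven (Gt t) + t := by
  classical
  have hOdd : {H : (Gt t).Subgraph | H.IsCycleSub ∧ Odd H.verts.ncard} =
      Set.range Tr ∪ {H : (Gt t).Subgraph | H.IsCycleSub ∧ Odd H.verts.ncard ∧
        ∀ k, H ≠ Tr k} := by
    ext H
    simp only [Set.mem_union, Set.mem_setOf_eq, Set.mem_range]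
    constructor
    · rintro ⟨hc, ho⟩
      by_cases h : ∃ k, Tr k = H
      · exact Or.inl h
      · push_neg at h
        exact Or.inr ⟨hc, ho, fun k hk => h k hk.symm⟩
    · rintro (⟨k, rfl⟩ | ⟨hc, ho, -⟩)
      · exact ⟨Tr_isCycle ht k, by rw [Tr_verts_ncard ht k]; exact ⟨1, rfl⟩⟩
      · exact ⟨hc, ho⟩
  have hEven : {H : (Gt t).Subgraph | H.IsCycleSub ∧ Even H.verts.ncard} =
      {H : (Gt t).Subgraph | H.IsCycleSub ∧ Even H.verts.ncard ∧ ∀ k, H ≠ Tr k} := by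
    ext H
    simp only [Set.mem_setOf_eq]
    constructor
    · rintro ⟨hc, he⟩
      refine ⟨hc, he, fun k hk => ?_⟩
      rw [hk, Tr_verts_ncard ht k, Nat.even_iff] at he
      omega
    · rintro ⟨hc, he, -⟩
      exact ⟨hc, he⟩
  have hdisj : Disjoint (Set.range Tr)
      {H : (Gt t).Subgraph | H.IsCycleSub ∧ Odd H.verts.ncard ∧ ∀ k, H ≠ Tr k} := by
    rw [Set.disjoint_left]
    rintro H ⟨k, rfl⟩ ⟨-, -, hnt⟩
    exact hnt k rfl
  have hrange : (Set.range (Tr : ZMod t → (Gt t).Subgraph)).ncard = t := by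
    rw [← Set.image_univ, Set.ncard_image_of_injective _ (fun a b h => Tr_inj h),
      Set.ncard_univ, Nat.card_eq_fintype_card, ZMod.card]
  rw [cOdd, cEven, hOdd, hEven, Set.ncard_union_eq hdisj (Set.toFinite _) (Set.toFinite _),
    hrange, ncard_nontri_eq ht]
  omega

end countsets
end counting

section globals

def C0 : (Gt t).Subgraph where
  verts := Set.range (vv : ZMod t → Vt t)
  Adj x y := (Gt t).Adj x y ∧ ∃ i, pR (vv i) (vv (i + 1)) x y
  adj_sub h := h.1
  edge_vert := by
    rintro x y ⟨-, i, ⟨rfl, -⟩ | ⟨rfl, -⟩⟩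
    · exact ⟨i, rfl⟩
    · exact ⟨i + 1, rfl⟩
  symm := by
    constructor
    rintro x y ⟨h, i, hp⟩
    exact ⟨h.symm, i, pR_symm hp⟩

section c0
variable (ht : 5 ≤ t)
include ht

lemma C0_nbhd (a : ZMod t) : C0.neighborSet (vv a) = {vv (a + 1), vv (a - 1)} := by
  ext z
  simp only [Subgraph.mem_neighborSet, Set.mem_insert_iff, Set.mem_singleton_iff]
  constructor
  · rintro ⟨-, i, ⟨h1, rfl⟩ | ⟨h1, rfl⟩⟩
    · rw [vv_eq_vv] at h1
      subst h1
      exact Or.inl rfl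
    · rw [vv_eq_vv] at h1
      right
      rw [vv_eq_vv, h1]
      ring
  · rintro (rfl | rfl)
    · exact ⟨gadj_vv_vv1 ht a, a, Or.inl ⟨rfl, rfl⟩⟩
    · refine ⟨?_, a - 1, Or.inr ⟨show vv a = vv (a - 1 + 1) by rw [sub_add_cancel], rfl⟩⟩
      apply (adj_vv_vv ht).mpr
      right
      rw [sub_add_cancel]

lemma C0_isCycle : (C0 : (Gt t).Subgraph).IsCycleSub := by
  refine ⟨⟨vv 0, 0, rfl⟩, ?_, ?_⟩
  · refine connected_of_hub (c := vv 0) ⟨0, rfl⟩ ?_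
    rintro x ⟨a, rfl⟩
    have key : ∀ m : ℕ, Relation.ReflTransGen C0.Adj (vv 0) (vv (m : ZMod t)) := by
      intro m
      induction m with
      | zero =>
        rw [Nat.cast_zero]
      | succ n ih =>
        rw [Nat.cast_add, Nat.cast_one]
        exact ih.tail ⟨gadj_vv_vv1 ht _, (n : ZMod t), Or.inl ⟨rfl, rfl⟩⟩
    have := key a.val
    rwa [ZMod.natCast_rightInverse a] at this
  · rintro v ⟨a, rfl⟩
    rw [C0_nbhd ht a]
    apply Set.ncard_pair
    rw [Ne, vv_eq_vv]
    intro h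
    have : a - 1 + 1 + 1 = a - 1 := by rw [sub_add_cancel, ← h]
    exact add_two_ne ht (a - 1) this

lemma C0_usesE (j : ZMod t) : usesE (C0 : (Gt t).Subgraph) j :=
  ⟨gadj_vv_vv1 ht j, j, Or.inl ⟨rfl, rfl⟩⟩

lemma exists_global (S : Finset (ZMod t)) :
    ∃ H : (Gt t).Subgraph, H.IsCycleSub ∧
      H.verts = Set.range (vv : ZMod t → Vt t) ∪ rr '' ↑S ∧
      (∀ j ∉ S, usesE H j) := by
  classical
  induction S using Finset.induction_on with
  | empty =>
    exact ⟨C0, C0_isCycle ht, by simp [C0], fun j _ => C0_usesE ht j⟩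
  | @insert a S ha ih =>
    obtain ⟨H, hc, hv, hE⟩ := ih
    have hEa : usesE H a := hE a ha
    have hRa : ¬ usesR H a := by
      intro h
      have h' : rr a ∈ H.verts := h
      rw [hv] at h'
      rcases h' with ⟨i, hi⟩ | ⟨i, hiS, hi⟩
      · exact vv_ne_rr i a hi
      · exact ha (by rwa [← rr_inj hi])
    refine ⟨toDetour a H, td_isCycle ht hc hEa hRa, ?_, ?_⟩
    · rw [td_verts ht hc hEa hRa, hv, Finset.coe_insert, Set.image_insert_eq,
        Set.union_insert]
    · intro j hj
      rw [Finset.mem_insert] at hj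
      push_neg at hj
      rw [td_usesE_other ht hc hEa hRa hj.1]
      exact hE j hj.2

lemma choose_le_cEven {c : ℕ} (hpar : Even (t + c)) :
    Nat.choose t c ≤ cEven (Gt t) := by
  classical
  choose g hg1 hg2 hg3 using fun S => exists_global ht S
  set 𝒮 := (Finset.powersetCard c (Finset.univ : Finset (ZMod t))) with h𝒮
  have hncard : ∀ S : Finset (ZMod t), (g S).verts.ncard = t + S.card := by
    intro S
    rw [hg2 S, Set.ncard_union_eq ?disj (Set.toFinite _) (Set.toFinite _)]
    · congr 1
      · rw [← Set.image_univ, Set.ncard_image_of_injective _ vv_inj, Set.ncard_univ,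
          Nat.card_eq_fintype_card, ZMod.card]
      · rw [Set.ncard_image_of_injective _ rr_inj, Set.ncard_coe_finset]
    case disj =>
      rw [Set.disjoint_left]
      rintro x ⟨i, rfl⟩ ⟨j, -, hj⟩
      exact vv_ne_rr i j hj.symm
  have hsub : g '' ↑𝒮 ⊆ {H : (Gt t).Subgraph | H.IsCycleSub ∧ Even H.verts.ncard} := by
    rintro _ ⟨S, hS, rfl⟩
    refine ⟨hg1 S, ?_⟩
    rw [hncard S, (Finset.mem_powersetCard.mp hS).2]
    exact hpar
  have hinj : Set.InjOn g ↑𝒮 := by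
    have key : ∀ T : Finset (ZMod t), ∀ i, i ∈ T ↔ rr i ∈ (g T).verts := by
      intro T i
      rw [hg2 T]
      constructor
      · intro h
        exact Or.inr ⟨i, h, rfl⟩
      · rintro (⟨j, hj⟩ | ⟨j, hjT, hj⟩)
        · exact absurd hj (vv_ne_rr j i)
        · rwa [← rr_inj hj]
    intro S hS S' hS' h
    ext i
    rw [key S i, key S' i, h]
  calc Nat.choose t c = 𝒮.card := by
        rw [h𝒮, Finset.card_powersetCard, Finset.card_univ, ZMod.card]
    _ = (↑𝒮 : Set (Finset (ZMod t))).ncard := (Set.ncard_coe_finset _).symm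
    _ = (g '' ↑𝒮).ncard := (Set.ncard_image_of_injOn hinj).symm
    _ ≤ cEven (Gt t) := Set.ncard_le_ncard hsub (Set.toFinite _)

lemma cEven_lb : t * (t - 1) ≤ 2 * cEven (Gt t) := by
  have heq : t * (t - 1) = 2 * Nat.choose t 2 := by
    have he : Even ((t - 1) * t) := by
      have := Nat.even_mul_succ_self (t - 1)
      rwa [show t - 1 + 1 = t by omega] at this
    rw [Nat.choose_two_right]
    obtain ⟨m, hm⟩ := he
    have : (t - 1) * t = 2 * m := by omega
    rw [mul_comm] at this
    rw [this]
    omega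
  rcases Nat.even_or_odd t with he | ho
  · have h2 : Even (t + 2) := by
      obtain ⟨m, hm⟩ := he
      exact ⟨m + 1, by omega⟩
    have := choose_le_cEven ht h2
    omega
  · have h3 : Even (t + 3) := by
      obtain ⟨m, hm⟩ := ho
      exact ⟨m + 2, by omega⟩
    have hle := choose_le_cEven ht h3
    have hch : Nat.choose t 3 * 3 = Nat.choose t 2 * (t - 2) := by
      have := Nat.choose_succ_right_eq t 2
      simpa using this
    have hmul : Nat.choose t 2 * 3 ≤ Nat.choose t 2 * (t - 2) :=
      Nat.mul_le_mul_left _ (by omega)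
    omega

end c0
end globals

end SP

theorem tendsto_ratio_SGraph :
    Tendsto (fun n : ℕ =>
        (cOdd (SGraph (n + 3) Finset.univ) : ℝ) / (cEven (SGraph (n + 3) Finset.univ) : ℝ))
      atTop (nhds 1) ∧
    Tendsto (fun n : ℕ =>
        (cEven (SGraph (n + 3) Finset.univ) : ℝ) / (cOdd (SGraph (n + 3) Finset.univ) : ℝ))
      atTop (nhds 1) := by
  have key : ∀ n : ℕ, 2 ≤ n →
      cOdd (SGraph (n + 3) Finset.univ) = cEven (SGraph (n + 3) Finset.univ) + (n + 3) ∧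
      (n + 3) * (n + 2) ≤ 2 * cEven (SGraph (n + 3) Finset.univ) := by
    intro n hn
    haveI : NeZero (n + 3) := ⟨by omega⟩
    have ht : 5 ≤ n + 3 := by omega
    refine ⟨SP.count_identity ht, ?_⟩
    have h := SP.cEven_lb ht
    have h2 : (n + 3) - 1 = n + 2 := by omega
    rwa [h2] at h
  set f : ℕ → ℝ := fun n =>
    (cOdd (SGraph (n + 3) Finset.univ) : ℝ) / (cEven (SGraph (n + 3) Finset.univ) : ℝ) with hf
  have hlow : ∀ᶠ n in atTop, (1 : ℝ) ≤ f n := by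
    filter_upwards [eventually_ge_atTop 2] with n hn
    obtain ⟨h1, h2⟩ := key n hn
    have hce : (0 : ℝ) < (cEven (SGraph (n + 3) Finset.univ) : ℝ) := by
      have : 1 ≤ cEven (SGraph (n + 3) Finset.univ) := by nlinarith [h2]
      exact_mod_cast Nat.lt_of_lt_of_le Nat.zero_lt_one this
    show (1 : ℝ) ≤ (cOdd (SGraph (n + 3) Finset.univ) : ℝ) /
      (cEven (SGraph (n + 3) Finset.univ) : ℝ)
    rw [le_div_iff₀ hce, one_mul]
    push_cast [h1]
    linarith
  have hup : ∀ᶠ n in atTop, f n ≤ 1 + 2 / ((n : ℝ) + 2) := by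
    filter_upwards [eventually_ge_atTop 2] with n hn
    obtain ⟨h1, h2⟩ := key n hn
    have hce1 : 1 ≤ cEven (SGraph (n + 3) Finset.univ) := by nlinarith [h2]
    have hce : (0 : ℝ) < (cEven (SGraph (n + 3) Finset.univ) : ℝ) := by
      exact_mod_cast Nat.lt_of_lt_of_le Nat.zero_lt_one hce1
    have hn2 : (0 : ℝ) < (n : ℝ) + 2 := by positivity
    show (cOdd (SGraph (n + 3) Finset.univ) : ℝ) /
      (cEven (SGraph (n + 3) Finset.univ) : ℝ) ≤ 1 + 2 / ((n : ℝ) + 2)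
    rw [div_le_iff₀ hce]
    have h2' : ((n : ℝ) + 3) * ((n : ℝ) + 2) ≤ 2 * (cEven (SGraph (n + 3) Finset.univ) : ℝ) := by
      exact_mod_cast h2
    have h1' : (cOdd (SGraph (n + 3) Finset.univ) : ℝ) =
        (cEven (SGraph (n + 3) Finset.univ) : ℝ) + ((n : ℝ) + 3) := by
      exact_mod_cast h1
    rw [h1']
    rw [add_mul, one_mul]
    have : 2 / ((n : ℝ) + 2) * (cEven (SGraph (n + 3) Finset.univ) : ℝ) ≥ (n : ℝ) + 3 := by
      rw [ge_iff_le, div_mul_eq_mul_div, le_div_iff₀ hn2]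
      linarith
    linarith
  have hg : Tendsto (fun n : ℕ => 1 + 2 / ((n : ℝ) + 2)) atTop (nhds 1) := by
    have h0 : Tendsto (fun n : ℕ => 2 / ((n : ℝ) + 2)) atTop (nhds 0) := by
      have h := (tendsto_const_div_atTop_nhds_zero_nat (2 : ℝ)).comp (tendsto_add_atTop_nat 2)
      have heq : (fun n : ℕ => 2 / ((n : ℝ) + 2)) =
          (fun n : ℕ => 2 / (n : ℝ)) ∘ (fun a => a + 2) := by
        funext n
        simp only [Function.comp_apply]
        push_cast
        ring
      rw [heq]
      exact h
    have := tendsto_const_nhds (x := (1 : ℝ)) (f := atTop (α := ℕ)) |>.add h0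
    simpa using this
  have part1 : Tendsto f atTop (nhds 1) :=
    tendsto_of_tendsto_of_tendsto_of_le_of_le' tendsto_const_nhds hg hlow hup
  refine ⟨part1, ?_⟩
  have := (part1.inv₀ one_ne_zero)
  rw [inv_one] at this
  convert this using 2 with n
  rw [hf, inv_div]
end
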